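/- arXiv:1912.02265 — 10 statements merged into one kernel-verified Lean document; each statement's English description precedes it below -/
import Mathlib

section
/- Let G be a block graph (a graph whose every connected component is a 1-clique sum of complete graphs). Then for any two vertices i and j in the same connected component of G, there exists a unique shortest path in G connecting them. -/
/-- The induced subgraph of `G` on the vertex set `S` is a 1-clique sum of complete
graphs: either it is complete, or `S` splits as `A ∪ B ∪ {c}` where `{c}` separates
`A` from `B` inside `S` and the pieces `A ∪ {c}` and `B ∪ {c}` are again
1-clique sums of complete graphs. -/
inductive SimpleGraph.IsCliqueSumOfCompletes {V : Type*} (G : SimpleGraph V) : Set V → Prop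
  | complete (S : Set V) (h : ∀ ⦃i⦄, i ∈ S → ∀ ⦃j⦄, j ∈ S → i ≠ j → G.Adj i j) :
      IsCliqueSumOfCompletes G S
  | sum (A B : Set V) (c : V) (hAB : Disjoint A B) (hcA : c ∉ A) (hcB : c ∉ B)
      (hA : A.Nonempty) (hB : B.Nonempty)
      (hsep : ∀ a ∈ A, ∀ b ∈ B, ∀ w : G.Walk a b,
        (∀ x ∈ w.support, x ∈ A ∪ B ∪ {c}) → c ∈ w.support)
      (h1 : IsCliqueSumOfCompletes G (A ∪ {c}))
      (h2 : IsCliqueSumOfCompletes G (B ∪ {c})) :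
      IsCliqueSumOfCompletes G (A ∪ B ∪ {c})

open SimpleGraph Walk

namespace BlockGraphAux

variable {V : Type*} [DecidableEq V] {G : SimpleGraph V}

/-- A path between two vertices of `A ∪ {c}` whose support lies in `A ∪ B ∪ {c}`
stays inside `A ∪ {c}`. -/
lemma confine {A B : Set V} {c : V} (hcB : c ∉ B)
    (hsep : ∀ a ∈ A, ∀ b ∈ B, ∀ w : G.Walk a b,
        (∀ x ∈ w.support, x ∈ A ∪ B ∪ {c}) → c ∈ w.support)
    {i j : V} (hi : i ∈ A ∪ {c}) (hj : j ∈ A ∪ {c}) {p : G.Walk i j} (hp : p.IsPath)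
    (hsupp : ∀ x ∈ p.support, x ∈ A ∪ B ∪ {c}) : ∀ x ∈ p.support, x ∈ A ∪ {c} := by
  intro x hx
  rcases hsupp x hx with (hxA | hxB) | hxc
  · exact Or.inl hxA
  · exfalso
    have hc1 : c ∈ (p.takeUntil x hx).support := by
      rcases hi with hiA | hic
      · exact hsep i hiA x hxB _ (fun y hy => hsupp y (support_takeUntil_subset p hx hy))
      · have : i = c := hic
        subst this
        exact start_mem_support _
    have hc2 : c ∈ (p.dropUntil x hx).support := by
      rcases hj with hjA | hjc
      · have := hsep j hjA x hxB (p.dropUntil x hx).reverse (fun y hy => by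
          rw [support_reverse, List.mem_reverse] at hy
          exact hsupp y (support_dropUntil_subset p hx hy))
        rwa [support_reverse, List.mem_reverse] at this
      · have : j = c := hjc
        subst this
        exact end_mem_support _
    have hcx : c ≠ x := fun h => hcB (h ▸ hxB)
    have hc2' : c ∈ (p.dropUntil x hx).support.tail := by
      rw [support_eq_cons] at hc2
      rcases List.mem_cons.mp hc2 with h | h
      · exact absurd h hcx
      · exact h
    have hnd := hp.support_nodup
    rw [← take_spec p hx, support_append] at hnd
    exact (List.disjoint_of_nodup_append hnd) hc1 hc2'
  · exact Or.inr hxc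

/-- Uniqueness of minimal-length paths among walks confined to `S`. -/
def UniqueMin (G : SimpleGraph V) (S : Set V) : Prop :=
  ∀ {i j : V} (p q : G.Walk i j), p.IsPath → q.IsPath →
    (∀ x ∈ p.support, x ∈ S) → (∀ x ∈ q.support, x ∈ S) →
    (∀ w : G.Walk i j, (∀ x ∈ w.support, x ∈ S) → p.length ≤ w.length) →
    (∀ w : G.Walk i j, (∀ x ∈ w.support, x ∈ S) → q.length ≤ w.length) →
    p = q

lemma mixed {A B : Set V} {c : V} (hcA : c ∉ A) (hcB : c ∉ B)
    (hsep : ∀ a ∈ A, ∀ b ∈ B, ∀ w : G.Walk a b,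
        (∀ x ∈ w.support, x ∈ A ∪ B ∪ {c}) → c ∈ w.support)
    (ih1 : UniqueMin G (A ∪ {c})) (ih2 : UniqueMin G (B ∪ {c}))
    {i j : V} (hi : i ∈ A) (hj : j ∈ B) (p q : G.Walk i j) (hp : p.IsPath) (hq : q.IsPath)
    (hps : ∀ x ∈ p.support, x ∈ A ∪ B ∪ {c}) (hqs : ∀ x ∈ q.support, x ∈ A ∪ B ∪ {c})
    (hpm : ∀ w : G.Walk i j, (∀ x ∈ w.support, x ∈ A ∪ B ∪ {c}) → p.length ≤ w.length)
    (hqm : ∀ w : G.Walk i j, (∀ x ∈ w.support, x ∈ A ∪ B ∪ {c}) → q.length ≤ w.length) :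
    p = q := by
  have hsep' : ∀ b ∈ B, ∀ a ∈ A, ∀ w : G.Walk b a,
      (∀ x ∈ w.support, x ∈ B ∪ A ∪ {c}) → c ∈ w.support := by
    intro b hb a ha w hw
    have := hsep a ha b hb w.reverse (fun x hx => by
      rw [support_reverse, List.mem_reverse] at hx
      have := hw x hx
      rwa [Set.union_comm B A] at this)
    rwa [support_reverse, List.mem_reverse] at this
  have hcp : c ∈ p.support := hsep i hi j hj p hps
  have hcq : c ∈ q.support := hsep i hi j hj q hqs
  have hplen : p.length = (p.takeUntil c hcp).length + (p.dropUntil c hcp).length := by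
    conv_lhs => rw [← take_spec p hcp]
    rw [length_append]
  have hqlen : q.length = (q.takeUntil c hcq).length + (q.dropUntil c hcq).length := by
    conv_lhs => rw [← take_spec q hcq]
    rw [length_append]
  -- confinement of the four pieces
  have hp1A : ∀ x ∈ (p.takeUntil c hcp).support, x ∈ A ∪ {c} :=
    confine hcB hsep (Or.inl hi) (Or.inr rfl) (hp.takeUntil hcp)
      (fun x hx => hps x (support_takeUntil_subset p hcp hx))
  have hq1A : ∀ x ∈ (q.takeUntil c hcq).support, x ∈ A ∪ {c} :=
    confine hcB hsep (Or.inl hi) (Or.inr rfl) (hq.takeUntil hcq)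
      (fun x hx => hqs x (support_takeUntil_subset q hcq hx))
  have hp2B : ∀ x ∈ (p.dropUntil c hcp).support, x ∈ B ∪ {c} :=
    confine hcA hsep' (Or.inr rfl) (Or.inl hj) (hp.dropUntil hcp)
      (fun x hx => by
        have := hps x (support_dropUntil_subset p hcp hx)
        rwa [Set.union_comm A B] at this)
  have hq2B : ∀ x ∈ (q.dropUntil c hcq).support, x ∈ B ∪ {c} :=
    confine hcA hsep' (Or.inr rfl) (Or.inl hj) (hq.dropUntil hcq)
      (fun x hx => by
        have := hqs x (support_dropUntil_subset q hcq hx)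
        rwa [Set.union_comm A B] at this)
  -- minimality of the four pieces
  have hp1m : ∀ w : G.Walk i c, (∀ x ∈ w.support, x ∈ A ∪ {c}) →
      (p.takeUntil c hcp).length ≤ w.length := by
    intro w hw
    have := hpm (w.append (p.dropUntil c hcp)) (fun x hx => by
      rcases (mem_support_append_iff _ _).mp hx with h | h
      · exact (hw x h).elim (fun h' => Or.inl (Or.inl h')) Or.inr
      · exact hps x (support_dropUntil_subset p hcp h))
    rw [length_append] at this
    omega
  have hq1m : ∀ w : G.Walk i c, (∀ x ∈ w.support, x ∈ A ∪ {c}) →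
      (q.takeUntil c hcq).length ≤ w.length := by
    intro w hw
    have := hqm (w.append (q.dropUntil c hcq)) (fun x hx => by
      rcases (mem_support_append_iff _ _).mp hx with h | h
      · exact (hw x h).elim (fun h' => Or.inl (Or.inl h')) Or.inr
      · exact hqs x (support_dropUntil_subset q hcq h))
    rw [length_append] at this
    omega
  have hp2m : ∀ w : G.Walk c j, (∀ x ∈ w.support, x ∈ B ∪ {c}) →
      (p.dropUntil c hcp).length ≤ w.length := by
    intro w hw
    have := hpm ((p.takeUntil c hcp).append w) (fun x hx => by
      rcases (mem_support_append_iff _ _).mp hx with h | h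
      · exact hps x (support_takeUntil_subset p hcp h)
      · exact (hw x h).elim (fun h' => Or.inl (Or.inr h')) Or.inr)
    rw [length_append] at this
    omega
  have hq2m : ∀ w : G.Walk c j, (∀ x ∈ w.support, x ∈ B ∪ {c}) →
      (q.dropUntil c hcq).length ≤ w.length := by
    intro w hw
    have := hqm ((q.takeUntil c hcq).append w) (fun x hx => by
      rcases (mem_support_append_iff _ _).mp hx with h | h
      · exact hqs x (support_takeUntil_subset q hcq h)
      · exact (hw x h).elim (fun h' => Or.inl (Or.inr h')) Or.inr)
    rw [length_append] at this
    omega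
  have h1 : p.takeUntil c hcp = q.takeUntil c hcq :=
    ih1 _ _ (hp.takeUntil hcp) (hq.takeUntil hcq) hp1A hq1A hp1m hq1m
  have h2 : p.dropUntil c hcp = q.dropUntil c hcq :=
    ih2 _ _ (hp.dropUntil hcp) (hq.dropUntil hcq) hp2B hq2B hp2m hq2m
  rw [← take_spec p hcp, ← take_spec q hcq, h1, h2]

lemma key {S : Set V} (h : G.IsCliqueSumOfCompletes S) : UniqueMin G S := by
  induction h with
  | complete S hcom =>
    intro i j p q hp hq hps hqs hpm hqm
    by_cases hij : i = j
    · subst hij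
      have hp0 : p.length = 0 := by
        have := hpm Walk.nil (by
          intro x hx
          simp only [support_nil, List.mem_singleton] at hx
          exact Set.mem_of_eq_of_mem hx (hps i p.start_mem_support))
        simpa using this
      have hq0 : q.length = 0 := by
        have := hqm Walk.nil (by
          intro x hx
          simp only [support_nil, List.mem_singleton] at hx
          exact Set.mem_of_eq_of_mem hx (hqs i q.start_mem_support))
        simpa using this
      rw [length_eq_zero_iff, nil_iff_eq_nil] at hp0 hq0
      rw [hp0, hq0]
    · have hadj : G.Adj i j := hcom (hps i p.start_mem_support) (hps j p.end_mem_support) hij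
      have hw0 : ∀ x ∈ (Walk.cons hadj Walk.nil : G.Walk i j).support, x ∈ S := by
        intro x hx
        simp only [support_cons, support_nil, List.mem_cons, List.mem_singleton] at hx
        rcases hx with h | h | h
        · exact h ▸ hps i p.start_mem_support
        · exact h ▸ hps j p.end_mem_support
        · simp at h
      have hlen1 : ∀ r : G.Walk i j, r.length = 1 → r = Walk.cons hadj Walk.nil := by
        intro r hr
        cases r with
        | nil => simp at hr
        | cons h' r' =>
          simp only [length_cons, Nat.add_eq_right] at hr
          have hr0 : r'.length = 0 := by omega
          have hxj := eq_of_length_eq_zero hr0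
          subst hxj
          have : r' = Walk.nil := nil_iff_eq_nil.mp (length_eq_zero_iff.mp hr0)
          subst this
          rfl
      have hp1 : p.length = 1 := by
        have h1 := hpm _ hw0
        simp only [length_cons, length_nil] at h1
        have h0 : p.length ≠ 0 := fun h => hij (eq_of_length_eq_zero h)
        omega
      have hq1 : q.length = 1 := by
        have h1 := hqm _ hw0
        simp only [length_cons, length_nil] at h1
        have h0 : q.length ≠ 0 := fun h => hij (eq_of_length_eq_zero h)
        omega
      rw [hlen1 p hp1, hlen1 q hq1]
  | sum A B c hAB hcA hcB hA hB hsep h1 h2 ih1 ih2 =>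
    intro i j p q hp hq hps hqs hpm hqm
    have hsub1 : (A ∪ {c} : Set V) ⊆ A ∪ B ∪ {c} := fun x hx =>
      hx.elim (fun h' => Or.inl (Or.inl h')) Or.inr
    have hsub2 : (B ∪ {c} : Set V) ⊆ A ∪ B ∪ {c} := fun x hx =>
      hx.elim (fun h' => Or.inl (Or.inr h')) Or.inr
    have hsep' : ∀ b ∈ B, ∀ a ∈ A, ∀ w : G.Walk b a,
        (∀ x ∈ w.support, x ∈ B ∪ A ∪ {c}) → c ∈ w.support := by
      intro b hb a ha w hw
      have := hsep a ha b hb w.reverse (fun x hx => by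
        rw [support_reverse, List.mem_reverse] at hx
        have := hw x hx
        rwa [Set.union_comm B A] at this)
      rwa [support_reverse, List.mem_reverse] at this
    -- two generic sub-cases
    have caseA : i ∈ A ∪ {c} → j ∈ A ∪ {c} → p = q := by
      intro hi' hj'
      exact ih1 p q hp hq (confine hcB hsep hi' hj' hp hps)
        (confine hcB hsep hi' hj' hq hqs)
        (fun w hw => hpm w (fun x hx => hsub1 (hw x hx)))
        (fun w hw => hqm w (fun x hx => hsub1 (hw x hx)))
    have caseB : i ∈ B ∪ {c} → j ∈ B ∪ {c} → p = q := by
      intro hi' hj'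
      have hps' : ∀ x ∈ p.support, x ∈ B ∪ A ∪ {c} := fun x hx => by
        rw [Set.union_comm B A]; exact hps x hx
      have hqs' : ∀ x ∈ q.support, x ∈ B ∪ A ∪ {c} := fun x hx => by
        rw [Set.union_comm B A]; exact hqs x hx
      exact ih2 p q hp hq (confine hcA hsep' hi' hj' hp hps')
        (confine hcA hsep' hi' hj' hq hqs')
        (fun w hw => hpm w (fun x hx => hsub2 (hw x hx)))
        (fun w hw => hqm w (fun x hx => hsub2 (hw x hx)))
    rcases hps i p.start_mem_support with (hiA | hiB) | hic
    · rcases hps j p.end_mem_support with (hjA | hjB) | hjc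
      · exact caseA (Or.inl hiA) (Or.inl hjA)
      · exact mixed hcA hcB hsep ih1 ih2 hiA hjB p q hp hq hps hqs hpm hqm
      · exact caseA (Or.inl hiA) (Or.inr hjc)
    · rcases hps j p.end_mem_support with (hjA | hjB) | hjc
      · -- i ∈ B, j ∈ A : reverse
        have hrev := mixed hcA hcB hsep ih1 ih2 hjA hiB p.reverse q.reverse
          hp.reverse hq.reverse
          (fun x hx => hps x (by rwa [support_reverse, List.mem_reverse] at hx))
          (fun x hx => hqs x (by rwa [support_reverse, List.mem_reverse] at hx))
          (fun w hw => by
            rw [length_reverse]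
            have := hpm w.reverse (fun x hx => hw x
              (by rwa [support_reverse, List.mem_reverse] at hx))
            rwa [length_reverse] at this)
          (fun w hw => by
            rw [length_reverse]
            have := hqm w.reverse (fun x hx => hw x
              (by rwa [support_reverse, List.mem_reverse] at hx))
            rwa [length_reverse] at this)
        have := congrArg Walk.reverse hrev
        rwa [reverse_reverse, reverse_reverse] at this
      · exact caseB (Or.inl hiB) (Or.inl hjB)
      · exact caseB (Or.inl hiB) (Or.inr hjc)
    · rcases hps j p.end_mem_support with (hjA | hjB) | hjc
      · exact caseA (Or.inr hic) (Or.inl hjA)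
      · exact caseB (Or.inr hic) (Or.inl hjB)
      · exact caseA (Or.inr hic) (Or.inr hjc)

end BlockGraphAux


/-- A block graph: every connected component is a 1-clique sum of complete graphs. -/
def SimpleGraph.IsBlockGraph {V : Type*} (G : SimpleGraph V) : Prop :=
  ∀ v : V, G.IsCliqueSumOfCompletes {w | G.Reachable v w}

/-- In a block graph, any two vertices in the same connected component are joined by a
unique shortest path. -/
theorem unique_shortest_path_of_blockGraph {V : Type*} [Fintype V] (G : SimpleGraph V)
    (hG : G.IsBlockGraph) (i j : V) (hij : G.Reachable i j) :
    ∃! p : G.Walk i j, p.IsPath ∧ p.length = G.dist i j := by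
  classical
  obtain ⟨p, hp, hl⟩ := hij.exists_path_of_dist
  refine ⟨p, ⟨hp, hl⟩, ?_⟩
  rintro q ⟨hq, hlq⟩
  apply BlockGraphAux.key (hG i) q p hq hp
  · exact fun x hx => (q.takeUntil x hx).reachable
  · exact fun x hx => (p.takeUntil x hx).reachable
  · intro w _
    rw [hlq]
    exact G.dist_le w
  · intro w _
    rw [hl]
    exact G.dist_le w
end

section
/- Let G be a block graph and suppose vertex z lies on the unique shortest path between vertices x and y with z≠x,y. Then every path in G from x to y passes through z. -/
set_option linter.unusedSectionVars false

namespace BlockProofAux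

open SimpleGraph Walk

variable {V : Type*} [DecidableEq V] {G : SimpleGraph V}

lemma mem_support_len_zero {x y z : V} (p : G.Walk x y)
    (h : p.length = 0) (hz : z ∈ p.support) : z = x := by
  cases p with
  | nil => simpa using hz
  | cons h' q => simp at h

lemma shortest_split {x y m : V} (p1 : G.Walk x m) (p2 : G.Walk m y)
    (hlen : p1.length + p2.length = G.dist x y) :
    p1.length = G.dist x m ∧ p2.length = G.dist m y := by
  have h1 : G.dist x m ≤ p1.length := SimpleGraph.dist_le _
  have h2 : G.dist m y ≤ p2.length := SimpleGraph.dist_le _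
  have hr1 : G.Reachable x m := ⟨p1⟩
  have hr2 : G.Reachable m y := ⟨p2⟩
  obtain ⟨q1, hq1⟩ := hr1.exists_walk_length_eq_dist
  obtain ⟨q2, hq2⟩ := hr2.exists_walk_length_eq_dist
  have hd : G.dist x y ≤ (q1.append q2).length := SimpleGraph.dist_le _
  rw [Walk.length_append, hq1, hq2] at hd
  omega

lemma support_subset_left {A B : Set V} {c : V} (hcB : c ∉ B)
    (hsep : ∀ a ∈ A, ∀ b ∈ B, ∀ w : G.Walk a b,
      (∀ x ∈ w.support, x ∈ A ∪ B ∪ {c}) → c ∈ w.support)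
    {x y : V} (q : G.Walk x y) (hq : q.IsPath)
    (hqS : ∀ v ∈ q.support, v ∈ A ∪ B ∪ {c})
    (hx : x ∈ A ∪ {c}) (hy : y ∈ A ∪ {c}) :
    ∀ v ∈ q.support, v ∈ A ∪ {c} := by
  intro v hv
  by_contra hvA
  have hvB : v ∈ B := by
    have := hqS v hv
    simp only [Set.mem_union, Set.mem_singleton_iff] at this hvA ⊢
    tauto
  have hc1 : c ∈ (q.takeUntil v hv).support := by
    rcases hx with hx | hx
    · exact hsep x hx v hvB _ (fun u hu => hqS u (q.support_takeUntil_subset hv hu))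
    · have hx' : x = c := hx
      rw [← hx']
      exact Walk.start_mem_support _
  have hc2 : c ∈ (q.dropUntil v hv).support := by
    rcases hy with hy | hy
    · have := hsep y hy v hvB (q.dropUntil v hv).reverse (fun u hu => by
        rw [Walk.support_reverse, List.mem_reverse] at hu
        exact hqS u (q.support_dropUntil_subset hv hu))
      rwa [Walk.support_reverse, List.mem_reverse] at this
    · have hy' : y = c := hy
      rw [← hy']
      exact Walk.end_mem_support _
  have hcv : c ≠ v := fun h => hcB (h ▸ hvB)
  have hc2t : c ∈ (q.dropUntil v hv).support.tail := by
    rw [Walk.support_eq_cons, List.mem_cons] at hc2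
    rcases hc2 with hc2 | hc2
    · exact absurd hc2 hcv
    · exact hc2
  have hnd := hq.support_nodup
  rw [← q.take_spec hv, Walk.support_append, List.nodup_append] at hnd
  exact hnd.2.2 c hc1 c hc2t rfl

set_option maxHeartbeats 1000000 in
lemma main {S : Set V} (hS : G.IsCliqueSumOfCompletes S) :
    ∀ {x y z : V} (p : G.Walk x y), p.IsPath → p.length = G.dist x y →
      (∀ v ∈ p.support, v ∈ S) → z ∈ p.support → z ≠ x → z ≠ y →
      ∀ w : G.Walk x y, w.IsPath → (∀ v ∈ w.support, v ∈ S) → z ∈ w.support := by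
  induction hS with
  | complete S hcl =>
    intro x y z p hp hplen hpS hz hzx hzy w hw hwS
    exfalso
    by_cases hxy : x = y
    · subst hxy
      have h0 : p.length = 0 := by rw [hplen, SimpleGraph.dist_self]
      exact hzx (mem_support_len_zero p h0 hz)
    · have hadj : G.Adj x y :=
        hcl (hpS x p.start_mem_support) (hpS y p.end_mem_support) hxy
      have hd : G.dist x y ≤ 1 := by
        have := SimpleGraph.dist_le (Walk.cons hadj Walk.nil)
        simpa using this
      have hl : p.length ≤ 1 := by rw [hplen]; exact hd
      cases p with
      | nil => exact hxy rfl
      | cons h q =>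
        cases q with
        | nil =>
          simp only [Walk.support_cons, Walk.support_nil, List.mem_cons,
            List.mem_singleton, List.not_mem_nil, or_false] at hz
          rcases hz with hz | hz
          · exact hzx hz
          · exact hzy hz
        | cons h' q' => simp [Walk.length_cons] at hl
  | sum A B c hAB hcA hcB hA hB hsep h1 h2 ih1 ih2 =>
    intro x y z p hp hplen hpS hz hzx hzy w hw hwS
    have hsep' : ∀ a ∈ B, ∀ b ∈ A, ∀ w' : G.Walk a b,
        (∀ v ∈ w'.support, v ∈ B ∪ A ∪ {c}) → c ∈ w'.support := by
      intro a ha b hb w' hw'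
      have := hsep b hb a ha w'.reverse (fun v hv => by
        rw [Walk.support_reverse, List.mem_reverse] at hv
        have := hw' v hv
        simp only [Set.mem_union, Set.mem_singleton_iff] at this ⊢
        tauto)
      rwa [Walk.support_reverse, List.mem_reverse] at this
    by_cases hxy : x = y
    · subst hxy
      have h0 : p.length = 0 := by rw [hplen, SimpleGraph.dist_self]
      exact absurd (mem_support_len_zero p h0 hz) hzx
    have hpS' : ∀ v ∈ p.support, v ∈ B ∪ A ∪ {c} := by
      intro v hv; have := hpS v hv
      simp only [Set.mem_union, Set.mem_singleton_iff] at this ⊢; tauto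
    have hwS' : ∀ v ∈ w.support, v ∈ B ∪ A ∪ {c} := by
      intro v hv; have := hwS v hv
      simp only [Set.mem_union, Set.mem_singleton_iff] at this ⊢; tauto
    -- the both-endpoints-on-one-side cases
    have caseAA : x ∈ A ∪ {c} → y ∈ A ∪ {c} → z ∈ w.support := by
      intro hxA hyA
      have hpA := support_subset_left hcB hsep p hp hpS hxA hyA
      have hwA := support_subset_left hcB hsep w hw hwS hxA hyA
      exact ih1 p hp hplen hpA hz hzx hzy w hw hwA
    have caseBB : x ∈ B ∪ {c} → y ∈ B ∪ {c} → z ∈ w.support := by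
      intro hxB hyB
      have hpB := support_subset_left hcA hsep' p hp hpS' hxB hyB
      have hwB := support_subset_left hcA hsep' w hw hwS' hxB hyB
      exact ih2 p hp hplen hpB hz hzx hzy w hw hwB
    -- the crossing case
    have key : ∀ (x' y' z' : V) (p' : G.Walk x' y'), x' ∈ A → y' ∈ B →
        p'.IsPath → p'.length = G.dist x' y' → (∀ v ∈ p'.support, v ∈ A ∪ B ∪ {c}) →
        z' ∈ p'.support → z' ≠ x' → z' ≠ y' →
        ∀ w' : G.Walk x' y', w'.IsPath → (∀ v ∈ w'.support, v ∈ A ∪ B ∪ {c}) →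
        z' ∈ w'.support := by
      intro x' y' z' p' hxA hyB hp' hplen' hpS'' hz' hzx' hzy' w' hw' hwS''
      have hcp : c ∈ p'.support := hsep x' hxA y' hyB p' hpS''
      have hcw : c ∈ w'.support := hsep x' hxA y' hyB w' hwS''
      by_cases hzc : z' = c
      · exact hzc ▸ hcw
      have hlen12 : (p'.takeUntil c hcp).length + (p'.dropUntil c hcp).length
          = G.dist x' y' := by
        rw [← hplen', ← Walk.length_append, p'.take_spec hcp]
      obtain ⟨hl1, hl2⟩ := shortest_split _ _ hlen12
      have hp1 : (p'.takeUntil c hcp).IsPath := hp'.takeUntil hcp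
      have hp2 : (p'.dropUntil c hcp).IsPath := hp'.dropUntil hcp
      have hp1S : ∀ v ∈ (p'.takeUntil c hcp).support, v ∈ A ∪ B ∪ {c} :=
        fun v hv => hpS'' v (p'.support_takeUntil_subset hcp hv)
      have hp2S : ∀ v ∈ (p'.dropUntil c hcp).support, v ∈ B ∪ A ∪ {c} := by
        intro v hv
        have := hpS'' v (p'.support_dropUntil_subset hcp hv)
        simp only [Set.mem_union, Set.mem_singleton_iff] at this ⊢; tauto
      have hz12 : z' ∈ (p'.takeUntil c hcp).support ∨ z' ∈ (p'.dropUntil c hcp).support := by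
        rw [← p'.take_spec hcp, Walk.mem_support_append_iff] at hz'
        exact hz'
      have hw1 : (w'.takeUntil c hcw).IsPath := hw'.takeUntil hcw
      have hw2 : (w'.dropUntil c hcw).IsPath := hw'.dropUntil hcw
      have hw1S : ∀ v ∈ (w'.takeUntil c hcw).support, v ∈ A ∪ B ∪ {c} :=
        fun v hv => hwS'' v (w'.support_takeUntil_subset hcw hv)
      have hw2S : ∀ v ∈ (w'.dropUntil c hcw).support, v ∈ B ∪ A ∪ {c} := by
        intro v hv
        have := hwS'' v (w'.support_dropUntil_subset hcw hv)
        simp only [Set.mem_union, Set.mem_singleton_iff] at this ⊢; tauto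
      rcases hz12 with hz1 | hz2
      · have hp1A := support_subset_left hcB hsep _ hp1 hp1S (Or.inl hxA) (Or.inr rfl)
        have hw1A := support_subset_left hcB hsep _ hw1 hw1S (Or.inl hxA) (Or.inr rfl)
        have := ih1 _ hp1 hl1 hp1A hz1 hzx' hzc _ hw1 hw1A
        exact w'.support_takeUntil_subset hcw this
      · have hp2B := support_subset_left hcA hsep' _ hp2 hp2S (Or.inr rfl) (Or.inl hyB)
        have hw2B := support_subset_left hcA hsep' _ hw2 hw2S (Or.inr rfl) (Or.inl hyB)
        have := ih2 _ hp2 hl2 hp2B hz2 hzc hzy' _ hw2 hw2B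
        exact w'.support_dropUntil_subset hcw this
    have hxS := hpS x p.start_mem_support
    have hyS := hpS y p.end_mem_support
    rcases hxS with (hxA | hxB) | hxc
    · rcases hyS with (hyA | hyB) | hyc
      · exact caseAA (Or.inl hxA) (Or.inl hyA)
      · exact key x y z p hxA hyB hp hplen hpS hz hzx hzy w hw hwS
      · exact caseAA (Or.inl hxA) (Or.inr hyc)
    · rcases hyS with (hyA | hyB) | hyc
      · -- x ∈ B, y ∈ A : reverse everything
        have hrev := key y x z p.reverse hyA hxB hp.reverse
          (by rw [Walk.length_reverse, hplen, SimpleGraph.dist_comm])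
          (fun v hv => by
            rw [Walk.support_reverse, List.mem_reverse] at hv; exact hpS v hv)
          (by rw [Walk.support_reverse, List.mem_reverse]; exact hz) hzy hzx
          w.reverse hw.reverse
          (fun v hv => by
            rw [Walk.support_reverse, List.mem_reverse] at hv; exact hwS v hv)
        rwa [Walk.support_reverse, List.mem_reverse] at hrev
      · exact caseBB (Or.inl hxB) (Or.inl hyB)
      · exact caseBB (Or.inl hxB) (Or.inr hyc)
    · rcases hyS with (hyA | hyB) | hyc
      · exact caseAA (Or.inr hxc) (Or.inl hyA)
      · exact caseBB (Or.inr hxc) (Or.inl hyB)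
      · exact absurd (hxc.trans hyc.symm : x = y) hxy

end BlockProofAux

/-- If `z` is an interior vertex of the unique shortest path between `x` and `y` in a
block graph, then every walk from `x` to `y` passes through `z`. -/
theorem every_walk_through_interior_vertex {V : Type*} [Fintype V] (G : SimpleGraph V)
    (hG : G.IsBlockGraph) (x y z : V)
    (p : G.Walk x y) (hp : p.IsPath ∧ p.length = G.dist x y)
    (hz : z ∈ p.support) (hzx : z ≠ x) (hzy : z ≠ y) :
    ∀ w : G.Walk x y, z ∈ w.support := by
  classical
  intro w
  have hcomp := hG x
  have hsup : ∀ (u : V) (q : G.Walk x u), ∀ v ∈ q.support, v ∈ {w | G.Reachable x w} := by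
    intro u q v hv
    exact ⟨q.takeUntil v hv⟩
  have hmain := BlockProofAux.main hcomp p hp.1 hp.2 (hsup y p) hz hzx hzy
    w.bypass w.bypass_isPath (hsup y w.bypass)
  exact w.support_bypass_subset hmain
end

section
/- In a block graph G, the unique shortest path between two vertices x and y has the minimum number of vertices among all paths from x to y; equivalently, the vertex set of the shortest path is contained in the vertex set of every path from x to y. -/
open SimpleGraph

namespace BGProof

variable {V : Type*} {G : SimpleGraph V}

/-- A path with endpoints in `A ∪ {c}` whose support lies in `A ∪ B ∪ {c}` stays in `A ∪ {c}`. -/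
lemma stay {A B : Set V} {c : V} (hcB : c ∉ B)
    (hsep : ∀ a ∈ A, ∀ b ∈ B, ∀ w : G.Walk a b,
      (∀ x ∈ w.support, x ∈ A ∪ B ∪ {c}) → c ∈ w.support)
    {x y : V} (hx : x ∈ A ∪ {c}) (hy : y ∈ A ∪ {c})
    (w : G.Walk x y) (hw : w.IsPath)
    (hws : ∀ v ∈ w.support, v ∈ A ∪ B ∪ {c}) :
    ∀ v ∈ w.support, v ∈ A ∪ {c} := by
  classical
  intro v hv
  by_contra hvAc
  have hvB : v ∈ B := by
    have := hws v hv
    simp only [Set.mem_union, Set.mem_singleton_iff] at this hvAc ⊢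
    tauto
  set w1 := w.takeUntil v hv with hw1def
  set w2 := w.dropUntil v hv with hw2def
  have hspec : w1.append w2 = w := w.take_spec hv
  have hnd : (w1.support ++ w2.support.tail).Nodup := by
    have := hw.support_nodup
    rw [← hspec, Walk.support_append] at this
    exact this
  rw [List.nodup_append] at hnd
  have hc1 : c ∈ w1.support := by
    rcases hx with hx | hx
    · exact hsep x hx v hvB w1 (fun u hu => hws u (w.support_takeUntil_subset hv hu))
    · rw [Set.mem_singleton_iff] at hx
      rw [← hx]; exact w1.start_mem_support
  have hc2 : c ∈ w2.support := by
    rcases hy with hy | hy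
    · have := hsep y hy v hvB w2.reverse (by
        intro u hu
        rw [Walk.support_reverse, List.mem_reverse] at hu
        exact hws u (w.support_dropUntil_subset hv hu))
      rwa [Walk.support_reverse, List.mem_reverse] at this
    · rw [Set.mem_singleton_iff] at hy
      rw [← hy]; exact w2.end_mem_support
  have hc2t : c ∈ w2.support.tail := by
    rw [w2.support_eq_cons] at hc2
    rcases List.mem_cons.mp hc2 with h | h
    · exact absurd (by rw [h]; exact hvB) hcB
    · exact h
  exact hnd.2.2 c hc1 c hc2t rfl

/-- The statement we prove by induction on the clique-sum structure. -/
def Good (G : SimpleGraph V) (S : Set V) : Prop :=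
  ∀ {x y : V} (p : G.Walk x y), p.IsPath → (∀ v ∈ p.support, v ∈ S) →
    (∀ r : G.Walk x y, (∀ v ∈ r.support, v ∈ S) → p.length ≤ r.length) →
    ∀ q : G.Walk x y, q.IsPath → (∀ v ∈ q.support, v ∈ S) →
    ∀ v ∈ p.support, v ∈ q.support

lemma cross {A B : Set V} {c : V} (hcA : c ∉ A) (hcB : c ∉ B)
    (hsep : ∀ a ∈ A, ∀ b ∈ B, ∀ w : G.Walk a b,
      (∀ x ∈ w.support, x ∈ A ∪ B ∪ {c}) → c ∈ w.support)
    (g1 : Good G (A ∪ {c})) (g2 : Good G (B ∪ {c}))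
    {x y : V} (hx : x ∈ A) (hy : y ∈ B)
    (p : G.Walk x y) (hp : p.IsPath) (hps : ∀ v ∈ p.support, v ∈ A ∪ B ∪ {c})
    (hpmin : ∀ r : G.Walk x y, (∀ v ∈ r.support, v ∈ A ∪ B ∪ {c}) → p.length ≤ r.length)
    (q : G.Walk x y) (hq : q.IsPath) (hqs : ∀ v ∈ q.support, v ∈ A ∪ B ∪ {c}) :
    ∀ v ∈ p.support, v ∈ q.support := by
  classical
  have hsep' : ∀ a ∈ B, ∀ b ∈ A, ∀ w : G.Walk a b,
      (∀ x ∈ w.support, x ∈ B ∪ A ∪ {c}) → c ∈ w.support := by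
    intro a ha b hb w hws
    have := hsep b hb a ha w.reverse (by
      intro u hu
      rw [Walk.support_reverse, List.mem_reverse] at hu
      have := hws u hu
      simp only [Set.mem_union, Set.mem_singleton_iff] at this ⊢
      tauto)
    rwa [Walk.support_reverse, List.mem_reverse] at this
  have hcp : c ∈ p.support := hsep x hx y hy p hps
  have hcq : c ∈ q.support := hsep x hx y hy q hqs
  set p1 := p.takeUntil c hcp with hp1def
  set p2 := p.dropUntil c hcp with hp2def
  set q1 := q.takeUntil c hcq with hq1def
  set q2 := q.dropUntil c hcq with hq2def
  have hp1path : p1.IsPath := hp.takeUntil hcp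
  have hp2path : p2.IsPath := hp.dropUntil hcp
  have hq1path : q1.IsPath := hq.takeUntil hcq
  have hq2path : q2.IsPath := hq.dropUntil hcq
  have hp1S : ∀ u ∈ p1.support, u ∈ A ∪ B ∪ {c} :=
    fun u hu => hps u (p.support_takeUntil_subset hcp hu)
  have hp2S : ∀ u ∈ p2.support, u ∈ A ∪ B ∪ {c} :=
    fun u hu => hps u (p.support_dropUntil_subset hcp hu)
  have hq1S : ∀ u ∈ q1.support, u ∈ A ∪ B ∪ {c} :=
    fun u hu => hqs u (q.support_takeUntil_subset hcq hu)
  have hq2S : ∀ u ∈ q2.support, u ∈ A ∪ B ∪ {c} :=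
    fun u hu => hqs u (q.support_dropUntil_subset hcq hu)
  have flipS : ∀ u, u ∈ A ∪ B ∪ {c} → u ∈ B ∪ A ∪ {c} := by
    intro u hu
    simp only [Set.mem_union, Set.mem_singleton_iff] at hu ⊢
    tauto
  have hp1s : ∀ v ∈ p1.support, v ∈ A ∪ {c} :=
    stay hcB hsep (Or.inl hx) (Or.inr rfl) p1 hp1path hp1S
  have hp2s : ∀ v ∈ p2.support, v ∈ B ∪ {c} :=
    stay hcA hsep' (Or.inr rfl) (Or.inl hy) p2 hp2path (fun u hu => flipS u (hp2S u hu))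
  have hq1s : ∀ v ∈ q1.support, v ∈ A ∪ {c} :=
    stay hcB hsep (Or.inl hx) (Or.inr rfl) q1 hq1path hq1S
  have hq2s : ∀ v ∈ q2.support, v ∈ B ∪ {c} :=
    stay hcA hsep' (Or.inr rfl) (Or.inl hy) q2 hq2path (fun u hu => flipS u (hq2S u hu))
  have sub1 : ∀ u : V, u ∈ A ∪ {c} → u ∈ A ∪ B ∪ {c} := by
    intro u hu; simp only [Set.mem_union, Set.mem_singleton_iff] at hu ⊢; tauto
  have sub2 : ∀ u : V, u ∈ B ∪ {c} → u ∈ A ∪ B ∪ {c} := by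
    intro u hu; simp only [Set.mem_union, Set.mem_singleton_iff] at hu ⊢; tauto
  have hplen : p1.length + p2.length = p.length := by
    rw [← Walk.length_append, p.take_spec hcp]
  have hmin1 : ∀ r : G.Walk x c, (∀ v ∈ r.support, v ∈ A ∪ {c}) → p1.length ≤ r.length := by
    intro r hr
    have := hpmin (r.append p2) (by
      intro u hu
      rcases (Walk.mem_support_append_iff _ _).mp hu with h | h
      · exact sub1 u (hr u h)
      · exact hp2S u h)
    rw [Walk.length_append] at this
    omega
  have hmin2 : ∀ r : G.Walk c y, (∀ v ∈ r.support, v ∈ B ∪ {c}) → p2.length ≤ r.length := by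
    intro r hr
    have := hpmin (p1.append r) (by
      intro u hu
      rcases (Walk.mem_support_append_iff _ _).mp hu with h | h
      · exact hp1S u h
      · exact sub2 u (hr u h))
    rw [Walk.length_append] at this
    omega
  have h1 := g1 p1 hp1path hp1s hmin1 q1 hq1path hq1s
  have h2 := g2 p2 hp2path hp2s hmin2 q2 hq2path hq2s
  intro v hv
  have hv' : v ∈ (p1.append p2).support := by
    rw [p.take_spec hcp]; exact hv
  have : v ∈ (q1.append q2).support := by
    rw [Walk.mem_support_append_iff] at hv' ⊢
    rcases hv' with h | h
    · exact Or.inl (h1 v h)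
    · exact Or.inr (h2 v h)
  rwa [q.take_spec hcq] at this

lemma good_of_cliqueSum {S : Set V} (hS : G.IsCliqueSumOfCompletes S) : Good G S := by
  induction hS with
  | complete S hS =>
    intro x y p hp hps hpmin q hq hqs v hv
    by_cases hxy : x = y
    · subst hxy
      have h0 : p.length = 0 := by
        have := hpmin Walk.nil (by
          intro u hu
          rw [Walk.support_nil, List.mem_singleton] at hu
          rw [hu]; exact hps x p.start_mem_support)
        simpa using this
      cases p with
      | nil =>
        rw [Walk.support_nil, List.mem_singleton] at hv
        rw [hv]; exact q.start_mem_support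
      | cons hadj p' => simp [Walk.length_cons] at h0
    · have hadj : G.Adj x y := hS (hps x p.start_mem_support) (hps y p.end_mem_support) hxy
      have hle1 : p.length ≤ 1 := by
        have := hpmin (Walk.cons hadj Walk.nil) (by
          intro u hu
          simp only [Walk.support_cons, Walk.support_nil, List.mem_cons,
            List.mem_singleton, List.not_mem_nil, or_false] at hu
          rcases hu with h | h
          · rw [h]; exact hps x p.start_mem_support
          · rw [h]; exact hps y p.end_mem_support)
        simpa using this
      cases p with
      | nil => exact absurd rfl hxy
      | cons ha p' =>
        cases p' with
        | nil =>
          simp only [Walk.support_cons, Walk.support_nil, List.mem_cons,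
            List.mem_singleton, List.not_mem_nil, or_false] at hv
          rcases hv with h | h
          · rw [h]; exact q.start_mem_support
          · rw [h]; exact q.end_mem_support
        | cons hb p'' => simp [Walk.length_cons] at hle1
  | sum A B c hAB hcA hcB hA hB hsep h1 h2 ih1 ih2 =>
    intro x y p hp hps hpmin q hq hqs
    have hx := hps x p.start_mem_support
    have hy := hps y p.end_mem_support
    have sub1 : ∀ u : V, u ∈ A ∪ {c} → u ∈ A ∪ B ∪ {c} := by
      intro u hu; simp only [Set.mem_union, Set.mem_singleton_iff] at hu ⊢; tauto
    have sub2 : ∀ u : V, u ∈ B ∪ {c} → u ∈ A ∪ B ∪ {c} := by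
      intro u hu; simp only [Set.mem_union, Set.mem_singleton_iff] at hu ⊢; tauto
    have flipS : ∀ u : V, u ∈ A ∪ B ∪ {c} → u ∈ B ∪ A ∪ {c} := by
      intro u hu; simp only [Set.mem_union, Set.mem_singleton_iff] at hu ⊢; tauto
    have hsep' : ∀ a ∈ B, ∀ b ∈ A, ∀ w : G.Walk a b,
        (∀ x ∈ w.support, x ∈ B ∪ A ∪ {c}) → c ∈ w.support := by
      intro a ha b hb w hws
      have := hsep b hb a ha w.reverse (by
        intro u hu
        rw [Walk.support_reverse, List.mem_reverse] at hu
        have := hws u hu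
        simp only [Set.mem_union, Set.mem_singleton_iff] at this ⊢
        tauto)
      rwa [Walk.support_reverse, List.mem_reverse] at this
    have case1 : x ∈ A ∪ {c} → y ∈ A ∪ {c} → ∀ v ∈ p.support, v ∈ q.support := by
      intro hx' hy'
      exact ih1 p hp (stay hcB hsep hx' hy' p hp hps)
        (fun r hr => hpmin r (fun u hu => sub1 u (hr u hu)))
        q hq (stay hcB hsep hx' hy' q hq hqs)
    have case2 : x ∈ B ∪ {c} → y ∈ B ∪ {c} → ∀ v ∈ p.support, v ∈ q.support := by
      intro hx' hy'
      exact ih2 p hp (stay hcA hsep' hx' hy' p hp (fun u hu => flipS u (hps u hu)))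
        (fun r hr => hpmin r (fun u hu => sub2 u (hr u hu)))
        q hq (stay hcA hsep' hx' hy' q hq (fun u hu => flipS u (hqs u hu)))
    have case3 : x ∈ A → y ∈ B → ∀ v ∈ p.support, v ∈ q.support := by
      intro hx' hy'
      exact cross hcA hcB hsep ih1 ih2 hx' hy' p hp hps hpmin q hq hqs
    have case4 : x ∈ B → y ∈ A → ∀ v ∈ p.support, v ∈ q.support := by
      intro hx' hy'
      exact cross hcB hcA hsep' ih2 ih1 hx' hy' p hp (fun u hu => flipS u (hps u hu))
        (fun r hr => hpmin r (fun u hu => by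
          have := hr u hu
          simp only [Set.mem_union, Set.mem_singleton_iff] at this ⊢; tauto))
        q hq (fun u hu => flipS u (hqs u hu))
    rcases hx with (hx | hx) | hx
    · rcases hy with (hy | hy) | hy
      · exact case1 (Or.inl hx) (Or.inl hy)
      · exact case3 hx hy
      · exact case1 (Or.inl hx) (Or.inr hy)
    · rcases hy with (hy | hy) | hy
      · exact case4 hx hy
      · exact case2 (Or.inl hx) (Or.inl hy)
      · exact case2 (Or.inl hx) (Or.inr hy)
    · rcases hy with (hy | hy) | hy
      · exact case1 (Or.inr hx) (Or.inl hy)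
      · exact case2 (Or.inr hx) (Or.inl hy)
      · exact case1 (Or.inr hx) (Or.inr hy)

end BGProof

/-- In a block graph, the vertex set of the unique shortest path between `x` and `y`
is contained in the vertex set of every path from `x` to `y`; in particular the
shortest path has the minimum number of vertices among all paths from `x` to `y`. -/
theorem shortest_path_support_subset {V : Type*} [Fintype V] (G : SimpleGraph V)
    (hG : G.IsBlockGraph) (x y : V)
    (p : G.Walk x y) (hp : p.IsPath ∧ p.length = G.dist x y)
    (q : G.Walk x y) (hq : q.IsPath) :
    ∀ v ∈ p.support, v ∈ q.support := by
  classical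
  have hS := hG x
  have hsupp : ∀ (w : G.Walk x y), ∀ u ∈ w.support, u ∈ {w' | G.Reachable x w'} :=
    fun w u hu => ⟨w.takeUntil u hu⟩
  exact BGProof.good_of_cliqueSum hS p hp.1 (hsupp p)
    (fun r _ => by rw [hp.2]; exact SimpleGraph.dist_le r) q hq (hsupp q)
end

section
/- Let K be an invertible symmetric n×n matrix over a field, and let G be the graph on [n] with an edge (i,j) for each nonzero off-diagonal entry K_{ij}, all vertices having loops. If (A,B,{c}) is a partition of [n] such that every path in G from A to B passes through c, then the submatrix of K^{-1} with rows A∪{c} and columns B∪{c} has rank at most 1. -/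
open Matrix in
/-- If `K` is an invertible symmetric matrix whose support graph `G` is separated by the
single vertex `c` into pieces `A` and `B`, then the submatrix of `K⁻¹` with rows
`A ∪ {c}` and columns `B ∪ {c}` has rank at most `1`. -/
theorem rank_inv_submatrix_le_one_of_separator {F : Type*} [Field F] {n : ℕ}
    (K : Matrix (Fin n) (Fin n) F) (hsym : K.IsSymm) (hinv : IsUnit K.det)
    (G : SimpleGraph (Fin n)) (hAdj : ∀ i j, G.Adj i j ↔ i ≠ j ∧ K i j ≠ 0)
    (A B : Finset (Fin n)) (c : Fin n)
    (hAB : Disjoint A B) (hcA : c ∉ A) (hcB : c ∉ B)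
    (hcover : A ∪ B ∪ {c} = Finset.univ)
    (hsep : ∀ a ∈ A, ∀ b ∈ B, ∀ w : G.Walk a b, c ∈ w.support) :
    Matrix.rank ((K⁻¹).submatrix
      (fun a : ↥(insert c A) => (a : Fin n))
      (fun b : ↥(insert c B) => (b : Fin n))) ≤ 1 := by
  classical
  have hKM : K * K⁻¹ = 1 := Matrix.mul_nonsing_inv K hinv
  set M := K⁻¹ with hMdef
  -- Rows indexed by `A` vanish outside `insert c A`.
  have hKzero : ∀ a : Fin n, a ∈ A → ∀ j : Fin n, j ∉ insert c A → K a j = 0 := by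
    intro a ha j hj
    by_contra hne
    have haj : a ≠ j := by
      rintro rfl; exact hj (Finset.mem_insert_of_mem ha)
    have hadj : G.Adj a j := (hAdj a j).2 ⟨haj, hne⟩
    have hjB : j ∈ B := by
      have hju : j ∈ A ∪ B ∪ {c} := hcover ▸ Finset.mem_univ j
      simp only [Finset.mem_union, Finset.mem_singleton, Finset.mem_insert, not_or] at hju hj
      tauto
    have hc := hsep a ha j hjB hadj.toWalk
    simp only [SimpleGraph.Adj.toWalk, SimpleGraph.Walk.support_cons,
      SimpleGraph.Walk.support_nil, List.mem_cons, List.mem_singleton,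
      List.not_mem_nil, or_false] at hc
    rcases hc with rfl | rfl
    · exact hcA ha
    · exact hcB hjB
  set L : Matrix ↥A ↥(insert c A) F :=
    K.submatrix (fun a : ↥A => (a : Fin n)) (fun j : ↥(insert c A) => (j : Fin n)) with hLdef
  set N := M.submatrix
      (fun a : ↥(insert c A) => (a : Fin n))
      (fun b : ↥(insert c B) => (b : Fin n)) with hNdef
  -- L * N = 0
  have hLN : L * N = 0 := by
    ext a b
    have hab : (a : Fin n) ≠ (b : Fin n) := by
      have hb := b.2
      simp only [Finset.mem_insert] at hb
      rcases hb with hb | hb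
      · intro h; apply hcA; rw [← hb, ← h]; exact a.2
      · intro h; exact (Finset.disjoint_left.mp hAB a.2) (h ▸ hb)
    have hfull : ∑ j : Fin n, K a j * M j b = 0 := by
      have h1 : (K * M) (a : Fin n) (b : Fin n) = 0 := by
        rw [hKM]; exact Matrix.one_apply_ne hab
      rwa [Matrix.mul_apply] at h1
    have hsub : ∑ j ∈ insert c A, K a j * M j b = ∑ j : Fin n, K a j * M j b := by
      apply Finset.sum_subset (Finset.subset_univ _)
      intro j _ hj
      rw [hKzero a a.2 j hj, zero_mul]
    calc (L * N) a b = ∑ j : ↥(insert c A), K a j * M j b := by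
          simp [Matrix.mul_apply, hLdef, hNdef]
      _ = ∑ j ∈ insert c A, K a j * M j b :=
          Finset.sum_coe_sort (insert c A) (fun j => K a j * M j b)
      _ = 0 := by rw [hsub, hfull]
  -- rank L = |A| : the transpose has injective mulVecLin
  have hinj : Function.Injective Lᵀ.mulVecLin := by
    rw [← LinearMap.ker_eq_bot, LinearMap.ker_eq_bot']
    intro x hx
    set y : Fin n → F := fun i => if h : i ∈ A then x ⟨i, h⟩ else 0 with hy
    have hvm : Matrix.vecMul y K = 0 := by
      funext j
      have hrow : Matrix.vecMul y K j = ∑ a : ↥A, x a * K a j := by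
        rw [Matrix.vecMul, dotProduct]
        rw [← Finset.sum_subset (Finset.subset_univ A)]
        · rw [← Finset.sum_coe_sort A (fun i => y i * K i j)]
          apply Finset.sum_congr rfl
          intro a _
          simp [hy, a.2]
        · intro i _ hi
          simp [hy, hi]
      by_cases hj : j ∈ insert c A
      · have hxj := congrFun hx ⟨j, hj⟩
        rw [Matrix.mulVecLin_apply] at hxj
        rw [hrow]
        rw [Matrix.mulVec, dotProduct] at hxj
        simp only [Matrix.transpose_apply, hLdef, Matrix.submatrix_apply, Pi.zero_apply] at hxj
        simpa [mul_comm] using hxj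
      · rw [hrow]
        apply Finset.sum_eq_zero
        intro a _
        rw [hKzero a a.2 j hj, mul_zero]
    have hy0 : y = 0 := by
      have h2 := congrArg (fun v => Matrix.vecMul v M) hvm
      simpa [Matrix.vecMul_vecMul, hKM, Matrix.zero_vecMul] using h2
    funext a
    have h3 := congrFun hy0 (a : Fin n)
    simpa [hy, a.2] using h3
  have hrankL : L.rank = A.card := by
    rw [← Matrix.rank_transpose, Matrix.rank, LinearMap.finrank_range_of_inj hinj]
    simp
  -- kernel of L has dimension 1
  have hcard : Fintype.card ↥(insert c A) = A.card + 1 := by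
    rw [Fintype.card_coe, Finset.card_insert_of_notMem hcA]
  have hker : Module.finrank F (LinearMap.ker L.mulVecLin) = 1 := by
    have hrn := LinearMap.finrank_range_add_finrank_ker L.mulVecLin
    rw [Module.finrank_fintype_fun_eq_card, hcard] at hrn
    have h4 : L.rank + Module.finrank F (LinearMap.ker L.mulVecLin) = A.card + 1 := by
      rw [Matrix.rank]; exact hrn
    rw [hrankL] at h4
    omega
  -- range N ≤ ker L
  have hle : LinearMap.range N.mulVecLin ≤ LinearMap.ker L.mulVecLin := by
    rintro v ⟨x, rfl⟩
    rw [LinearMap.mem_ker]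
    simp only [Matrix.mulVecLin_apply]
    rw [Matrix.mulVec_mulVec, hLN, Matrix.zero_mulVec]
  calc N.rank = Module.finrank F (LinearMap.range N.mulVecLin) := rfl
    _ ≤ Module.finrank F (LinearMap.ker L.mulVecLin) := Submodule.finrank_mono hle
    _ = 1 := hker
end

section
/- Let Σ be the covariance matrix of an n-dimensional multivariate normal distribution (positive definite, real symmetric), with K=Σ^{-1}. Then for any x,y, det(K)·Σ_{xy} equals the sum over all simple paths P=(p_1,…,p_m) from x to y in the graph determined by the nonzero entries of K of (-1)^{m+1} K_{p_1p_2}K_{p_2p_3}···K_{p_{m-1}p_m}·det(K_{\P}), where K_{\P} is K with the rows and columns indexed by the vertices of P deleted (det of an empty matrix is 1). -/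
open Matrix SimpleGraph


lemma posDef_submatrix_of_injective {m ι : Type} [Fintype ι] [Fintype m]
    {M : Matrix ι ι ℝ} (hM : M.PosDef) (e : m → ι) (he : Function.Injective e) :
    (M.submatrix e e).PosDef := by
  classical
  rw [posDef_iff_dotProduct_mulVec]
  constructor
  · have h1 := hM.isHermitian
    rw [Matrix.IsHermitian] at h1 ⊢
    rw [Matrix.conjTranspose_submatrix, h1]
  · intro v hv
    set w : ι → ℝ := Function.extend e v 0 with hw
    have hwe : ∀ a, w (e a) = v a := fun a => he.extend_apply v 0 a
    have hw0 : ∀ i, (¬ ∃ a, e a = i) → w i = 0 := by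
      intro i hi
      rw [hw, Function.extend_apply' _ _ _ hi]
      rfl
    have hwne : w ≠ 0 := by
      obtain ⟨a, ha⟩ := Function.ne_iff.1 hv
      exact Function.ne_iff.2 ⟨e a, by rw [hwe]; simpa using ha⟩
    have key : ∀ f : ι → ℝ, (∑ i, w i * f i) = ∑ a, v a * f (e a) := by
      intro f
      calc (∑ i : ι, w i * f i)
          = ∑ i ∈ Finset.univ.image e, w i * f i := by
            refine (Finset.sum_subset (Finset.subset_univ _) ?_).symm
            intro i _ hi
            exact mul_eq_zero_of_left (hw0 i fun ⟨a, ha⟩ =>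
              hi (Finset.mem_image.2 ⟨a, Finset.mem_univ a, ha⟩)) _
        _ = ∑ a : m, w (e a) * f (e a) :=
            Finset.sum_image (fun a _ b _ hab => he hab)
        _ = ∑ a : m, v a * f (e a) := Finset.sum_congr rfl fun a _ => by rw [hwe]
    have h2 := hM.dotProduct_mulVec_pos hwne
    have heq : dotProduct (star v) ((M.submatrix e e) *ᵥ v)
        = dotProduct (star w) (M *ᵥ w) := by
      simp only [dotProduct, mulVec, star_trivial, submatrix_apply]
      rw [key]
      refine Finset.sum_congr rfl fun a _ => ?_
      congr 1
      calc (∑ x : m, M (e a) (e x) * v x)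
          = ∑ x : m, v x * M (e a) (e x) := by simp [mul_comm]
        _ = ∑ x : ι, w x * M (e a) x := (key _).symm
        _ = ∑ x : ι, M (e a) x * w x := by simp [mul_comm]
    rw [heq]
    exact h2

section Schur
variable {ι : Type} [Fintype ι] [DecidableEq ι]

lemma schur_setup {K : Matrix ι ι ℝ} (hK : K.PosDef) (x y : ι) (hyx : y ≠ x) :
    K.det * K⁻¹ x x = (K.submatrix (fun i : {i : ι // i ≠ x} => (i : ι)) (fun i : {i : ι // i ≠ x} => (i : ι))).det ∧
    K.det * K⁻¹ x y =
      -∑ j : {i : ι // i ≠ x}, K x j *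
        ((K.submatrix (fun i : {i : ι // i ≠ x} => (i : ι)) (fun i : {i : ι // i ≠ x} => (i : ι))).det *
          (K.submatrix (fun i : {i : ι // i ≠ x} => (i : ι)) (fun i : {i : ι // i ≠ x} => (i : ι)))⁻¹ j ⟨y, hyx⟩) := by
  classical
  set e : {i : ι // i = x} ⊕ {i : ι // ¬ i = x} ≃ ι := Equiv.sumCompl (· = x) with he
  set M : Matrix _ _ ℝ := K.submatrix e e with hM
  have hMdet : M.det = K.det := det_submatrix_equiv_self e K
  have hMinv : M⁻¹ = K⁻¹.submatrix e e := inv_submatrix_equiv K e e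
  set A : Matrix {i : ι // ¬ i = x} {i : ι // ¬ i = x} ℝ := M.toBlocks₂₂ with hA
  have hAeq : A = K.submatrix (fun i : {i : ι // i ≠ x} => (i : ι)) (fun i : {i : ι // i ≠ x} => (i : ι)) := rfl
  have hApd : A.PosDef := by
    rw [hAeq]; exact posDef_submatrix_of_injective hK _ Subtype.val_injective
  have hMpd : M.PosDef := posDef_submatrix_of_injective hK _ e.injective
  haveI iA : Invertible A := hApd.isUnit.invertible
  haveI hMi : Invertible M := hMpd.isUnit.invertible
  have hblocks : M = fromBlocks M.toBlocks₁₁ M.toBlocks₁₂ M.toBlocks₂₁ A :=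
    (fromBlocks_toBlocks M).symm
  set a := M.toBlocks₁₁; set b := M.toBlocks₁₂; set c := M.toBlocks₂₁
  haveI iFB : Invertible (fromBlocks a b c A) := hblocks ▸ hMi
  set s := a - b * ⅟A * c with hs
  haveI iS : Invertible s := invertibleOfFromBlocks₂₂Invertible a b c A
  have hdet : M.det = A.det * s.det := by
    rw [hblocks, det_fromBlocks₂₂]
  have hMinvF : ⅟(fromBlocks a b c A)
      = fromBlocks (⅟s) (-(⅟s * b * ⅟A))
          (-(⅟A * c * ⅟s)) (⅟A + ⅟A * c * ⅟s * b * ⅟A) :=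
    invOf_fromBlocks₂₂_eq a b c A
  haveI : Unique {i : ι // i = x} := ⟨⟨⟨x, rfl⟩⟩, fun i => Subtype.ext i.2⟩
  set u : {i : ι // i = x} := ⟨x, rfl⟩ with hu
  have hud : (default : {i : ι // i = x}) = u := Subsingleton.elim _ _
  set y' : {i : ι // ¬ i = x} := ⟨y, hyx⟩ with hy'
  have hdets : s.det = s u u := by rw [det_unique, hud]
  have hMinv2 : M⁻¹ = fromBlocks (⅟s) (-(⅟s * b * ⅟A))
      (-(⅟A * c * ⅟s)) (⅟A + ⅟A * c * ⅟s * b * ⅟A) := by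
    rw [hblocks, ← invOf_eq_nonsing_inv]
    exact hMinvF
  have hsinv : s u u * ⅟s u u = 1 := by
    have h1 := congrFun (congrFun (mul_invOf_self s) u) u
    rw [Matrix.mul_apply] at h1
    rw [Fintype.sum_unique, hud] at h1
    rw [h1, Matrix.one_apply_eq]
  have hexx : K⁻¹ x x = M⁻¹ (Sum.inl u) (Sum.inl u) := by rw [hMinv]; rfl
  have hexy : K⁻¹ x y = M⁻¹ (Sum.inl u) (Sum.inr y') := by rw [hMinv]; rfl
  have hbj : ∀ j : {i : ι // ¬ i = x}, b u j = K x (j : ι) := fun j => rfl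
  constructor
  · rw [hexx, hMinv2, ← hMdet, hdet, hdets, fromBlocks_apply₁₁, ← hAeq]
    rw [mul_assoc, hsinv, mul_one]
  · rw [hexy, hMinv2, ← hMdet, hdet, hdets, fromBlocks_apply₁₂, ← hAeq]
    have hrow : ∀ j : {i : ι // ¬ i = x}, (⅟s * b) u j = ⅟s u u * b u j := by
      intro j
      rw [Matrix.mul_apply, Fintype.sum_unique, hud]
    rw [Matrix.neg_apply, Matrix.mul_apply, mul_neg, neg_inj, Finset.mul_sum]
    refine Finset.sum_congr rfl fun j _ => ?_
    rw [hrow, hbj, invOf_eq_nonsing_inv A]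
    linear_combination (A.det * K x (j : ι) * A⁻¹ j y') * hsinv
end Schur



section Lift
variable {ι : Type} {G : SimpleGraph ι} {x : ι}

def emb (G : SimpleGraph ι) (x : ι) :
    G.comap (Subtype.val : {i : ι // i ≠ x} → ι) →g G :=
  ⟨Subtype.val, fun {_ _} h => h⟩

attribute [reducible] emb

def liftWalk {G : SimpleGraph ι} {x : ι} :
    ∀ {u v : ι} (w : G.Walk u v) (hu : u ≠ x) (hv : v ≠ x), x ∉ w.support →
      (G.comap (Subtype.val : {i : ι // i ≠ x} → ι)).Walk ⟨u, hu⟩ ⟨v, hv⟩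
  | _, _, SimpleGraph.Walk.nil, _, _, _ => SimpleGraph.Walk.nil
  | _, _, @SimpleGraph.Walk.cons _ _ u b v h w, hu, hv, hw =>
    have hws : x ∉ w.support := fun hx => hw (by simp [SimpleGraph.Walk.support_cons, hx])
    have hb : b ≠ x := fun hbx => hws (hbx ▸ w.start_mem_support)
    SimpleGraph.Walk.cons (by exact h) (liftWalk w hb hv hws)

lemma map_liftWalk {G : SimpleGraph ι} {x : ι} :
    ∀ {u v : ι} (w : G.Walk u v) (hu : u ≠ x) (hv : v ≠ x) (hw : x ∉ w.support),
      (liftWalk w hu hv hw).map (emb G x) = w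
  | _, _, SimpleGraph.Walk.nil, _, _, _ => rfl
  | _, _, @SimpleGraph.Walk.cons _ _ u b v h w, hu, hv, hw => by
    rw [liftWalk]
    exact congrArg _ (map_liftWalk w _ _ _)

end Lift

section Terms
variable {ι : Type} [Fintype ι] [DecidableEq ι]

def pathTerm (K : Matrix ι ι ℝ) {G : SimpleGraph ι} {x y : ι} (p : G.Walk x y) : ℝ :=
  (-1 : ℝ) ^ (p.length) * ((p.darts.map fun d => K d.fst d.snd).prod) *
    (K.submatrix (fun i : {i : ι // i ∉ p.support} => (i : ι))
      (fun i : {i : ι // i ∉ p.support} => (i : ι))).det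

theorem pathTerm_cons (K : Matrix ι ι ℝ) {G : SimpleGraph ι} {x y : ι} (hxs : x ≠ y)
    {j : {i : ι // i ≠ x}} (hadj : G.Adj x (j : ι))
    (q : (G.comap (Subtype.val : {i : ι // i ≠ x} → ι)).Walk j ⟨y, hxs.symm⟩) :
    pathTerm K (SimpleGraph.Walk.cons hadj (q.map (emb G x))) =
      -(K x (j : ι)) *
        pathTerm (K.submatrix (fun i : {i : ι // i ≠ x} => (i : ι))
          (fun i : {i : ι // i ≠ x} => (i : ι))) q := by
  classical
  set A := K.submatrix (fun i : {i : ι // i ≠ x} => (i : ι))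
          (fun i : {i : ι // i ≠ x} => (i : ι)) with hA
  set w := q.map (emb G x) with hwdef
  set p := SimpleGraph.Walk.cons hadj w with hpdef
  have hlen : p.length = q.length + 1 := by
    rw [hpdef, SimpleGraph.Walk.length_cons, hwdef, SimpleGraph.Walk.length_map]
  have hdarts : ((p.darts.map fun d => K d.fst d.snd).prod)
      = K x (j : ι) * ((q.darts.map fun d => A d.fst d.snd).prod) := by
    rw [hpdef, SimpleGraph.Walk.darts_cons, List.map_cons, List.prod_cons]
    congr 1
    rw [hwdef, SimpleGraph.Walk.darts_map, List.map_map]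
    rfl
  have hsupp : p.support = x :: (q.support.map Subtype.val) := by
    rw [hpdef, SimpleGraph.Walk.support_cons, hwdef, SimpleGraph.Walk.support_map]
    rfl
  have hdet : (K.submatrix (fun i : {i : ι // i ∉ p.support} => (i : ι))
      (fun i : {i : ι // i ∉ p.support} => (i : ι))).det
      = (A.submatrix (fun i : {i : {i : ι // i ≠ x} // i ∉ q.support} => (i : {i : ι // i ≠ x}))
          (fun i : {i : {i : ι // i ≠ x} // i ∉ q.support} => (i : {i : ι // i ≠ x}))).det := by
    have hmem : ∀ i : ι, i ∉ p.support ↔ (i ≠ x ∧ ∀ h : i ≠ x, (⟨i, h⟩ : {i : ι // i ≠ x}) ∉ q.support) := by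
      intro i
      rw [hsupp]
      simp only [List.mem_cons, List.mem_map, not_or, not_exists, not_and]
      constructor
      · rintro ⟨h1, h2⟩
        exact ⟨h1, fun h hm => h2 ⟨i, h⟩ hm rfl⟩
      · rintro ⟨h1, h2⟩
        refine ⟨h1, fun a ha hva => ?_⟩
        exact h2 h1 (by rwa [show (⟨i, h1⟩ : {i : ι // i ≠ x}) = a from Subtype.ext hva.symm])
    let eqv : {i : {i : ι // i ≠ x} // i ∉ q.support} ≃ {i : ι // i ∉ p.support} :=
      { toFun := fun i => ⟨(i : {i : ι // i ≠ x}), by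
          rw [hmem]
          refine ⟨i.1.2, fun h hm => i.2 ?_⟩
          rwa [show (⟨((i.1 : {i : ι // i ≠ x}) : ι), h⟩ : {i : ι // i ≠ x}) = i.1 from Subtype.ext rfl] at hm⟩
        invFun := fun i => ⟨⟨(i : ι), ((hmem i).1 i.2).1⟩, ((hmem i).1 i.2).2 _⟩
        left_inv := fun i => Subtype.ext (Subtype.ext rfl)
        right_inv := fun i => Subtype.ext rfl }
    rw [← Matrix.det_submatrix_equiv_self eqv
      (K.submatrix (fun i : {i : ι // i ∉ p.support} => (i : ι))
        (fun i : {i : ι // i ∉ p.support} => (i : ι)))]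
    congr 1
  rw [pathTerm, pathTerm, hlen, hdarts, hdet]
  ring_nf
  congr!
end Terms

section Bij
variable {ι : Type}

instance comapDecAdj (G : SimpleGraph ι) [h : DecidableRel G.Adj] (x : ι) :
    DecidableRel (G.comap (Subtype.val : {i : ι // i ≠ x} → ι)).Adj :=
  fun a b => h a.val b.val

def consPath (G : SimpleGraph ι) {x y : ι} (hxy : x ≠ y)
    (s : Σ j : {j : {i : ι // i ≠ x} // G.Adj x (j : ι)},
      (G.comap (Subtype.val : {i : ι // i ≠ x} → ι)).Path (j : {i : ι // i ≠ x}) ⟨y, hxy.symm⟩) :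
    G.Path x y :=
  ⟨SimpleGraph.Walk.cons s.1.2 (s.2.1.map (emb G x)), by
    rw [SimpleGraph.Walk.cons_isPath_iff]
    refine ⟨SimpleGraph.Walk.map_isPath_of_injective Subtype.val_injective s.2.2, ?_⟩
    rw [SimpleGraph.Walk.support_map]
    intro hx
    obtain ⟨a, _, hva⟩ := List.mem_map.1 hx
    exact a.2 hva⟩

theorem consPath_bijective (G : SimpleGraph ι) {x y : ι} (hxy : x ≠ y) :
    Function.Bijective (consPath G hxy) := by
  constructor
  · rintro ⟨⟨j₁, hadj₁⟩, q₁, hq₁⟩ ⟨⟨j₂, hadj₂⟩, q₂, hq₂⟩ h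
    rw [consPath, consPath, Subtype.mk.injEq] at h
    rw [SimpleGraph.Walk.cons.injEq] at h
    obtain ⟨hj, hq⟩ := h
    have hj' : j₁ = j₂ := Subtype.ext hj
    subst hj'
    have hq' : q₁ = q₂ :=
      SimpleGraph.Walk.map_injective_of_injective Subtype.val_injective _ _ (eq_of_heq hq)
    subst hq'
    rfl
  · rintro ⟨pw, hp⟩
    cases pw with
    | nil => exact absurd rfl hxy
    | cons h w =>
      rename_i b
      rw [SimpleGraph.Walk.cons_isPath_iff] at hp
      obtain ⟨hw, hxs⟩ := hp
      have hb : b ≠ x := fun hbx => hxs (hbx ▸ w.start_mem_support)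
      have hy : y ≠ x := hxy.symm
      refine ⟨⟨⟨⟨b, hb⟩, h⟩, ⟨liftWalk w hb hy hxs, ?_⟩⟩, ?_⟩
      · refine SimpleGraph.Walk.IsPath.of_map (f := emb G x) ?_
        rw [map_liftWalk]
        exact hw
      · rw [consPath, Subtype.mk.injEq]
        show SimpleGraph.Walk.cons h ((liftWalk w hb hy hxs).map (emb G x)) = SimpleGraph.Walk.cons h w
        rw [map_liftWalk]
end Bij

section SumLemma
variable {ι : Type} [Fintype ι] [DecidableEq ι]

theorem sum_pathTerm (K : Matrix ι ι ℝ) (G : SimpleGraph ι) [DecidableRel G.Adj]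
    {x y : ι} (hxy : x ≠ y) :
    (∑ p : G.Path x y, pathTerm K p.1) =
      ∑ j : {i : ι // i ≠ x}, (if G.Adj x (j : ι) then
        -(K x (j : ι)) *
          ∑ q : (G.comap (Subtype.val : {i : ι // i ≠ x} → ι)).Path j ⟨y, hxy.symm⟩,
            pathTerm (K.submatrix (fun i : {i : ι // i ≠ x} => (i : ι))
              (fun i : {i : ι // i ≠ x} => (i : ι))) q.1
        else 0) := by
  classical
  set g : {i : ι // i ≠ x} → ℝ := fun j =>
    -(K x (j : ι)) *
      ∑ q : (G.comap (Subtype.val : {i : ι // i ≠ x} → ι)).Path j ⟨y, hxy.symm⟩,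
        pathTerm (K.submatrix (fun i : {i : ι // i ≠ x} => (i : ι))
          (fun i : {i : ι // i ≠ x} => (i : ι))) q.1 with hg
  rw [← Function.Bijective.sum_comp (consPath_bijective G hxy) (fun p => pathTerm K p.1)]
  rw [← Finset.univ_sigma_univ, Finset.sum_sigma]
  have h1 : ∀ j : {j : {i : ι // i ≠ x} // G.Adj x (j : ι)},
      (∑ q : (G.comap (Subtype.val : {i : ι // i ≠ x} → ι)).Path j.1 ⟨y, hxy.symm⟩,
        pathTerm K (consPath G hxy ⟨j, q⟩).1) = g j.1 := by
    intro j
    rw [hg]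
    dsimp only
    rw [Finset.mul_sum]
    refine Finset.sum_congr rfl fun q _ => ?_
    rw [show (consPath G hxy ⟨j, q⟩).1
      = SimpleGraph.Walk.cons j.2 (q.1.map (emb G x)) from rfl]
    rw [pathTerm_cons K hxy j.2 q.1]
  rw [Finset.sum_congr rfl fun j _ => h1 j]
  rw [← Finset.sum_subtype
    (Finset.univ.filter fun j : {i : ι // i ≠ x} => G.Adj x (j : ι)) (by simp) g,
    Finset.sum_filter]
end SumLemma


section Diag
variable {ι : Type} [Fintype ι] [DecidableEq ι]

lemma schur_diag {K : Matrix ι ι ℝ} (hK : K.PosDef) (x : ι) :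
    K.det * K⁻¹ x x = (K.submatrix (fun i : {i : ι // i ≠ x} => (i : ι))
      (fun i : {i : ι // i ≠ x} => (i : ι))).det := by
  classical
  set e : {i : ι // i = x} ⊕ {i : ι // ¬ i = x} ≃ ι := Equiv.sumCompl (· = x) with he
  set M : Matrix _ _ ℝ := K.submatrix e e with hM
  have hMdet : M.det = K.det := det_submatrix_equiv_self e K
  have hMinv : M⁻¹ = K⁻¹.submatrix e e := inv_submatrix_equiv K e e
  set A : Matrix {i : ι // ¬ i = x} {i : ι // ¬ i = x} ℝ := M.toBlocks₂₂ with hA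
  have hAeq : A = K.submatrix (fun i : {i : ι // i ≠ x} => (i : ι)) (fun i : {i : ι // i ≠ x} => (i : ι)) := rfl
  have hApd : A.PosDef := by
    rw [hAeq]; exact posDef_submatrix_of_injective hK _ Subtype.val_injective
  have hMpd : M.PosDef := posDef_submatrix_of_injective hK _ e.injective
  haveI iA : Invertible A := hApd.isUnit.invertible
  haveI hMi : Invertible M := hMpd.isUnit.invertible
  have hblocks : M = fromBlocks M.toBlocks₁₁ M.toBlocks₁₂ M.toBlocks₂₁ A :=
    (fromBlocks_toBlocks M).symm
  set a := M.toBlocks₁₁; set b := M.toBlocks₁₂; set c := M.toBlocks₂₁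
  haveI iFB : Invertible (fromBlocks a b c A) := hblocks ▸ hMi
  set s := a - b * ⅟A * c with hs
  haveI iS : Invertible s := invertibleOfFromBlocks₂₂Invertible a b c A
  have hdet : M.det = A.det * s.det := by
    rw [hblocks, det_fromBlocks₂₂]
  have hMinvF : ⅟(fromBlocks a b c A)
      = fromBlocks (⅟s) (-(⅟s * b * ⅟A))
          (-(⅟A * c * ⅟s)) (⅟A + ⅟A * c * ⅟s * b * ⅟A) :=
    invOf_fromBlocks₂₂_eq a b c A
  haveI : Unique {i : ι // i = x} := ⟨⟨⟨x, rfl⟩⟩, fun i => Subtype.ext i.2⟩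
  set u : {i : ι // i = x} := ⟨x, rfl⟩ with hu
  have hud : (default : {i : ι // i = x}) = u := Subsingleton.elim _ _
  have hdets : s.det = s u u := by rw [det_unique, hud]
  have hMinv2 : M⁻¹ = fromBlocks (⅟s) (-(⅟s * b * ⅟A))
      (-(⅟A * c * ⅟s)) (⅟A + ⅟A * c * ⅟s * b * ⅟A) := by
    rw [hblocks, ← invOf_eq_nonsing_inv]
    exact hMinvF
  have hsinv : s u u * ⅟s u u = 1 := by
    have h1 := congrFun (congrFun (mul_invOf_self s) u) u
    rw [Matrix.mul_apply] at h1
    rw [Fintype.sum_unique, hud] at h1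
    rw [h1, Matrix.one_apply_eq]
  have hexx : K⁻¹ x x = M⁻¹ (Sum.inl u) (Sum.inl u) := by rw [hMinv]; rfl
  rw [hexx, hMinv2, ← hMdet, hdet, hdets, fromBlocks_apply₁₁, ← hAeq]
  rw [mul_assoc, hsinv, mul_one]
end Diag

theorem aux_path_sum (N : ℕ) :
    ∀ (ι : Type) [Fintype ι] [DecidableEq ι], Fintype.card ι ≤ N →
    ∀ (K : Matrix ι ι ℝ), K.PosDef → K.IsSymm →
    ∀ (G : SimpleGraph ι) [DecidableRel G.Adj],
      (∀ i j : ι, i ≠ j → ¬ G.Adj i j → K i j = 0) →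
    ∀ x y : ι, K.det * (K⁻¹ x y) = ∑ p : G.Path x y, pathTerm K p.1 := by
  induction N with
  | zero =>
    intro ι _ _ hcard K _ _ G _ _ x y
    have : 0 < Fintype.card ι := Fintype.card_pos_iff.2 ⟨x⟩
    omega
  | succ N ih =>
    intro ι _ _ hcard K hK hsym G _ hAdj x y
    classical
    by_cases hxy : x = y
    · subst hxy
      haveI : Subsingleton (G.Path x x) :=
        ⟨fun a b => by rw [SimpleGraph.Path.loop_eq a, SimpleGraph.Path.loop_eq b]⟩
      rw [Fintype.sum_subsingleton (fun p : G.Path x x => pathTerm K p.1) (SimpleGraph.Path.nil)]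
      rw [schur_diag hK x]
      show _ = pathTerm K (SimpleGraph.Walk.nil : G.Walk x x)
      rw [pathTerm]
      simp only [SimpleGraph.Walk.length_nil, SimpleGraph.Walk.darts_nil, List.map_nil,
        List.prod_nil, pow_zero, one_mul]
      let eqv : {i : ι // i ∉ (SimpleGraph.Walk.nil : G.Walk x x).support} ≃ {i : ι // i ≠ x} :=
        { toFun := fun i => ⟨i.1, fun hix =>
            i.2 (show (i : ι) ∈ [x] from by rw [hix]; exact List.mem_singleton_self x)⟩
          invFun := fun i => ⟨i.1, show (i : ι) ∉ [x] by
            rw [List.mem_singleton]; exact i.2⟩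
          left_inv := fun i => Subtype.ext rfl
          right_inv := fun i => Subtype.ext rfl }
      rw [← Matrix.det_submatrix_equiv_self eqv.symm
        (K.submatrix (fun i : {i : ι // i ∉ (SimpleGraph.Walk.nil : G.Walk x x).support} => (i : ι))
          (fun i : {i : ι // i ∉ (SimpleGraph.Walk.nil : G.Walk x x).support} => (i : ι)))]
      rfl
    · have hyx : y ≠ x := fun h => hxy h.symm
      set A := K.submatrix (fun i : {i : ι // i ≠ x} => (i : ι))
        (fun i : {i : ι // i ≠ x} => (i : ι)) with hAdef
      have hApd : A.PosDef := posDef_submatrix_of_injective hK _ Subtype.val_injective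
      have hAsym : A.IsSymm := by
        rw [Matrix.IsSymm] at hsym ⊢
        rw [hAdef, transpose_submatrix, hsym]
      have hcard' : Fintype.card {i : ι // i ≠ x} ≤ N := by
        have h1 : Fintype.card {i : ι // ¬ i = x} = Fintype.card ι - Fintype.card {i : ι // i = x} :=
          Fintype.card_subtype_compl _
        have h2 : Fintype.card {i : ι // i = x} = 1 := Fintype.card_subtype_eq x
        have h3 : 0 < Fintype.card ι := Fintype.card_pos_iff.2 ⟨x⟩
        have h4 : Fintype.card {i : ι // i ≠ x} = Fintype.card {i : ι // ¬ i = x} := rfl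
        omega
      have hAdj' : ∀ i j : {i : ι // i ≠ x}, i ≠ j →
          ¬ (G.comap (Subtype.val : {i : ι // i ≠ x} → ι)).Adj i j → A i j = 0 := by
        intro i j hij h
        exact hAdj i.val j.val (fun hv => hij (Subtype.ext hv)) h
      have hIH := ih {i : ι // i ≠ x} hcard' A hApd hAsym
        (G.comap (Subtype.val : {i : ι // i ≠ x} → ι)) hAdj'
      rw [(schur_setup hK x y hyx).2]
      rw [sum_pathTerm K G hxy]
      rw [← Finset.sum_neg_distrib]
      refine Finset.sum_congr rfl fun j _ => ?_
      by_cases hadj : G.Adj x (j : ι)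
      · rw [if_pos hadj, ← hIH j ⟨y, hyx⟩, neg_mul]
        try ring
      · rw [if_neg hadj, hAdj x (j : ι) (fun h => j.2 h.symm) hadj]
        ring




open Finset in
/-- The path-sum expansion of the entries of the covariance matrix `Σ = K⁻¹` of a
multivariate normal distribution: `det K · Σ x y` is the sum over all simple paths `P`
from `x` to `y` in the support graph of `K` of
`(-1)^(m+1) · K_{p₁p₂} ⋯ K_{p_{m-1}p_m} · det (K with rows/columns of P removed)`,
where `m` is the number of vertices of `P` (so `(-1)^(m+1) = (-1)^length P`). -/
theorem det_mul_inv_entry_eq_sum_over_paths {n : ℕ}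
    (K : Matrix (Fin n) (Fin n) ℝ) (hK : K.PosDef) (hsym : K.IsSymm)
    (G : SimpleGraph (Fin n)) [DecidableRel G.Adj]
    (hAdj : ∀ i j, G.Adj i j ↔ i ≠ j ∧ K i j ≠ 0)
    (x y : Fin n) :
    K.det * (K⁻¹ x y) =
      ∑ p : G.Path x y,
        (-1 : ℝ) ^ (p.1.length) *
          ((p.1.darts.map fun d => K d.fst d.snd).prod) *
          (K.submatrix (fun i : {i : Fin n // i ∉ p.1.support} => (i : Fin n))
            (fun i : {i : Fin n // i ∉ p.1.support} => (i : Fin n))).det := by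
  have h := aux_path_sum (Fintype.card (Fin n)) (Fin n) le_rfl K hK hsym G
    (fun i j hij hadj => by
      by_contra hne
      exact hadj ((hAdj i j).2 ⟨hij, hne⟩)) x y
  rw [h]
  rfl
end

section
/- Let G=([n],E) be a block graph with all self loops, and K a symmetric matrix of indeterminates with K_{ij}=0 for (i,j)∉E. Let f_{xy} = det(K) times the (x,y) entry of K^{-1} (a polynomial in the entries of K). Then f_{xy} contains the monomial (-1)^{ℓ(x,y)} ∏_{(x',y')∈x↔y} k_{x'y'} ∏_{t∉x↔y} k_{tt} as one of its terms, where x↔y is the unique shortest path from x to y and ℓ(x,y) its length; moreover this monomial has strictly more diagonal factors k_{tt} than every other monomial of f_{xy}. -/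
open MvPolynomial

/-- The exponent vector of the shortest path monomial
`∏_{(x',y') ∈ p} k_{x'y'} ∏_{t ∉ p} k_{tt}` associated to a path `p`. -/
noncomputable def spExp {n : ℕ} {G : SimpleGraph (Fin n)} {x y : Fin n} (p : G.Walk x y) :
    Sym2 (Fin n) →₀ ℕ :=
  (p.darts.map fun d => Finsupp.single s(d.fst, d.snd) 1).sum +
    ∑ t ∈ Finset.univ.filter (fun t => t ∉ p.support), Finsupp.single s(t, t) 1

open Finset SimpleGraph

section Aux

/-! ### Walks of length one and uniqueness of shortest paths in clique sums -/

lemma SPM.walk_eq_of_length_one {V : Type*} {G : SimpleGraph V} {x y : V} (p q : G.Walk x y)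
    (hp : p.length = 1) (hq : q.length = 1) : p = q := by
  cases p with
  | nil => simp at hp
  | @cons _ v _ h p' =>
    cases q with
    | nil => simp at hq
    | @cons _ v' _ h' q' =>
      simp only [Walk.length_cons] at hp hq
      have hp0 : p'.length = 0 := by omega
      have hq0 : q'.length = 0 := by omega
      obtain rfl := Walk.eq_of_length_eq_zero hp0
      obtain rfl := Walk.eq_of_length_eq_zero hq0
      obtain rfl := Walk.nil_iff_eq_nil.mp (Walk.nil_iff_length_eq.mpr hp0)
      obtain rfl := Walk.nil_iff_eq_nil.mp (Walk.nil_iff_length_eq.mpr hq0)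
      rfl

theorem SPM.unique_shortest_path {V : Type*} {G : SimpleGraph V} [DecidableEq V] {S : Set V}
    (hS : G.IsCliqueSumOfCompletes S) :
    ∀ {x y : V} (p q : G.Walk x y), p.IsPath → q.IsPath →
      p.length = G.dist x y → q.length = G.dist x y →
      (∀ v ∈ p.support, v ∈ S) → (∀ v ∈ q.support, v ∈ S) → p = q := by
  induction hS with
  | complete S hcl =>
    intro x y p q hp hq hpl hql hpS hqS
    by_cases hxy : x = y
    · subst hxy
      rw [SimpleGraph.dist_self] at hpl hql
      have p0 : p = Walk.nil := Walk.nil_iff_eq_nil.mp (Walk.nil_iff_length_eq.mpr hpl)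
      have q0 : q = Walk.nil := Walk.nil_iff_eq_nil.mp (Walk.nil_iff_length_eq.mpr hql)
      rw [p0, q0]
    · have hadj : G.Adj x y := hcl (hpS x p.start_mem_support) (hpS y p.end_mem_support) hxy
      have hd1 : G.dist x y = 1 := SimpleGraph.dist_eq_one_iff_adj.mpr hadj
      rw [hd1] at hpl hql
      exact SPM.walk_eq_of_length_one p q hpl hql
  | sum A B c hAB hcA hcB hA hB hsep h1 h2 ih1 ih2 =>
    intro x y p q hp hq hpl hql hpS hqS
    have noB : ∀ {a b : V} (r : G.Walk a b), r.IsPath →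
        (∀ v ∈ r.support, v ∈ A ∪ B ∪ {c}) → a ∈ A ∪ {c} → b ∈ A ∪ {c} →
        ∀ v ∈ r.support, v ∈ A ∪ {c} := by
      intro a b r hr hrS ha hb v hv
      by_contra hvn
      have hvB : v ∈ B := by
        rcases hrS v hv with (h | h) | h
        · exact absurd (Or.inl h) hvn
        · exact h
        · exact absurd (Or.inr h) hvn
      have hc1 : c ∈ (r.takeUntil v hv).support := by
        rcases ha with ha | hac
        · exact hsep a ha v hvB _ (fun z hz => hrS z (Walk.support_takeUntil_subset _ _ hz))
        · rw [Set.mem_singleton_iff] at hac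
          subst hac
          exact Walk.start_mem_support _
      have hc2 : c ∈ (r.dropUntil v hv).support := by
        rcases hb with hb | hbc
        · have := hsep b hb v hvB (r.dropUntil v hv).reverse
            (fun z hz => hrS z (Walk.support_dropUntil_subset r hv
              (by rwa [Walk.support_reverse, List.mem_reverse] at hz)))
          rwa [Walk.support_reverse, List.mem_reverse] at this
        · rw [Set.mem_singleton_iff] at hbc
          subst hbc
          exact Walk.end_mem_support _
      have hvc : v ≠ c := fun h => hcB (h ▸ hvB)
      have hnd := hr.support_nodup
      rw [← r.take_spec hv, Walk.support_append, List.nodup_append] at hnd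
      have hc2' : c ∈ (r.dropUntil v hv).support.tail := by
        have hsc := (r.dropUntil v hv).support_eq_cons
        rw [hsc, List.mem_cons] at hc2
        exact hc2.resolve_left (Ne.symm hvc)
      exact hnd.2.2 c hc1 c hc2' rfl
    have noA : ∀ {a b : V} (r : G.Walk a b), r.IsPath →
        (∀ v ∈ r.support, v ∈ A ∪ B ∪ {c}) → a ∈ B ∪ {c} → b ∈ B ∪ {c} →
        ∀ v ∈ r.support, v ∈ B ∪ {c} := by
      intro a b r hr hrS ha hb v hv
      by_contra hvn
      have hvA : v ∈ A := by
        rcases hrS v hv with (h | h) | h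
        · exact h
        · exact absurd (Or.inl h) hvn
        · exact absurd (Or.inr h) hvn
      have hc1 : c ∈ (r.takeUntil v hv).support := by
        rcases ha with ha | hac
        · have := hsep v hvA a ha (r.takeUntil v hv).reverse
            (fun z hz => hrS z (Walk.support_takeUntil_subset r hv
              (by rwa [Walk.support_reverse, List.mem_reverse] at hz)))
          rwa [Walk.support_reverse, List.mem_reverse] at this
        · rw [Set.mem_singleton_iff] at hac
          subst hac
          exact Walk.start_mem_support _
      have hc2 : c ∈ (r.dropUntil v hv).support := by
        rcases hb with hb | hbc
        · exact hsep v hvA b hb _ (fun z hz => hrS z (Walk.support_dropUntil_subset _ _ hz))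
        · rw [Set.mem_singleton_iff] at hbc
          subst hbc
          exact Walk.end_mem_support _
      have hvc : v ≠ c := fun h => hcA (h ▸ hvA)
      have hnd := hr.support_nodup
      rw [← r.take_spec hv, Walk.support_append, List.nodup_append] at hnd
      have hc2' : c ∈ (r.dropUntil v hv).support.tail := by
        have hsc := (r.dropUntil v hv).support_eq_cons
        rw [hsc, List.mem_cons] at hc2
        exact hc2.resolve_left (Ne.symm hvc)
      exact hnd.2.2 c hc1 c hc2' rfl
    have cross : ∀ (a b : V), a ∈ A → b ∈ B → ∀ (p q : G.Walk a b), p.IsPath → q.IsPath →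
        p.length = G.dist a b → q.length = G.dist a b →
        (∀ v ∈ p.support, v ∈ A ∪ B ∪ {c}) → (∀ v ∈ q.support, v ∈ A ∪ B ∪ {c}) → p = q := by
      intro a b haA hbB p q hp hq hpl hql hpS hqS
      have hcp : c ∈ p.support := hsep a haA b hbB p hpS
      have hcq : c ∈ q.support := hsep a haA b hbB q hqS
      have e1 : (p.takeUntil c hcp).length + (p.dropUntil c hcp).length = p.length := by
        have := congrArg Walk.length (p.take_spec hcp)
        rwa [Walk.length_append] at this
      have e2 : (q.takeUntil c hcq).length + (q.dropUntil c hcq).length = q.length := by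
        have := congrArg Walk.length (q.take_spec hcq)
        rwa [Walk.length_append] at this
      have d1 := SimpleGraph.dist_le (p.takeUntil c hcp)
      have d2 := SimpleGraph.dist_le (p.dropUntil c hcp)
      have d1' := SimpleGraph.dist_le (q.takeUntil c hcq)
      have d2' := SimpleGraph.dist_le (q.dropUntil c hcq)
      have dtri : G.dist a b ≤ G.dist a c + G.dist c b := by
        obtain ⟨r1, _, hr1l⟩ := Reachable.exists_path_of_dist ((p.takeUntil c hcp).reachable)
        obtain ⟨r2, _, hr2l⟩ := Reachable.exists_path_of_dist ((p.dropUntil c hcp).reachable)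
        have := SimpleGraph.dist_le (r1.append r2)
        rwa [Walk.length_append, hr1l, hr2l] at this
      have l1 : (p.takeUntil c hcp).length = G.dist a c := by omega
      have l2 : (p.dropUntil c hcp).length = G.dist c b := by omega
      have l1' : (q.takeUntil c hcq).length = G.dist a c := by omega
      have l2' : (q.dropUntil c hcq).length = G.dist c b := by omega
      have s1 : ∀ v ∈ (p.takeUntil c hcp).support, v ∈ A ∪ {c} :=
        noB _ (hp.takeUntil hcp) (fun z hz => hpS z (Walk.support_takeUntil_subset _ _ hz))
          (Or.inl haA) (Or.inr rfl)
      have s2 : ∀ v ∈ (p.dropUntil c hcp).support, v ∈ B ∪ {c} :=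
        noA _ (hp.dropUntil hcp) (fun z hz => hpS z (Walk.support_dropUntil_subset _ _ hz))
          (Or.inr rfl) (Or.inl hbB)
      have s1' : ∀ v ∈ (q.takeUntil c hcq).support, v ∈ A ∪ {c} :=
        noB _ (hq.takeUntil hcq) (fun z hz => hqS z (Walk.support_takeUntil_subset _ _ hz))
          (Or.inl haA) (Or.inr rfl)
      have s2' : ∀ v ∈ (q.dropUntil c hcq).support, v ∈ B ∪ {c} :=
        noA _ (hq.dropUntil hcq) (fun z hz => hqS z (Walk.support_dropUntil_subset _ _ hz))
          (Or.inr rfl) (Or.inl hbB)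
      have eq1 : p.takeUntil c hcp = q.takeUntil c hcq :=
        ih1 _ _ (hp.takeUntil hcp) (hq.takeUntil hcq) l1 l1' s1 s1'
      have eq2 : p.dropUntil c hcp = q.dropUntil c hcq :=
        ih2 _ _ (hp.dropUntil hcp) (hq.dropUntil hcq) l2 l2' s2 s2'
      rw [← p.take_spec hcp, ← q.take_spec hcq, eq1, eq2]
    have routeA : x ∈ A ∪ {c} → y ∈ A ∪ {c} → p = q := fun hxu hyu =>
      ih1 p q hp hq hpl hql (noB p hp hpS hxu hyu) (noB q hq hqS hxu hyu)
    have routeB : x ∈ B ∪ {c} → y ∈ B ∪ {c} → p = q := fun hxu hyu =>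
      ih2 p q hp hq hpl hql (noA p hp hpS hxu hyu) (noA q hq hqS hxu hyu)
    have hrev : ∀ (hy : y ∈ A) (hx : x ∈ B), p = q := by
      intro hyA hxB
      have hrq := cross y x hyA hxB p.reverse q.reverse hp.reverse hq.reverse
        (by rw [Walk.length_reverse, SimpleGraph.dist_comm]; exact hpl)
        (by rw [Walk.length_reverse, SimpleGraph.dist_comm]; exact hql)
        (fun v hv => hpS v (by rwa [Walk.support_reverse, List.mem_reverse] at hv))
        (fun v hv => hqS v (by rwa [Walk.support_reverse, List.mem_reverse] at hv))
      have := congrArg Walk.reverse hrq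
      rwa [Walk.reverse_reverse, Walk.reverse_reverse] at this
    rcases hpS x p.start_mem_support with (hxA | hxB) | hxc
    · rcases hpS y p.end_mem_support with (hyA | hyB) | hyc
      · exact routeA (Or.inl hxA) (Or.inl hyA)
      · exact cross x y hxA hyB p q hp hq hpl hql hpS hqS
      · exact routeA (Or.inl hxA) (Or.inr hyc)
    · rcases hpS y p.end_mem_support with (hyA | hyB) | hyc
      · exact hrev hyA hxB
      · exact routeB (Or.inl hxB) (Or.inl hyB)
      · exact routeB (Or.inl hxB) (Or.inr hyc)
    · rcases hpS y p.end_mem_support with (hyA | hyB) | hyc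
      · exact routeA (Or.inr hxc) (Or.inl hyA)
      · exact routeB (Or.inr hxc) (Or.inl hyB)
      · exact routeA (Or.inr hxc) (Or.inr hyc)

/-! ### The permutation associated to a path -/

variable {n : ℕ} {G : SimpleGraph (Fin n)}

noncomputable def walkPerm : {x y : Fin n} → G.Walk x y → Equiv.Perm (Fin n)
  | _, _, .nil => 1
  | _, _, .cons (v := v) (u := x) _h q => walkPerm q * Equiv.swap x v

@[simp] lemma walkPerm_nil {x : Fin n} : walkPerm (.nil : G.Walk x x) = 1 := rfl

lemma walkPerm_cons {x v y : Fin n} (h : G.Adj x v) (q : G.Walk v y) :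
    walkPerm (.cons h q) = walkPerm q * Equiv.swap x v := rfl

lemma walkPerm_fixed {x y : Fin n} (p : G.Walk x y) {z : Fin n} (hz : z ∉ p.support) :
    walkPerm p z = z := by
  induction p with
  | nil => rfl
  | cons h q ih =>
    rw [SimpleGraph.Walk.support_cons] at hz
    simp only [List.mem_cons, not_or] at hz
    rw [walkPerm_cons, Equiv.Perm.mul_apply, Equiv.swap_apply_of_ne_of_ne hz.1
      (fun hzv => hz.2 (hzv ▸ q.start_mem_support))]
    exact ih hz.2

lemma walkPerm_start {x y : Fin n} (p : G.Walk x y) : walkPerm p x = y := by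
  induction p with
  | nil => rfl
  | cons h q ih => rw [walkPerm_cons, Equiv.Perm.mul_apply, Equiv.swap_apply_left]; exact ih

lemma walkPerm_sign {x y : Fin n} (p : G.Walk x y) :
    Equiv.Perm.sign (walkPerm p) = (-1) ^ p.length := by
  induction p with
  | nil => simp
  | cons h q ih =>
    rw [walkPerm_cons, map_mul, ih, Equiv.Perm.sign_swap h.ne, Walk.length_cons, pow_succ]

lemma walkPerm_dart {x y : Fin n} (p : G.Walk x y) (hp : p.IsPath) {d : G.Dart}
    (hd : d ∈ p.darts) : walkPerm p d.snd = d.fst := by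
  induction p with
  | nil => simp at hd
  | @cons a b c h q ih =>
    rw [Walk.cons_isPath_iff] at hp
    rw [Walk.darts_cons, List.mem_cons] at hd
    rw [walkPerm_cons, Equiv.Perm.mul_apply]
    rcases hd with rfl | hd
    · simpa [Equiv.swap_apply_right] using walkPerm_fixed q hp.2
    · have hsnd : d.snd ∈ q.support.tail := by
        rw [← Walk.map_snd_darts]; exact List.mem_map_of_mem hd
      have h1 : d.snd ≠ a := fun hzx => hp.2 (hzx ▸ List.mem_of_mem_tail hsnd)
      have h2 : d.snd ≠ b := by
        intro hzv
        have := hp.1.support_nodup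
        rw [q.support_eq_cons, List.nodup_cons] at this
        exact this.1 (hzv ▸ hsnd)
      rw [Equiv.swap_apply_of_ne_of_ne h1 h2]
      exact ih hp.1 hd

/-! ### The exponent of a permutation -/

noncomputable def permExp (x : Fin n) (σ : Equiv.Perm (Fin n)) : Sym2 (Fin n) →₀ ℕ :=
  ∑ j ∈ univ.erase x, Finsupp.single s(σ j, j) 1

lemma tail_nodup {x y : Fin n} (p : G.Walk x y) (hp : p.IsPath) : p.support.tail.Nodup :=
  List.Nodup.of_cons (p.support_eq_cons ▸ hp.support_nodup)

lemma permExp_walkPerm {x y : Fin n} (p : G.Walk x y) (hp : p.IsPath) :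
    permExp x (walkPerm p) = spExp p := by
  classical
  have hxtail : ∀ j ∈ p.support.tail, j ≠ x := by
    intro j hj hjx
    have := hp.support_nodup
    rw [p.support_eq_cons, List.nodup_cons] at this
    exact this.1 (hjx ▸ hj)
  have hsplit : (univ.erase x : Finset (Fin n)) =
      p.support.tail.toFinset ∪ univ.filter (fun t => t ∉ p.support) := by
    ext j
    simp only [Finset.mem_erase, Finset.mem_union, List.mem_toFinset, Finset.mem_filter,
      Finset.mem_univ, true_and, and_true]
    constructor
    · intro hjx
      by_cases hjs : j ∈ p.support
      · left
        rw [p.support_eq_cons] at hjs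
        exact (List.mem_cons.mp hjs).resolve_left hjx
      · right; exact hjs
    · rintro (hj | hj)
      · exact hxtail j hj
      · exact fun hjx => hj (by rw [hjx]; exact p.start_mem_support)
  have hdisj : Disjoint (p.support.tail.toFinset)
      (univ.filter (fun t => t ∉ p.support)) := by
    rw [Finset.disjoint_left]
    intro j hj hj'
    rw [List.mem_toFinset] at hj
    rw [Finset.mem_filter] at hj'
    exact hj'.2 (List.mem_of_mem_tail hj)
  rw [permExp, hsplit, Finset.sum_union hdisj, spExp]
  congr 1
  · rw [List.sum_toFinset _ (tail_nodup p hp), ← Walk.map_snd_darts, List.map_map]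
    congr 1
    apply List.map_congr_left
    intro d hd
    simp only [Function.comp_apply]
    rw [walkPerm_dart p hp hd]
  · exact Finset.sum_congr rfl fun t ht => by
      rw [walkPerm_fixed p (Finset.mem_filter.mp ht).2]

lemma sum_diag_permExp (σ : Equiv.Perm (Fin n)) (x : Fin n) :
    ∑ t : Fin n, (permExp x σ) s(t,t) = (univ.filter fun j => j ≠ x ∧ σ j = j).card := by
  classical
  simp only [permExp, Finsupp.finset_sum_apply, Finsupp.single_apply]
  rw [Finset.sum_comm]
  have e1 : ∀ j t : Fin n, (if s(σ j, j) = s(t,t) then (1:ℕ) else 0)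
      = if j = t then (if σ j = j then 1 else 0) else 0 := by
    intro j t
    by_cases h1 : j = t
    · subst h1; simp [Sym2.eq_iff]
    · simp [Sym2.eq_iff, h1]
  simp only [e1]
  rw [Finset.card_filter]
  rw [← Finset.filter_ne' (univ : Finset (Fin n)) x, Finset.sum_filter]
  refine Finset.sum_congr rfl fun j _ => ?_
  rw [Finset.sum_ite_eq]
  simp [ite_and]

lemma sum_diag_spExp {x y : Fin n} (p : G.Walk x y) (hp : p.IsPath) :
    (∑ t : Fin n, (spExp p) s(t,t)) + (p.length + 1) = n := by
  classical
  rw [← permExp_walkPerm p hp, sum_diag_permExp]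
  have hfix : (univ.filter fun j => j ≠ x ∧ walkPerm p j = j) = univ \ p.support.toFinset := by
    ext j
    simp only [Finset.mem_filter, Finset.mem_univ, true_and, Finset.mem_sdiff, List.mem_toFinset]
    constructor
    · rintro ⟨hjx, hfj⟩
      intro hjs
      rw [p.support_eq_cons] at hjs
      rcases List.mem_cons.mp hjs with h | h
      · exact hjx h
      · obtain ⟨d, hd, rfl⟩ := by
          rw [← Walk.map_snd_darts] at h; exact List.mem_map.mp h
        exact d.adj.ne' (by rw [walkPerm_dart p hp hd] at hfj; exact hfj.symm)
    · intro hjs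
      exact ⟨fun hjx => hjs (by rw [hjx]; exact p.start_mem_support), walkPerm_fixed p hjs⟩
  rw [hfix, Finset.card_sdiff_of_subset (Finset.subset_univ _), List.toFinset_card_of_nodup hp.support_nodup,
    Walk.length_support, Finset.card_univ, Fintype.card_fin]
  have hle : p.length + 1 ≤ n := by
    have := hp.support_nodup.length_le_card
    rwa [Walk.length_support, Fintype.card_fin] at this
  omega

/-! ### Orbit walks of admissible permutations -/

lemma exists_orbit_walk (σ : Equiv.Perm (Fin n)) (x : Fin n)
    (hadm : ∀ j, j ≠ x → σ j = j ∨ G.Adj (σ j) j) :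
    ∀ (m : ℕ) (u : Fin n), (σ ^ m) u = x → (∀ i < m, (σ ^ i) u ≠ x) →
    ∃ w : G.Walk u x, w.length = m ∧
      w.support = (List.range (m+1)).map (fun i => (σ ^ i) u) ∧
      (∀ d ∈ w.darts, σ d.fst = d.snd) := by
  intro m
  induction m with
  | zero =>
    intro u hm _
    simp only [pow_zero, Equiv.Perm.coe_one, id_eq] at hm
    subst hm
    exact ⟨.nil, rfl, by simp [List.range_succ], by simp⟩
  | succ m ih =>
    intro u hm hmin
    have hu : u ≠ x := by simpa using hmin 0 (Nat.succ_pos m)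
    have hσu : σ u ≠ u := by
      intro h
      exact hu (by rw [← hm, Equiv.Perm.pow_apply_eq_self_of_apply_eq_self h])
    have hadj : G.Adj u (σ u) := ((hadm u hu).resolve_left hσu).symm
    have hm' : (σ ^ m) (σ u) = x := by
      rw [← hm, pow_succ, Equiv.Perm.mul_apply]
    have hmin' : ∀ i < m, (σ ^ i) (σ u) ≠ x := by
      intro i hi
      have := hmin (i+1) (Nat.succ_lt_succ hi)
      rwa [pow_succ, Equiv.Perm.mul_apply] at this
    obtain ⟨w', hl', hs', hd'⟩ := ih (σ u) hm' hmin'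
    refine ⟨.cons hadj w', by simp [hl'], ?_, ?_⟩
    · rw [Walk.support_cons, hs']
      conv_rhs => rw [List.range_succ_eq_map, List.map_cons, List.map_map]
      congr 1
    · intro d hd
      rw [Walk.darts_cons, List.mem_cons] at hd
      rcases hd with rfl | hd
      · rfl
      · exact hd' d hd

lemma orbit_nodup (σ : Equiv.Perm (Fin n)) (x u : Fin n) (m : ℕ) (hm : (σ ^ m) u = x)
    (hmin : ∀ i < m, (σ ^ i) u ≠ x) :
    ((List.range (m+1)).map (fun i => (σ ^ i) u)).Nodup := by
  refine List.Nodup.map_on ?_ List.nodup_range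
  intro i hi j hj hij
  rw [List.mem_range] at hi hj
  by_contra hne
  wlog h : i < j generalizing i j
  · exact this j hj i hi hij.symm (Ne.symm hne) (by omega)
  have key : (σ ^ (m - j + i)) u = x := by
    have h2 : (σ ^ (m - j + i)) u = (σ ^ (m - j + j)) u := by
      rw [pow_add, pow_add, Equiv.Perm.mul_apply, Equiv.Perm.mul_apply, hij]
    rw [h2, Nat.sub_add_cancel (by omega), hm]
  exact hmin (m - j + i) (by omega) key

/-! ### The main combinatorial bound -/

lemma perm_diag_bound {x y : Fin n}
    (hU : ∀ (p q : G.Walk x y), p.IsPath → q.IsPath →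
      p.length = G.dist x y → q.length = G.dist x y → p = q)
    (p : G.Walk x y)
    (hp : p.IsPath) (hpl : p.length = G.dist x y) (σ : Equiv.Perm (Fin n))
    (hσx : σ x = y) (hadm : ∀ j, j ≠ x → σ j = j ∨ G.Adj (σ j) j) :
    (Finset.univ.filter fun j => j ≠ x ∧ σ j = j).card + (p.length + 1) ≤ n ∧
    ((Finset.univ.filter fun j => j ≠ x ∧ σ j = j).card + (p.length + 1) = n →
      σ = walkPerm p) := by
  classical
  by_cases hxy : x = y
  · subst hxy
    have hl0 : p.length = 0 := by rw [hpl, SimpleGraph.dist_self]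
    obtain rfl : p = Walk.nil := Walk.nil_iff_eq_nil.mp (Walk.nil_iff_length_eq.mpr hl0)
    have hsub : (Finset.univ.filter fun j => j ≠ x ∧ σ j = j) ⊆ Finset.univ.erase x := by
      intro j hj
      rw [Finset.mem_filter] at hj
      exact Finset.mem_erase.mpr ⟨hj.2.1, Finset.mem_univ j⟩
    have hcard : (Finset.univ.filter fun j => j ≠ x ∧ σ j = j).card ≤ n - 1 := by
      have := Finset.card_le_card hsub
      rwa [Finset.card_erase_of_mem (Finset.mem_univ x), Finset.card_univ,
        Fintype.card_fin] at this
    have hpos : 0 < n := x.pos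
    constructor
    · simp only [Walk.length_nil]; omega
    · intro heq
      simp only [Walk.length_nil] at heq
      have hfull : (Finset.univ.filter fun j => j ≠ x ∧ σ j = j) = Finset.univ.erase x :=
        Finset.eq_of_subset_of_card_le hsub (by
          rw [Finset.card_erase_of_mem (Finset.mem_univ x), Finset.card_univ,
            Fintype.card_fin]; omega)
      rw [walkPerm_nil]
      refine Equiv.ext fun z => ?_
      by_cases hz : z = x
      · subst hz; simpa using hσx
      · have hmem : z ∈ Finset.univ.erase x := Finset.mem_erase.mpr ⟨hz, Finset.mem_univ z⟩
        rw [← hfull, Finset.mem_filter] at hmem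
        simpa using hmem.2.2
  · have hex : ∃ m, (σ ^ m) y = x := by
      refine ⟨orderOf σ - 1, ?_⟩
      have ho : 1 ≤ orderOf σ := orderOf_pos σ
      calc (σ ^ (orderOf σ - 1)) y = (σ ^ (orderOf σ - 1) * σ) x := by
            rw [Equiv.Perm.mul_apply, hσx]
        _ = (σ ^ orderOf σ) x := by rw [← pow_succ, Nat.sub_add_cancel ho]
        _ = x := by rw [pow_orderOf_eq_one]; rfl
    have hm := Nat.find_spec hex
    have hmin : ∀ i < Nat.find hex, (σ ^ i) y ≠ x := fun i hi => Nat.find_min hex hi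
    obtain ⟨w, hlw, hsw, hdw⟩ := exists_orbit_walk σ x hadm (Nat.find hex) y hm hmin
    have hnodup : w.support.Nodup := by rw [hsw]; exact orbit_nodup σ x y _ hm hmin
    have hfixmem : ∀ v ∈ w.support, σ v = v → v = x := by
      intro v hv hfv
      rw [hsw, List.mem_map] at hv
      obtain ⟨i, hi, rfl⟩ := hv
      rw [List.mem_range] at hi
      have h1 : (σ ^ (Nat.find hex - i)) ((σ ^ i) y) = (σ ^ i) y :=
        Equiv.Perm.pow_apply_eq_self_of_apply_eq_self hfv _
      have h2 : (σ ^ (Nat.find hex)) y = (σ ^ i) y := by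
        rw [← Nat.sub_add_cancel (by omega : i ≤ Nat.find hex), pow_add,
          Equiv.Perm.mul_apply, h1]
      rw [hm] at h2
      exact h2.symm
    set Fix := Finset.univ.filter (fun j => j ≠ x ∧ σ j = j) with hFix
    set T := w.support.toFinset with hT
    have hdisj : Disjoint Fix T := by
      rw [Finset.disjoint_left]
      intro j hj hjT
      rw [hFix, Finset.mem_filter] at hj
      rw [hT, List.mem_toFinset] at hjT
      exact hj.2.1 (hfixmem j hjT hj.2.2)
    have hTcard : T.card = w.length + 1 := by
      rw [hT, List.toFinset_card_of_nodup hnodup, Walk.length_support]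
    have hunion : Fix.card + T.card ≤ n := by
      have h2 := Finset.card_le_card (Finset.subset_univ (Fix ∪ T))
      rwa [Finset.card_union_of_disjoint hdisj, Finset.card_univ, Fintype.card_fin] at h2
    have hdistw : p.length ≤ w.length := by
      have h3 := SimpleGraph.dist_le w.reverse
      rw [Walk.length_reverse] at h3
      rw [hpl]; exact h3
    refine ⟨by omega, ?_⟩
    intro heq
    have hwl : w.length = p.length := by omega
    have hcardU : Fix.card + T.card = n := by omega
    have hFT : Fix ∪ T = Finset.univ := Finset.eq_univ_of_card _ (by
      rw [Finset.card_union_of_disjoint hdisj, Fintype.card_fin]; omega)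
    have hrevpath : w.reverse.IsPath := by
      rw [Walk.isPath_def, Walk.support_reverse]; exact List.nodup_reverse.mpr hnodup
    have hrevlen : w.reverse.length = G.dist x y := by rw [Walk.length_reverse, hwl, hpl]
    have hpw : w.reverse = p := hU w.reverse p hrevpath hp hrevlen hpl
    refine Equiv.ext fun z => ?_
    by_cases hz : z ∈ p.support
    · rw [p.support_eq_cons, List.mem_cons] at hz
      rcases hz with rfl | hz
      · rw [hσx, walkPerm_start]
      · rw [← Walk.map_snd_darts, List.mem_map] at hz
        obtain ⟨d, hd, rfl⟩ := hz
        rw [walkPerm_dart p hp hd]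
        have hd' : d ∈ (w.darts.map Dart.symm).reverse := by
          rw [← Walk.darts_reverse, hpw]; exact hd
        rw [List.mem_reverse, List.mem_map] at hd'
        obtain ⟨e, he, rfl⟩ := hd'
        have h5 := hdw e he
        simpa using h5
    · rw [walkPerm_fixed p hz]
      have hzT : z ∉ T := by
        rw [hT, List.mem_toFinset]
        intro hzw
        apply hz
        rw [← hpw, Walk.support_reverse, List.mem_reverse]
        exact hzw
      have hzU : z ∈ Fix ∪ T := hFT ▸ Finset.mem_univ z
      rcases Finset.mem_union.mp hzU with hzF | hzT'
      · rw [hFix, Finset.mem_filter] at hzF; exact hzF.2.2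
      · exact absurd hzT' hzT

/-! ### The adjugate expansion -/

lemma prod_X_eq_monomial (s : Finset (Fin n)) (f : Fin n → Sym2 (Fin n)) :
    (∏ i ∈ s, (X (f i) : MvPolynomial (Sym2 (Fin n)) ℝ)) =
      monomial (∑ i ∈ s, Finsupp.single (f i) 1) 1 := by
  classical
  induction s using Finset.induction with
  | empty => simp
  | @insert a s h ih =>
    rw [Finset.prod_insert h, Finset.sum_insert h, ih, monomial_single_add, pow_one]

lemma adjugate_expand [DecidableRel G.Adj] (x y : Fin n)
    (K : Matrix (Fin n) (Fin n) (MvPolynomial (Sym2 (Fin n)) ℝ))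
    (hK : K = fun i j => if i = j ∨ G.Adj i j then X s(i, j) else 0) :
    K.adjugate x y = ∑ σ ∈ Finset.univ.filter
        (fun σ : Equiv.Perm (Fin n) => σ x = y ∧ ∀ j, j ≠ x → σ j = j ∨ G.Adj (σ j) j),
      (monomial (permExp x σ)) (((Equiv.Perm.sign σ : ℤ) : ℝ)) := by
  classical
  rw [Matrix.adjugate_apply, Matrix.det_apply', Finset.sum_filter]
  refine Finset.sum_congr rfl fun σ _ => ?_
  by_cases h1 : σ x = y
  · by_cases h2 : ∀ j, j ≠ x → σ j = j ∨ G.Adj (σ j) j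
    · rw [if_pos ⟨h1, h2⟩]
      have hprod : ∏ i, (K.updateRow y (Pi.single x 1)) (σ i) i
          = monomial (permExp x σ) 1 := by
        rw [← Finset.mul_prod_erase Finset.univ _ (Finset.mem_univ x)]
        have hx_ : (K.updateRow y (Pi.single x 1)) (σ x) x = 1 := by
          rw [h1, Matrix.updateRow_self, Pi.single_eq_same]
        rw [hx_, one_mul]
        have hstep : ∀ i ∈ Finset.univ.erase x,
            (K.updateRow y (Pi.single x 1)) (σ i) i = X s(σ i, i) := by
          intro i hi
          rw [Finset.mem_erase] at hi
          have hne : σ i ≠ y := fun hh => hi.1 (σ.injective (by rw [hh, h1]))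
          rw [Matrix.updateRow_ne hne, hK]
          exact if_pos (h2 i hi.1)
        rw [Finset.prod_congr rfl hstep, prod_X_eq_monomial, permExp]
      rw [hprod]
      have hcast : ((Equiv.Perm.sign σ : ℤ) : MvPolynomial (Sym2 (Fin n)) ℝ)
          = C (((Equiv.Perm.sign σ : ℤ) : ℝ)) := by
        rw [← map_intCast (C : ℝ →+* MvPolynomial (Sym2 (Fin n)) ℝ)]
      rw [hcast, C_mul_monomial, mul_one]
    · rw [if_neg (fun hc => h2 hc.2)]
      push_neg at h2
      obtain ⟨j, hjx, hj1, hj2⟩ := h2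
      have hne : σ j ≠ y := fun hh => hjx (σ.injective (by rw [hh, h1]))
      have hz : (K.updateRow y (Pi.single x 1)) (σ j) j = 0 := by
        rw [Matrix.updateRow_ne hne, hK]
        exact if_neg (fun hc => hc.elim hj1 hj2)
      have hzero : (∏ i : Fin n, (K.updateRow y (Pi.single x 1)) (σ i) i) = 0 :=
        Finset.prod_eq_zero (Finset.mem_univ j) hz
      rw [hzero, mul_zero]
  · rw [if_neg (fun hc => h1 hc.1)]
    have hi0 : σ (σ⁻¹ y) = y := σ.apply_symm_apply y
    have hne : σ⁻¹ y ≠ x := fun hh => h1 (by rw [← hh, hi0])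
    have hz : (K.updateRow y (Pi.single x 1)) (σ (σ⁻¹ y)) (σ⁻¹ y) = 0 := by
      rw [hi0, Matrix.updateRow_self, Pi.single_eq_of_ne hne]
    have hzero : (∏ i : Fin n, (K.updateRow y (Pi.single x 1)) (σ i) i) = 0 :=
      Finset.prod_eq_zero (Finset.mem_univ (σ⁻¹ y)) hz
    rw [hzero, mul_zero]

end Aux

/-- For a block graph `G` with loops at every vertex and generic symmetric matrix `K`
supported on `G`, the cofactor polynomial `f_{xy} = det K · (K⁻¹)_{xy}` (i.e. the
`(x,y)` entry of the adjugate) contains the shortest path monomial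
`(-1)^{ℓ(x,y)} ∏_{(x',y') ∈ x↔y} k_{x'y'} ∏_{t ∉ x↔y} k_{tt}`, and this monomial has
strictly more diagonal factors `k_{tt}` than every other monomial of `f_{xy}`. -/
theorem shortest_path_monomial_of_cofactor {n : ℕ} (G : SimpleGraph (Fin n))
    [DecidableRel G.Adj] (hG : G.IsBlockGraph) (x y : Fin n)
    (p : G.Walk x y) (hp : p.IsPath ∧ p.length = G.dist x y)
    (K : Matrix (Fin n) (Fin n) (MvPolynomial (Sym2 (Fin n)) ℝ))
    (hK : K = fun i j => if i = j ∨ G.Adj i j then X s(i, j) else 0) :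
    MvPolynomial.coeff (spExp p) (K.adjugate x y) = (-1 : ℝ) ^ p.length ∧
      ∀ d' ∈ (K.adjugate x y).support, d' ≠ spExp p →
        (∑ t : Fin n, d' s(t, t)) < (∑ t : Fin n, (spExp p) s(t, t)) := by
  classical
  obtain ⟨hp1, hp2⟩ := hp
  have hU : ∀ (p' q' : G.Walk x y), p'.IsPath → q'.IsPath →
      p'.length = G.dist x y → q'.length = G.dist x y → p' = q' := by
    intro p' q' a b cc dd
    exact SPM.unique_shortest_path (hG x) p' q' a b cc dd
      (fun v hv => (p'.takeUntil v hv).reachable)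
      (fun v hv => (q'.takeUntil v hv).reachable)
  have hexp := adjugate_expand x y K hK
  have hadm_wp : ∀ j, j ≠ x → walkPerm p j = j ∨ G.Adj (walkPerm p j) j := by
    intro j hjx
    by_cases hj : j ∈ p.support
    · rw [p.support_eq_cons, List.mem_cons] at hj
      rcases hj with rfl | hj
      · exact absurd rfl hjx
      · rw [← Walk.map_snd_darts, List.mem_map] at hj
        obtain ⟨d, hd, rfl⟩ := hj
        rw [walkPerm_dart p hp1 hd]
        exact Or.inr d.adj
    · exact Or.inl (walkPerm_fixed p hj)
  have hwpS : walkPerm p ∈ Finset.univ.filter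
      (fun σ : Equiv.Perm (Fin n) => σ x = y ∧ ∀ j, j ≠ x → σ j = j ∨ G.Adj (σ j) j) :=
    Finset.mem_filter.mpr ⟨Finset.mem_univ _, walkPerm_start p, hadm_wp⟩
  have hzero : ∀ b ∈ Finset.univ.filter
      (fun σ : Equiv.Perm (Fin n) => σ x = y ∧ ∀ j, j ≠ x → σ j = j ∨ G.Adj (σ j) j),
      b ≠ walkPerm p →
      (if permExp x b = spExp p then ((Equiv.Perm.sign b : ℤ) : ℝ) else 0) = 0 := by
    intro b hb hbne
    rw [if_neg]
    intro hEb
    apply hbne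
    rw [Finset.mem_filter] at hb
    refine (perm_diag_bound hU p hp1 hp2 b hb.2.1 hb.2.2).2 ?_
    have hd1 := sum_diag_permExp b x
    rw [hEb] at hd1
    have hd2 := sum_diag_spExp p hp1
    omega
  constructor
  · rw [hexp, coeff_sum]
    rw [Finset.sum_congr rfl (fun σ _ => coeff_monomial (spExp p) (permExp x σ) _)]
    rw [Finset.sum_eq_single_of_mem (walkPerm p) hwpS hzero]
    rw [if_pos (permExp_walkPerm p hp1), walkPerm_sign]
    push_cast
    ring
  · intro d' hd' hne
    rw [MvPolynomial.mem_support_iff] at hd'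
    rw [hexp, coeff_sum] at hd'
    obtain ⟨σ, hσmem, hσne⟩ := Finset.exists_ne_zero_of_sum_ne_zero hd'
    rw [coeff_monomial] at hσne
    have hEσ : permExp x σ = d' := by
      by_contra hc; rw [if_neg hc] at hσne; exact hσne rfl
    rw [Finset.mem_filter] at hσmem
    have hMCL := perm_diag_bound hU p hp1 hp2 σ hσmem.2.1 hσmem.2.2
    have hd1 := sum_diag_permExp σ x
    rw [hEσ] at hd1
    have hd2 := sum_diag_spExp p hp1
    by_cases heq : (Finset.univ.filter fun j => j ≠ x ∧ σ j = j).card + (p.length + 1) = n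
    · exfalso
      have hb := hMCL.2 heq
      apply hne
      rw [← hEσ, hb, permExp_walkPerm p hp1]
    · have hlt := lt_of_le_of_ne hMCL.1 heq
      omega
end

section
/- Let K_n° be the complete graph on n vertices embedded with vertices on a circle, with a loop at each vertex, and define the weight w(σ_{ij}) of the edge (i,j) to be the number of edges of K_n° (including loops) that do not intersect (i,j), where two edges intersect if they share a vertex or cross in the circular embedding. Then for vertices i<j<k<l in circular order, w(σ_{ij}) + w(σ_{kl}) > w(σ_{ik}) + w(σ_{jl}); explicitly, the difference equals 2p_2p_4 + 2(p_2+p_4) + 2 where p_2 and p_4 are the numbers of vertices strictly between j,k and between l,i respectively on the circle. -/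
open Classical in
/-- Two chords `(i,j)` and `(k,l)` (with `i < j`, `k < l`) of the circularly embedded
complete graph cross each other. -/
def crossChords {n : ℕ} (i j k l : Fin n) : Prop :=
  (i < k ∧ k < j ∧ j < l) ∨ (k < i ∧ i < l ∧ l < j)

open Classical in
/-- Two edges (or loops) of the circularly embedded complete graph with loops `K_n°`
intersect: they share a vertex or cross in the embedding. -/
def edgesIntersect {n : ℕ} (e f : Sym2 (Fin n)) : Prop :=
  (∃ v, v ∈ e ∧ v ∈ f) ∨
    crossChords (min e.out.1 e.out.2) (max e.out.1 e.out.2)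
      (min f.out.1 f.out.2) (max f.out.1 f.out.2) ∨
    crossChords (min f.out.1 f.out.2) (max f.out.1 f.out.2)
      (min e.out.1 e.out.2) (max e.out.1 e.out.2)

open Classical in
/-- The weight of the edge `e`: the number of edges (including loops) of `K_n°`
that do not intersect `e`. -/
noncomputable def edgeWeight {n : ℕ} (e : Sym2 (Fin n)) : ℕ :=
  (Finset.univ.filter (fun f : Sym2 (Fin n) => ¬ edgesIntersect e f)).card

lemma out_minmax {n} (a b : Fin n) (hab : a ≤ b) (e : Sym2 (Fin n)) (he : e = s(a,b)) :
    min e.out.1 e.out.2 = a ∧ max e.out.1 e.out.2 = b := by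
  have h : s(e.out.1, e.out.2) = e := Quot.out_eq e
  have h' : (e.out.1 = a ∧ e.out.2 = b) ∨ (e.out.1 = b ∧ e.out.2 = a) := by
    rw [← Sym2.eq_iff, he]; exact_mod_cast (he ▸ h)
  rcases h' with ⟨h1, h2⟩ | ⟨h1, h2⟩ <;> rw [h1, h2] <;>
    constructor <;> simp [min_def, max_def, hab]

open Classical in
lemma nonintersect_filter {n} (a b : Fin n) (hab : a < b) :
    Finset.univ.filter (fun f : Sym2 (Fin n) => ¬ edgesIntersect s(a,b) f) =
      (Finset.Ioo a b).sym2 ∪ (Finset.Iio a ∪ Finset.Ioi b).sym2 := by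
  ext f
  obtain ⟨hea, heb⟩ := out_minmax a b hab.le s(a,b) rfl
  set x := f.out.1 with hx
  set y := f.out.2 with hy
  have hf : f = s(x, y) := (Quot.out_eq f).symm
  have hshare : (∃ v, v ∈ s(a,b) ∧ v ∈ f) ↔ (a = x ∨ a = y ∨ b = x ∨ b = y) := by
    rw [hf]; simp only [Sym2.mem_iff]
    constructor
    · rintro ⟨v, h1 | h1, h2 | h2⟩ <;> subst h1 <;> tauto
    · rintro (h | h | h | h) <;> [exact ⟨a, Or.inl rfl, Or.inl h⟩;
        exact ⟨a, Or.inl rfl, Or.inr h⟩; exact ⟨b, Or.inr rfl, Or.inl h⟩;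
        exact ⟨b, Or.inr rfl, Or.inr h⟩]
  have hmem : ∀ (s : Finset (Fin n)), f ∈ s.sym2 ↔ (x ∈ s ∧ y ∈ s) := by
    intro s
    rw [Finset.mem_sym2_iff]
    constructor
    · intro h; exact ⟨h x (Sym2.out_fst_mem f), h y (Sym2.out_snd_mem f)⟩
    · rintro ⟨h1, h2⟩ v hv
      rw [hf] at hv
      rcases Sym2.mem_iff.1 hv with rfl | rfl <;> assumption
  simp only [Finset.mem_filter, Finset.mem_univ, true_and, edgesIntersect, hshare,
    hea, heb, Finset.mem_union, hmem, Finset.mem_Ioo,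
    Finset.mem_Iio, Finset.mem_Ioi, crossChords, ← hx, ← hy]
  rcases le_total x y with hxy | hxy
  · rw [min_eq_left hxy, max_eq_right hxy]
    simp only [Fin.lt_def, Fin.ext_iff, Fin.le_def] at *
    omega
  · rw [min_eq_right hxy, max_eq_left hxy]
    simp only [Fin.lt_def, Fin.ext_iff, Fin.le_def] at *
    omega

open Classical in
lemma weight_eq {n} (a b : Fin n) (hab : a < b) :
    edgeWeight s(a, b) =
      (b.val - a.val - 1 + 1).choose 2 + (a.val + (n - 1 - b.val) + 1).choose 2 := by
  rw [edgeWeight]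
  rw [nonintersect_filter a b hab]
  rw [Finset.card_union_of_disjoint, Finset.card_sym2, Finset.card_sym2,
    Fin.card_Ioo, Finset.card_union_of_disjoint, Fin.card_Iio, Fin.card_Ioi]
  · rw [Finset.disjoint_left]
    intro v hv hv'
    simp only [Finset.mem_Iio, Finset.mem_Ioi] at hv hv'
    exact absurd (hv.trans (hab.trans hv')) (lt_irrefl v)
  · rw [Finset.disjoint_left]
    intro f hf hf'
    rw [Finset.mem_sym2_iff] at hf hf'
    have h1 := hf f.out.1 (Sym2.out_fst_mem f)
    have h2 := hf' f.out.1 (Sym2.out_fst_mem f)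
    simp only [Finset.mem_Ioo, Finset.mem_union, Finset.mem_Iio, Finset.mem_Ioi] at h1 h2
    rcases h2 with h2 | h2
    · exact absurd (h2.trans h1.1) (lt_irrefl _)
    · exact absurd (h1.2.trans h2) (lt_irrefl _)

lemma gsum (p1 p2 p3 p4 : ℕ) :
    (p1 + 1).choose 2 + (p2 + p3 + p4 + 2 + 1).choose 2 +
        ((p3 + 1).choose 2 + (p1 + p2 + p4 + 2 + 1).choose 2) =
      (p1 + p2 + 1 + 1).choose 2 + (p3 + p4 + 1 + 1).choose 2 +
        ((p2 + p3 + 1 + 1).choose 2 + (p1 + p4 + 1 + 1).choose 2) +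
        (2 * p2 * p4 + 2 * (p2 + p4) + 2) := by
  have hg : ∀ m : ℕ, 2 * (m + 1).choose 2 = m * (m + 1) := by
    intro m
    rw [Nat.choose_two_right]
    simp only [Nat.add_sub_cancel]
    rw [Nat.mul_div_cancel' (by rw [mul_comm]; exact (Nat.even_mul_succ_self m).two_dvd : 2 ∣ (m + 1) * m)]
    ring
  apply Nat.eq_of_mul_eq_mul_left (show 0 < 2 by norm_num)
  simp only [mul_add, hg]
  ring

open Classical in
/-- For `i < j < k < l` on the circle,
`w(σ_{ij}) + w(σ_{kl}) = w(σ_{ik}) + w(σ_{jl}) + 2p₂p₄ + 2(p₂+p₄) + 2 > w(σ_{ik}) + w(σ_{jl})`,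
where `p₂`, `p₄` are the numbers of vertices strictly between `j,k` resp. `l,i`. -/
theorem weight_nonintersecting_gt {n : ℕ} (i j k l : Fin n)
    (hij : i < j) (hjk : j < k) (hkl : k < l) :
    edgeWeight s(i, j) + edgeWeight s(k, l) =
        edgeWeight s(i, k) + edgeWeight s(j, l) +
          (2 * (Finset.univ.filter (fun v : Fin n => j < v ∧ v < k)).card *
              (Finset.univ.filter (fun v : Fin n => l < v ∨ v < i)).card +
            2 * ((Finset.univ.filter (fun v : Fin n => j < v ∧ v < k)).card +
              (Finset.univ.filter (fun v : Fin n => l < v ∨ v < i)).card) + 2) ∧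
      edgeWeight s(i, k) + edgeWeight s(j, l) < edgeWeight s(i, j) + edgeWeight s(k, l) := by

  have hij' : i.val < j.val := hij
  have hjk' : j.val < k.val := hjk
  have hkl' : k.val < l.val := hkl
  have hl : l.val < n := l.isLt
  have hA : (Finset.univ.filter (fun v : Fin n => j < v ∧ v < k)).card =
      k.val - j.val - 1 := by
    rw [show Finset.univ.filter (fun v : Fin n => j < v ∧ v < k) = Finset.Ioo j k from by
      ext v; simp [Finset.mem_Ioo]]
    exact Fin.card_Ioo j k
  have hB : (Finset.univ.filter (fun v : Fin n => l < v ∨ v < i)).card =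
      i.val + (n - 1 - l.val) := by
    rw [show Finset.univ.filter (fun v : Fin n => l < v ∨ v < i) =
        Finset.Ioi l ∪ Finset.Iio i from by
      ext v; simp [Finset.mem_Ioi, Finset.mem_Iio]]
    rw [Finset.card_union_of_disjoint, Fin.card_Ioi, Fin.card_Iio]
    · omega
    · rw [Finset.disjoint_left]
      intro v hv hv'
      simp only [Finset.mem_Ioi, Finset.mem_Iio] at hv hv'
      have : i < l := hij.trans (hjk.trans hkl)
      exact absurd ((hv'.trans this).trans hv) (lt_irrefl v)
  rw [weight_eq i j hij, weight_eq k l hkl, weight_eq i k (hij.trans hjk),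
    weight_eq j l (hjk.trans hkl), hA, hB]
  rw [show (i.val + (n - 1 - j.val) : ℕ) =
      (k.val - j.val - 1) + (l.val - k.val - 1) + (i.val + (n - 1 - l.val)) + 2 from by omega,
    show (k.val + (n - 1 - l.val) : ℕ) =
      (j.val - i.val - 1) + (k.val - j.val - 1) + (i.val + (n - 1 - l.val)) + 2 from by omega,
    show (k.val - i.val - 1 : ℕ) = (j.val - i.val - 1) + (k.val - j.val - 1) + 1 from by omega,
    show (i.val + (n - 1 - k.val) : ℕ) =
      (l.val - k.val - 1) + (i.val + (n - 1 - l.val)) + 1 from by omega,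
    show (l.val - j.val - 1 : ℕ) = (k.val - j.val - 1) + (l.val - k.val - 1) + 1 from by omega,
    show (j.val + (n - 1 - l.val) : ℕ) =
      (j.val - i.val - 1) + (i.val + (n - 1 - l.val)) + 1 from by omega]
  refine ⟨gsum _ _ _ _, ?_⟩
  rw [gsum (j.val - i.val - 1) (k.val - j.val - 1) (l.val - k.val - 1)
    (i.val + (n - 1 - l.val))]
  exact Nat.lt_add_of_pos_right (by positivity)
end

section
/- Let G be a block graph with exactly one central vertex c (i.e., every 1-clique partition of G has C={c}). Let D be the set of variables σ_{pq} such that the unique shortest path p↔q does not contain c. Then no variable of D appears in any minimal binomial generator of the kernel of the shortest path map ψ. -/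
open MvPolynomial

variable {n : ℕ}

/-- The shortest path monomial `a_i a_j ∏_{(i',j') ∈ i↔j} k_{i'j'}`
(the image of `σ_{ij}` under the shortest path map `ψ`; for `i = j` it is `a_i²`). -/
noncomputable def psiMon {G : SimpleGraph (Fin n)} (sp : ∀ i j : Fin n, G.Walk i j)
    (e : Sym2 (Fin n)) : MvPolynomial (Fin n ⊕ Sym2 (Fin n)) ℝ :=
  X (Sum.inl e.out.1) * X (Sum.inl e.out.2) *
    ((sp e.out.1 e.out.2).darts.map fun d => X (Sum.inr s(d.fst, d.snd))).prod

/-- `c` is a central vertex of `G`: there is a 1-clique partition `(A, B, {c})` of the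
vertex set with `{c}` separating `A` from `B`. -/
def IsCentralVertex (G : SimpleGraph (Fin n)) (c : Fin n) : Prop :=
  ∃ A B : Set (Fin n), A.Nonempty ∧ B.Nonempty ∧ Disjoint A B ∧ c ∉ A ∧ c ∉ B ∧
    A ∪ B ∪ {c} = Set.univ ∧ ∀ a ∈ A, ∀ b ∈ B, ∀ w : G.Walk a b, c ∈ w.support


section Aux
variable {n : ℕ}
open SimpleGraph

/-- neighbors of non-`c` vertices of `S` stay in `S` -/
def Kclosed (G : SimpleGraph (Fin n)) (c : Fin n) (S : Set (Fin n)) : Prop :=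
  ∀ x ∈ S, x ≠ c → ∀ y, G.Adj x y → y ∈ S

lemma confined {G : SimpleGraph (Fin n)} {c : Fin n} {S : Set (Fin n)}
    (hK : Kclosed G c S) :
    ∀ {x y : Fin n} (w : G.Walk x y), x ∈ S → c ∉ w.support → ∀ z ∈ w.support, z ∈ S := by
  intro x y w
  induction w with
  | nil =>
    intro hx _ z hz
    simp only [Walk.support_nil, List.mem_singleton] at hz
    exact hz ▸ hx
  | @cons a b d h w ih =>
    intro ha hc z hz
    simp only [Walk.support_cons, List.mem_cons] at hz hc
    push_neg at hc
    have hb : b ∈ S := hK a ha (Ne.symm hc.1) b h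
    rcases hz with rfl | hz
    · exact ha
    · exact ih hb hc.2 z hz

lemma reach_c {G : SimpleGraph (Fin n)} {c : Fin n} {S : Set (Fin n)}
    (hK : Kclosed G c S) (c₀ : Fin n) :
    ∀ {x y : Fin n} (w : G.Walk x y), x ∈ S → c ∈ w.support → c₀ ∉ w.support →
      ∃ w' : G.Walk x c, (∀ z ∈ w'.support, z ∈ S) ∧ c₀ ∉ w'.support := by
  intro x y w
  induction w with
  | nil =>
    intro hx hc hc0
    simp only [Walk.support_nil, List.mem_singleton] at hc hc0
    subst hc
    exact ⟨Walk.nil, by simpa using hx, by simpa using hc0⟩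
  | @cons a b d h w ih =>
    intro ha hc hc0
    by_cases hac : a = c
    · subst hac
      exact ⟨Walk.nil, by simpa using ha, by
        simp only [Walk.support_cons, List.mem_cons] at hc0
        push_neg at hc0
        simpa using hc0.1⟩
    · simp only [Walk.support_cons, List.mem_cons] at hc hc0
      push_neg at hc0
      have hb : b ∈ S := hK a ha hac b h
      have hc' : c ∈ w.support := by
        rcases hc with rfl | hc
        · exact absurd rfl hac
        · exact hc
      obtain ⟨w', hw'S, hw'c0⟩ := ih hb hc' hc0.2
      refine ⟨Walk.cons h w', ?_, ?_⟩
      · intro z hz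
        simp only [Walk.support_cons, List.mem_cons] at hz
        rcases hz with rfl | hz
        · exact ha
        · exact hw'S z hz
      · simp only [Walk.support_cons, List.mem_cons]
        push_neg
        exact ⟨hc0.1, hw'c0⟩

lemma central_of_sub {G : SimpleGraph (Fin n)} {c : Fin n} {A B : Set (Fin n)} {c₀ : Fin n}
    (hAB : Disjoint A B) (hcB : c₀ ∉ B)
    (hB : B.Nonempty)
    (hsep : ∀ a ∈ A, ∀ b ∈ B, ∀ w : G.Walk a b,
        (∀ x ∈ w.support, x ∈ A ∪ B ∪ {c₀}) → c₀ ∈ w.support)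
    (hK : Kclosed G c (A ∪ B ∪ {c₀}))
    (hcmem : c ∈ A) (hne : c ≠ c₀) : IsCentralVertex G c₀ := by
  classical
  set S : Set (Fin n) := A ∪ B ∪ {c₀} with hS
  have hcS : c ∈ S := Or.inl (Or.inl hcmem)
  refine ⟨(B ∪ {c₀})ᶜ, B, ⟨c, by
      simp only [Set.mem_compl_iff, Set.mem_union, Set.mem_singleton_iff]
      push_neg
      exact ⟨fun hcB' => (hAB.le_bot ⟨hcmem, hcB'⟩ : False), hne⟩⟩, hB, ?_, ?_, hcB, ?_, ?_⟩
  · exact Set.disjoint_left.mpr fun a ha hb => ha (Or.inl hb)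
  · simp
  · ext z
    simp only [Set.mem_union, Set.mem_compl_iff, Set.mem_singleton_iff, Set.mem_univ, iff_true]
    tauto
  · intro a ha b hb w
    by_contra hc0
    have haB : a ∉ B ∧ a ≠ c₀ := by
      simpa only [Set.mem_compl_iff, Set.mem_union, Set.mem_singleton_iff, not_or] using ha
    have hbS : b ∈ S := Or.inl (Or.inr hb)
    by_cases hcw : c ∈ w.support
    · have hcw' : c ∈ w.reverse.support := by rwa [Walk.support_reverse, List.mem_reverse]
      have hc0w' : c₀ ∉ w.reverse.support := by rwa [Walk.support_reverse, List.mem_reverse]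
      obtain ⟨w', hw'S, hw'c0⟩ := reach_c hK c₀ w.reverse hbS hcw' hc0w'
      have := hsep c hcmem b hb w'.reverse (by
        intro x hx
        rw [Walk.support_reverse, List.mem_reverse] at hx
        exact hw'S x hx)
      rw [Walk.support_reverse, List.mem_reverse] at this
      exact hw'c0 this
    · have hsub : ∀ z ∈ w.support, z ∈ S := by
        have : ∀ z ∈ w.reverse.support, z ∈ S := confined hK w.reverse hbS
          (by rwa [Walk.support_reverse, List.mem_reverse])
        intro z hz
        exact this z (by rwa [Walk.support_reverse, List.mem_reverse])
      have haA : a ∈ A := by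
        have := hsub a w.start_mem_support
        rcases this with (h | h) | h
        · exact h
        · exact absurd h haB.1
        · exact absurd h haB.2
      exact hc0 (hsep a haA b hb w hsub)

lemma structR {G : SimpleGraph (Fin n)} {c : Fin n}
    (huniq : ∀ c', IsCentralVertex G c' → c' = c)
    {S : Set (Fin n)} (h : G.IsCliqueSumOfCompletes S) :
    c ∈ S → Kclosed G c S →
    (∀ x ∈ S, x ≠ c → G.Adj x c) ∧
    (∀ x ∈ S, ∀ y ∈ S, x ≠ c → y ≠ c → x ≠ y →
      ∀ w : G.Walk x y, c ∉ w.support → G.Adj x y) := by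
  induction h with
  | complete S h =>
    intro hcS _
    exact ⟨fun x hx hxc => h hx hcS hxc, fun x hx y hy _ _ hxy _ _ => h hx hy hxy⟩
  | @sum A B c₀ hAB hcA hcB hA hB hsep h1 h2 ih1 ih2 =>
    intro hcS hK
    -- first: c₀ = c
    have hcc : c₀ = c := by
      by_contra hne
      have hne' : c ≠ c₀ := Ne.symm hne
      have hcAB : c ∈ A ∪ B := by
        rcases hcS with (h | h) | h
        · exact Or.inl h
        · exact Or.inr h
        · exact absurd h.symm hne
      rcases hcAB with hcA' | hcB'
      · exact hne (huniq c₀ (central_of_sub hAB hcB hB hsep hK hcA' hne'))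
      · have hsep' : ∀ a ∈ B, ∀ b ∈ A, ∀ w : G.Walk a b,
            (∀ x ∈ w.support, x ∈ B ∪ A ∪ {c₀}) → c₀ ∈ w.support := by
          intro a ha b hb w hw
          have := hsep b hb a ha w.reverse (by
            intro x hx
            rw [Walk.support_reverse, List.mem_reverse] at hx
            have := hw x hx
            simp only [Set.mem_union, Set.mem_singleton_iff] at this ⊢
            tauto)
          rwa [Walk.support_reverse, List.mem_reverse] at this
        have hK' : Kclosed G c (B ∪ A ∪ {c₀}) := by
          have : B ∪ A ∪ {c₀} = A ∪ B ∪ {c₀} := by rw [Set.union_comm B A]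
          rw [this]; exact hK
        exact hne (huniq c₀ (central_of_sub hAB.symm hcA hA hsep' hK' hcB' hne'))
    subst hcc
    -- Kclosed for the two sides
    have hKA : Kclosed G c₀ (A ∪ {c₀}) := by
      intro x hx hxc y hxy
      have hxA : x ∈ A := by
        rcases hx with h | h
        · exact h
        · exact absurd h hxc
      have hyS : y ∈ A ∪ B ∪ {c₀} := hK x (Or.inl (Or.inl hxA)) hxc y hxy
      rcases hyS with (h | h) | h
      · exact Or.inl h
      · exfalso
        have := hsep x hxA y h (Walk.cons hxy Walk.nil) (by
          intro z hz
          simp only [Walk.support_cons, Walk.support_nil, List.mem_cons,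
            List.mem_singleton] at hz
          rcases hz with rfl | rfl | h'
          · exact Or.inl (Or.inl hxA)
          · exact Or.inl (Or.inr h)
          · exact absurd h' (by simp))
        simp only [Walk.support_cons, Walk.support_nil, List.mem_cons,
          List.mem_singleton] at this
        rcases this with h' | h' | h'
        · exact hxc h'.symm
        · exact hcB (h' ▸ h)
        · simp at h'
      · exact Or.inr h
    have hKB : Kclosed G c₀ (B ∪ {c₀}) := by
      intro x hx hxc y hxy
      have hxB : x ∈ B := by
        rcases hx with h | h
        · exact h
        · exact absurd h hxc
      have hyS : y ∈ A ∪ B ∪ {c₀} := hK x (Or.inl (Or.inr hxB)) hxc y hxy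
      rcases hyS with (h | h) | h
      · exfalso
        have := hsep y h x hxB (Walk.cons hxy.symm Walk.nil) (by
          intro z hz
          simp only [Walk.support_cons, Walk.support_nil, List.mem_cons,
            List.mem_singleton] at hz
          rcases hz with rfl | rfl | h'
          · exact Or.inl (Or.inl h)
          · exact Or.inl (Or.inr hxB)
          · exact absurd h' (by simp))
        simp only [Walk.support_cons, Walk.support_nil, List.mem_cons,
          List.mem_singleton] at this
        rcases this with h' | h' | h'
        · exact hcA (h' ▸ h)
        · exact hxc h'.symm
        · simp at h'
      · exact Or.inl h
      · exact Or.inr h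
    have RA := ih1 (Or.inr rfl) hKA
    have RB := ih2 (Or.inr rfl) hKB
    constructor
    · intro x hx hxc
      rcases hx with (h | h) | h
      · exact RA.1 x (Or.inl h) hxc
      · exact RB.1 x (Or.inl h) hxc
      · exact absurd h hxc
    · intro x hx y hy hxc hyc hxy w hcw
      have hsub : ∀ z ∈ w.support, z ∈ A ∪ B ∪ {c₀} := confined hK w hx hcw
      have hxAB : x ∈ A ∪ B := by
        rcases hx with (h | h) | h
        · exact Or.inl h
        · exact Or.inr h
        · exact absurd h hxc
      have hyAB : y ∈ A ∪ B := by
        rcases hy with (h | h) | h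
        · exact Or.inl h
        · exact Or.inr h
        · exact absurd h hyc
      rcases hxAB with hxA | hxB <;> rcases hyAB with hyA | hyB
      · exact RA.2 x (Or.inl hxA) y (Or.inl hyA) hxc hyc hxy w hcw
      · exact absurd (hsep x hxA y hyB w hsub) hcw
      · exfalso
        have := hsep y hyA x hxB w.reverse (by
          intro z hz
          rw [Walk.support_reverse, List.mem_reverse] at hz
          exact hsub z hz)
        rw [Walk.support_reverse, List.mem_reverse] at this
        exact hcw this
      · exact RB.2 x (Or.inl hxB) y (Or.inl hyB) hxc hyc hxy w hcw

lemma walk_len1 {G : SimpleGraph (Fin n)} {x y : Fin n} (w : G.Walk x y) (h : w.length = 1) :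
    G.Adj x y ∧ w.support = [x, y] ∧ w.darts.map (fun d => s(d.fst, d.snd)) = [s(x, y)] := by
  cases w with
  | nil => simp at h
  | cons h' w' =>
    cases w' with
    | nil => exact ⟨h', by simp, by simp⟩
    | cons h'' w'' => simp [Walk.length_cons] at h

lemma walk_len2 {G : SimpleGraph (Fin n)} {x y : Fin n} (w : G.Walk x y) (h : w.length = 2) :
    ∃ m, G.Adj x m ∧ G.Adj m y ∧ w.support = [x, m, y] ∧
      w.darts.map (fun d => s(d.fst, d.snd)) = [s(x, m), s(m, y)] := by
  cases w with
  | nil => simp at h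
  | cons h' w' =>
    cases w' with
    | nil => simp at h
    | @cons _ m _ h'' w'' =>
      cases w'' with
      | nil => exact ⟨_, h', h'', by simp, by simp⟩
      | cons h''' w''' => simp [Walk.length_cons] at h

lemma classify {G : SimpleGraph (Fin n)} (hconn : G.Connected)
    {sp : ∀ i j : Fin n, G.Walk i j} (hsp : ∀ i j, (sp i j).length = G.dist i j)
    {c : Fin n} (adjC : ∀ x, x ≠ c → G.Adj x c)
    (adjW : ∀ x y, x ≠ c → y ≠ c → x ≠ y → ∀ w : G.Walk x y, c ∉ w.support → G.Adj x y)
    (x y : Fin n) :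
    (x = y ∧ (sp x y).darts.map (fun d => s(d.fst, d.snd)) = []) ∨
    (x ≠ y ∧ G.Adj x y ∧ (sp x y).support = [x, y] ∧
      (sp x y).darts.map (fun d => s(d.fst, d.snd)) = [s(x, y)]) ∨
    (x ≠ y ∧ ¬ G.Adj x y ∧ x ≠ c ∧ y ≠ c ∧ c ∈ (sp x y).support ∧
      (sp x y).darts.map (fun d => s(d.fst, d.snd)) = [s(x, c), s(c, y)]) := by
  by_cases hxy : x = y
  · subst hxy
    have h0 : (sp x x).length = 0 := by rw [hsp]; exact SimpleGraph.dist_self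
    left
    refine ⟨rfl, ?_⟩
    cases hw : sp x x with
    | nil => simp
    | cons h' w' => rw [hw] at h0; simp at h0
  · have hne0 : G.dist x y ≠ 0 := by
      intro h0
      have : (sp x y).length = 0 := by rw [hsp]; exact h0
      cases hw : sp x y with
      | nil => exact hxy rfl
      | cons h' w' => rw [hw] at this; simp at this
    by_cases hadj : G.Adj x y
    · have hd1 : G.dist x y = 1 := by
        have hle : G.dist x y ≤ 1 := by
          have := SimpleGraph.dist_le (Walk.cons hadj Walk.nil)
          simpa using this
        omega
      have := walk_len1 (sp x y) (by rw [hsp, hd1])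
      exact Or.inr (Or.inl ⟨hxy, hadj, this.2.1, this.2.2⟩)
    · have hxc : x ≠ c := by
        rintro rfl
        exact hadj ((adjC y (fun h => hxy h.symm)).symm)
      have hyc : y ≠ c := by
        rintro rfl
        exact hadj (adjC x hxy)
      have hd2 : G.dist x y = 2 := by
        have hle : G.dist x y ≤ 2 := by
          have := SimpleGraph.dist_le (Walk.cons (adjC x hxc) (Walk.cons (adjC y hyc).symm Walk.nil))
          simpa using this
        have hne1 : G.dist x y ≠ 1 := by
          intro h1
          exact hadj (walk_len1 (sp x y) (by rw [hsp, h1])).1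
        omega
      obtain ⟨m, hxm, hmy, hsupp, hdarts⟩ := walk_len2 (sp x y) (by rw [hsp, hd2])
      have hmc : m = c := by
        by_contra hmc
        refine hadj (adjW x y hxc hyc hxy (sp x y) ?_)
        rw [hsupp]
        simp only [List.mem_cons, List.mem_singleton, List.not_mem_nil]
        push_neg
        exact ⟨Ne.symm hxc, Ne.symm hmc, Ne.symm hyc, trivial⟩
      subst hmc
      exact Or.inr (Or.inr ⟨hxy, hadj, hxc, hyc, by rw [hsupp]; simp, hdarts⟩)

noncomputable def wfun {G : SimpleGraph (Fin n)} (sp : ∀ i j : Fin n, G.Walk i j)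
    (e : Sym2 (Fin n)) : (Fin n ⊕ Sym2 (Fin n)) →₀ ℕ :=
  Finsupp.single (Sum.inl e.out.1) 1 + Finsupp.single (Sum.inl e.out.2) 1 +
    ((sp e.out.1 e.out.2).darts.map fun d => Finsupp.single (Sum.inr s(d.fst, d.snd)) 1).sum

lemma X_eq (t : Fin n ⊕ Sym2 (Fin n)) :
    (X t : MvPolynomial (Fin n ⊕ Sym2 (Fin n)) ℝ) = monomial (Finsupp.single t 1) 1 := rfl

lemma list_prod_X (l : List (Fin n ⊕ Sym2 (Fin n))) :
    (l.map fun t => (X t : MvPolynomial (Fin n ⊕ Sym2 (Fin n)) ℝ)).prod =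
      monomial ((l.map fun t => Finsupp.single t (1 : ℕ)).sum) 1 := by
  induction l with
  | nil => simp [monomial_zero']
  | cons a l ih =>
    rw [List.map_cons, List.prod_cons, ih, X_eq, monomial_mul, one_mul,
      List.map_cons, List.sum_cons]

lemma psiMon_eq {G : SimpleGraph (Fin n)} (sp : ∀ i j : Fin n, G.Walk i j) (e : Sym2 (Fin n)) :
    psiMon sp e = monomial (wfun sp e) 1 := by
  unfold psiMon wfun
  have h1 : ((sp e.out.1 e.out.2).darts.map fun d =>
      (X (Sum.inr s(d.fst, d.snd)) : MvPolynomial (Fin n ⊕ Sym2 (Fin n)) ℝ)).prod =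
      monomial (((sp e.out.1 e.out.2).darts.map fun d =>
        Finsupp.single (Sum.inr s(d.fst, d.snd)) (1 : ℕ)).sum) 1 := by
    have := list_prod_X (n := n)
      ((sp e.out.1 e.out.2).darts.map fun d => (Sum.inr s(d.fst, d.snd) : Fin n ⊕ Sym2 (Fin n)))
    simpa [List.map_map, Function.comp_def] using this
  rw [h1, X_eq, X_eq, monomial_mul, monomial_mul, one_mul, one_mul]

lemma prod_mono {α : Type*} (s : Finset α) (g : α → ((Fin n ⊕ Sym2 (Fin n)) →₀ ℕ)) :
    (∏ a ∈ s, (monomial (g a) (1 : ℝ))) = monomial (∑ a ∈ s, g a) 1 := by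
  classical
  induction s using Finset.induction_on with
  | empty => simp [monomial_zero']
  | @insert a s hnm ih =>
    rw [Finset.prod_insert hnm, Finset.sum_insert hnm, ih, monomial_mul, one_mul]

lemma aeval_mon {G : SimpleGraph (Fin n)} (sp : ∀ i j : Fin n, G.Walk i j)
    (u : Sym2 (Fin n) →₀ ℕ) :
    aeval (psiMon sp) (monomial u (1 : ℝ)) =
      monomial (∑ e ∈ u.support, u e • wfun sp e) 1 := by
  rw [aeval_monomial, map_one, one_mul]
  rw [Finsupp.prod]
  have : ∀ e ∈ u.support, psiMon sp e ^ u e = monomial (u e • wfun sp e) 1 := by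
    intro e _
    rw [psiMon_eq, monomial_pow, one_pow]
  rw [Finset.prod_congr rfl this, prod_mono]

lemma sym2_out {α : Type*} (e : Sym2 α) : s(e.out.1, e.out.2) = e := by
  exact Quot.out_eq e

lemma wfun_apply {G : SimpleGraph (Fin n)} (sp : ∀ i j : Fin n, G.Walk i j)
    (e : Sym2 (Fin n)) {L : List (Sym2 (Fin n))}
    (hL : (sp e.out.1 e.out.2).darts.map (fun d => s(d.fst, d.snd)) = L)
    (t : Fin n ⊕ Sym2 (Fin n)) :
    wfun sp e t = (Finsupp.single (Sum.inl e.out.1) 1) t +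
      (Finsupp.single (Sum.inl e.out.2) 1) t +
      ((L.map fun s => Finsupp.single (Sum.inr s) (1 : ℕ)).sum) t := by
  unfold wfun
  rw [Finsupp.add_apply, Finsupp.add_apply]
  congr 2
  rw [← hL, List.map_map]
  rfl


end Aux

/-- For a block graph with a unique central vertex `c`, no variable `σ_{pq}` whose
shortest path `p↔q` avoids `c` appears in any minimal binomial generator
(a binomial `σ^u − σ^v` with coprime terms) of the kernel of the shortest path map. -/
theorem D_variables_not_in_minimal_generators (G : SimpleGraph (Fin n))
    (hG : G.IsBlockGraph) (hconn : G.Connected)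
    (sp : ∀ i j : Fin n, G.Walk i j)
    (hsp : ∀ i j, (sp i j).IsPath ∧ (sp i j).length = G.dist i j)
    (c : Fin n) (hc : IsCentralVertex G c)
    (huniq : ∀ c', IsCentralVertex G c' → c' = c)
    (u v : Sym2 (Fin n) →₀ ℕ) (hcop : Disjoint u.support v.support)
    (hker : (MvPolynomial.monomial u (1 : ℝ) - MvPolynomial.monomial v 1) ∈
      RingHom.ker (MvPolynomial.aeval (psiMon sp) :
        MvPolynomial (Sym2 (Fin n)) ℝ →ₐ[ℝ] MvPolynomial (Fin n ⊕ Sym2 (Fin n)) ℝ).toRingHom) :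
    ∀ e : Sym2 (Fin n), c ∉ (sp e.out.1 e.out.2).support → u e = 0 ∧ v e = 0 := by
  classical
  -- structure of the graph
  have huniv : G.IsCliqueSumOfCompletes (Set.univ : Set (Fin n)) := by
    have h := hG c
    have hset : {w | G.Reachable c w} = Set.univ :=
      Set.eq_univ_of_forall fun w => hconn.preconnected c w
    rwa [hset] at h
  obtain ⟨adjC0, adjW0⟩ := structR huniq huniv (Set.mem_univ c)
    (fun x _ _ y _ => Set.mem_univ y)
  have adjC : ∀ x, x ≠ c → G.Adj x c := fun x hx => adjC0 x (Set.mem_univ x) hx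
  have adjW : ∀ x y, x ≠ c → y ≠ c → x ≠ y → ∀ w : G.Walk x y, c ∉ w.support → G.Adj x y :=
    fun x y hx hy hxy w hw => adjW0 x (Set.mem_univ x) y (Set.mem_univ y) hx hy hxy w hw
  have hsp' : ∀ i j, (sp i j).length = G.dist i j := fun i j => (hsp i j).2
  have cls := classify hconn hsp' adjC adjW
  -- kernel membership gives equality of exponent vectors
  have h0 : (aeval (psiMon sp)) (monomial u (1 : ℝ)) = (aeval (psiMon sp)) (monomial v (1 : ℝ)) := by
    have h := RingHom.mem_ker.mp hker
    rw [map_sub, sub_eq_zero] at h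
    simpa only [AlgHom.toRingHom_eq_coe, RingHom.coe_coe] using h
  rw [aeval_mon sp u, aeval_mon sp v] at h0
  have hUV : (∑ e ∈ u.support, u e • wfun sp e) = (∑ e ∈ v.support, v e • wfun sp e) := by
    rcases (monomial_eq_monomial_iff _ _ _ _).mp h0 with ⟨h, _⟩ | ⟨h, _⟩
    · exact h
    · exact absurd h one_ne_zero
  have hUVt : ∀ t, (∑ e ∈ u.support, u e * wfun sp e t) = ∑ e ∈ v.support, v e * wfun sp e t := by
    intro t
    have h1 : (∑ e ∈ u.support, u e • wfun sp e) t = (∑ e ∈ v.support, v e • wfun sp e) t := by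
      rw [hUV]
    simpa [Finsupp.finset_sum_apply, Finsupp.smul_apply] using h1
  have both_zero : ∀ e : Sym2 (Fin n), u e = v e → u e = 0 ∧ v e = 0 := by
    intro e h
    by_cases hu : u e = 0
    · exact ⟨hu, h ▸ hu⟩
    · exfalso
      have h1 : e ∈ u.support := Finsupp.mem_support_iff.mpr hu
      have h2 : e ∈ v.support := Finsupp.mem_support_iff.mpr (h ▸ hu)
      exact Finset.disjoint_left.mp hcop h1 h2
  -- Step 1 : off-diagonal variables
  have step1 : ∀ e : Sym2 (Fin n), e.out.1 ≠ e.out.2 →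
      c ∉ (sp e.out.1 e.out.2).support → u e = 0 ∧ v e = 0 := by
    intro e₀ hne hcsupp
    rcases cls e₀.out.1 e₀.out.2 with ⟨h, _⟩ | ⟨_, hadj, hsupp, hdarts⟩ |
      ⟨_, _, _, _, hcmem, _⟩
    · exact absurd h hne
    · -- the shortest path is the edge itself
      have hx₀c : e₀.out.1 ≠ c := by
        rintro rfl; exact hcsupp ((sp _ _).start_mem_support)
      have hy₀c : e₀.out.2 ≠ c := by
        rintro rfl; exact hcsupp ((sp _ _).end_mem_support)
      have wval : ∀ e' : Sym2 (Fin n), wfun sp e' (Sum.inr e₀) = if e' = e₀ then 1 else 0 := by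
        intro e'
        rcases cls e'.out.1 e'.out.2 with ⟨heq', hd'⟩ | ⟨hne', hadj', hsupp', hdarts'⟩ |
          ⟨hne', hnadj', hx'c, hy'c, hcmem', hdarts'⟩
        · rw [wfun_apply sp e' hd']
          have : e' ≠ e₀ := by
            rintro rfl; exact hne heq'
          simp [this]
        · rw [wfun_apply sp e' hdarts']
          have hiff : (s(e'.out.1, e'.out.2) = e₀) ↔ e' = e₀ := by rw [sym2_out]
          by_cases h : e' = e₀
          · subst h
            simp [Finsupp.single_apply, sym2_out]
          · have : s(e'.out.1, e'.out.2) ≠ e₀ := fun hh => h (hiff.mp hh)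
            simp [Finsupp.single_apply, this, h]
        · rw [wfun_apply sp e' hdarts']
          have h1 : s(e'.out.1, c) ≠ e₀ := by
            intro hh
            rw [← sym2_out e₀] at hh
            rcases Sym2.eq_iff.mp hh with ⟨_, h2⟩ | ⟨_, h2⟩
            · exact hy₀c h2.symm
            · exact hx₀c h2.symm
          have h2 : s(c, e'.out.2) ≠ e₀ := by
            intro hh
            rw [← sym2_out e₀] at hh
            rcases Sym2.eq_iff.mp hh with ⟨h2, _⟩ | ⟨h2, _⟩
            · exact hx₀c h2.symm
            · exact hy₀c h2.symm
          have h3 : e' ≠ e₀ := by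
            rintro rfl; exact hnadj' hadj
          simp [Finsupp.single_apply, h1, h2, h3]
      have hu : ∑ e ∈ u.support, u e * wfun sp e (Sum.inr e₀) = u e₀ := by
        rw [Finset.sum_congr rfl (fun e _ => by rw [wval e])]
        rw [Finset.sum_congr rfl (fun e _ => by rw [mul_ite, mul_one, mul_zero])]
        rw [Finset.sum_ite_eq' u.support e₀ (fun e => u e)]
        by_cases h : e₀ ∈ u.support
        · simp [h]
        · simp [h, Finsupp.notMem_support_iff.mp h]
      have hv : ∑ e ∈ v.support, v e * wfun sp e (Sum.inr e₀) = v e₀ := by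
        rw [Finset.sum_congr rfl (fun e _ => by rw [wval e])]
        rw [Finset.sum_congr rfl (fun e _ => by rw [mul_ite, mul_one, mul_zero])]
        rw [Finset.sum_ite_eq' v.support e₀ (fun e => v e)]
        by_cases h : e₀ ∈ v.support
        · simp [h]
        · simp [h, Finsupp.notMem_support_iff.mp h]
      exact both_zero e₀ (by rw [← hu, ← hv]; exact hUVt (Sum.inr e₀))
    · exact absurd hcmem hcsupp
  -- Step 2 : diagonal variables
  intro e₀ hcsupp
  by_cases hdiag : e₀.out.1 = e₀.out.2
  swap
  · exact step1 e₀ hdiag hcsupp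
  · set p := e₀.out.1 with hp
    have hpc : p ≠ c := by
      rintro rfl; exact hcsupp ((sp _ _).start_mem_support)
    have he₀ : s(p, p) = e₀ := by
      nth_rewrite 2 [hdiag]
      exact sym2_out e₀
    have keygen : ∀ f : Sym2 (Fin n) →₀ ℕ,
        (∀ e', e'.out.1 ≠ e'.out.2 → c ∉ (sp e'.out.1 e'.out.2).support → f e' = 0) →
        ∀ e' : Sym2 (Fin n), f e' * wfun sp e' (Sum.inl p) =
          2 * (if e' = e₀ then f e' else 0) + f e' * wfun sp e' (Sum.inr s(p, c)) := by
      intro f hf e'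
      rcases cls e'.out.1 e'.out.2 with ⟨heq', hd'⟩ | ⟨hne', hadj', hsupp', hdarts'⟩ |
        ⟨hne', hnadj', hx'c, hy'c, hcmem', hdarts'⟩
      · -- diagonal e'
        have hiff : e' = e₀ ↔ e'.out.1 = p := by
          constructor
          · rintro rfl; rw [hp]
          · intro h
            rw [← sym2_out e', ← heq', h, he₀]
        rw [wfun_apply sp e' hd', wfun_apply sp e' hd']
        by_cases h : e'.out.1 = p
        · rw [if_pos (hiff.mpr h)]
          simp [Finsupp.single_apply, ← heq', h]
          try ring
        · rw [if_neg (fun hh => h (hiff.mp hh))]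
          simp [Finsupp.single_apply, ← heq', h]
      · -- adjacent e'
        have hne₀ : e' ≠ e₀ := by
          rintro rfl; exact hne' hdiag
        rw [wfun_apply sp e' hdarts', wfun_apply sp e' hdarts', if_neg hne₀]
        by_cases hy' : e'.out.2 = c
        · have hx' : e'.out.1 ≠ c := fun h => hne' (h.trans hy'.symm)
          have hss : (s(e'.out.1, e'.out.2) = s(p, c)) ↔ e'.out.1 = p := by
            rw [hy', Sym2.eq_iff]
            constructor
            · rintro (⟨h1, _⟩ | ⟨h1, h2⟩)
              · exact h1
              · exact absurd h1 hx'
            · intro h; exact Or.inl ⟨h, rfl⟩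
          by_cases h : e'.out.1 = p
          · simp [Finsupp.single_apply, h, hy', hpc.symm, hss, Ne.symm hpc]
          · have : s(e'.out.1, e'.out.2) ≠ s(p, c) := fun hh => h (hss.mp hh)
            simp [Finsupp.single_apply, h, hy', this, Ne.symm hpc,
              fun hh : c = p => hpc hh.symm]
        · by_cases hx' : e'.out.1 = c
          · have hss : (s(e'.out.1, e'.out.2) = s(p, c)) ↔ e'.out.2 = p := by
              rw [hx', Sym2.eq_iff]
              constructor
              · rintro (⟨h1, _⟩ | ⟨_, h2⟩)
                · exact absurd h1.symm hpc
                · exact h2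
              · intro h; exact Or.inr ⟨rfl, h⟩
            by_cases h : e'.out.2 = p
            · simp [Finsupp.single_apply, h, hx', hpc.symm, hss, Ne.symm hpc]
            · have : s(e'.out.1, e'.out.2) ≠ s(p, c) := fun hh => h (hss.mp hh)
              simp [Finsupp.single_apply, h, hx', this, Ne.symm hpc,
                fun hh : c = p => hpc hh.symm]
          · -- both endpoints differ from c : f e' = 0
            have hfz : f e' = 0 := by
              refine hf e' hne' ?_
              rw [hsupp']
              simp only [List.mem_cons, List.not_mem_nil, List.mem_singleton]
              push_neg
              exact ⟨Ne.symm hx', Ne.symm hy', trivial⟩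
            simp [hfz]
      · -- distance-2 e'
        have hne₀ : e' ≠ e₀ := by
          rintro rfl; exact hne' hdiag
        rw [wfun_apply sp e' hdarts', wfun_apply sp e' hdarts', if_neg hne₀]
        have hss1 : (s(e'.out.1, c) = s(p, c)) ↔ e'.out.1 = p := by
          rw [Sym2.eq_iff]
          constructor
          · rintro (⟨h1, _⟩ | ⟨h1, h2⟩)
            · exact h1
            · exact absurd h1 hx'c
          · intro h; exact Or.inl ⟨h, rfl⟩
        have hss2 : (s(c, e'.out.2) = s(p, c)) ↔ e'.out.2 = p := by
          rw [Sym2.eq_iff]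
          constructor
          · rintro (⟨h1, _⟩ | ⟨_, h2⟩)
            · exact absurd h1.symm hpc
            · exact h2
          · intro h; exact Or.inr ⟨rfl, h⟩
        by_cases h1 : e'.out.1 = p <;> by_cases h2 : e'.out.2 = p
        · simp [Finsupp.single_apply, h1, h2, hss1, hss2]
          try ring
        · have : s(c, e'.out.2) ≠ s(p, c) := fun hh => h2 (hss2.mp hh)
          simp [Finsupp.single_apply, h1, h2, hss1, this]
        · have : s(e'.out.1, c) ≠ s(p, c) := fun hh => h1 (hss1.mp hh)
          simp [Finsupp.single_apply, h1, h2, hss2, this]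
        · have hh1 : s(e'.out.1, c) ≠ s(p, c) := fun hh => h1 (hss1.mp hh)
          have hh2 : s(c, e'.out.2) ≠ s(p, c) := fun hh => h2 (hss2.mp hh)
          simp [Finsupp.single_apply, h1, h2, hh1, hh2]
    have hfu : ∀ e', e'.out.1 ≠ e'.out.2 → c ∉ (sp e'.out.1 e'.out.2).support → u e' = 0 :=
      fun e' h1 h2 => (step1 e' h1 h2).1
    have hfv : ∀ e', e'.out.1 ≠ e'.out.2 → c ∉ (sp e'.out.1 e'.out.2).support → v e' = 0 :=
      fun e' h1 h2 => (step1 e' h1 h2).2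
    have hsum : ∀ (f : Sym2 (Fin n) →₀ ℕ),
        (∀ e', e'.out.1 ≠ e'.out.2 → c ∉ (sp e'.out.1 e'.out.2).support → f e' = 0) →
        ∑ e ∈ f.support, f e * wfun sp e (Sum.inl p) =
          2 * f e₀ + ∑ e ∈ f.support, f e * wfun sp e (Sum.inr s(p, c)) := by
      intro f hf
      rw [Finset.sum_congr rfl (fun e _ => keygen f hf e), Finset.sum_add_distrib]
      congr 1
      rw [← Finset.mul_sum, Finset.sum_ite_eq' f.support e₀ (fun e => f e)]
      by_cases h : e₀ ∈ f.support
      · simp [h]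
      · simp [h, Finsupp.notMem_support_iff.mp h]
    have h1 := hUVt (Sum.inl p)
    have h2 := hUVt (Sum.inr s(p, c))
    rw [hsum u hfu, hsum v hfv, h2] at h1
    have : u e₀ = v e₀ := by omega
    exact both_zero e₀ this
end

section
/- Let G be a block graph with one central vertex c, and let D be the set of pairs {p,q} whose shortest path avoids c. Then the kernel of the shortest path map ψ restricted to ℝ[σ_{ij} : {i,j}∉D] equals the kernel of the simplified map σ_{ij} ↦ a_i a_j (restricted to the same variables). -/
open MvPolynomial

variable {n : ℕ}

/-- The set of variables not in `D`: pairs whose shortest path passes through `c`. -/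
def throughC {G : SimpleGraph (Fin n)} (sp : ∀ i j : Fin n, G.Walk i j) (c : Fin n) :
    Sym2 (Fin n) → Prop :=
  fun e => c ∈ (sp e.out.1 e.out.2).support

section Aux

open SimpleGraph

variable {V : Type*} [DecidableEq V] {G : SimpleGraph V}

private lemma walk_length_one_eq {x y : V} (p q : G.Walk x y)
    (hp : p.length = 1) (hq : q.length = 1) : p = q := by
  cases p with
  | nil => simp at hp
  | cons h' p' =>
    cases q with
    | nil => simp at hq
    | cons h'' q' =>
      simp only [Walk.length_cons] at hp hq
      have hp0 : p'.length = 0 := by omega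
      have hq0 : q'.length = 0 := by omega
      have h1 := Walk.eq_of_length_eq_zero hp0
      subst h1
      have h2 := Walk.eq_of_length_eq_zero hq0
      subst h2
      rw [Walk.nil_iff_eq_nil.mp (Walk.length_eq_zero_iff.mp hp0),
        Walk.nil_iff_eq_nil.mp (Walk.length_eq_zero_iff.mp hq0)]

private lemma sep_helper {A B : Set V} {c : V} {T : Set V}
    (hsep : ∀ a ∈ A, ∀ b ∈ B, ∀ w : G.Walk a b, (∀ x ∈ w.support, x ∈ T) → c ∈ w.support)
    (hcB : c ∉ B) {x y : V} (r : G.Walk x y) (hr : r.IsPath)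
    (hsub : ∀ u ∈ r.support, u ∈ T)
    (hx : x ∈ A ∪ {c}) (hy : y ∈ A ∪ {c}) : ∀ v ∈ r.support, v ∉ B := by
  intro v hv hvB
  have hcv : c ≠ v := fun h => hcB (h ▸ hvB)
  have hct : c ∈ (r.takeUntil v hv).support := by
    rcases hx with hx | hx
    · exact hsep x hx v hvB _ (fun u hu => hsub u (r.support_takeUntil_subset hv hu))
    · have hxc : x = c := hx
      subst hxc; exact Walk.start_mem_support _
  have hcd : c ∈ (r.dropUntil v hv).support := by
    rcases hy with hy | hy
    · have := hsep y hy v hvB (r.dropUntil v hv).reverse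
        (fun u hu => hsub u (r.support_dropUntil_subset hv
          (by simpa [Walk.support_reverse] using hu)))
      simpa [Walk.support_reverse] using this
    · have hyc : y = c := hy
      subst hyc; exact Walk.end_mem_support _
  have hcd' : c ∈ (r.dropUntil v hv).support.tail := by
    have hsc := (r.dropUntil v hv).support_eq_cons
    rw [hsc, List.mem_cons] at hcd
    rcases hcd with h | h
    · exact absurd h hcv
    · exact h
  have hnd : ((r.takeUntil v hv).support ++ (r.dropUntil v hv).support.tail).Nodup := by
    have h2 := hr.support_nodup
    rwa [← r.take_spec hv, Walk.support_append] at h2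
  exact (List.disjoint_of_nodup_append hnd) hct hcd'

/-- Uniqueness statement for minimal paths with support in `W`. -/
private def UMin (G : SimpleGraph V) (W : Set V) : Prop :=
  ∀ ⦃x y : V⦄, x ∈ W → y ∈ W → ∀ p q : G.Walk x y, p.IsPath → q.IsPath →
    (∀ v ∈ p.support, v ∈ W) → (∀ v ∈ q.support, v ∈ W) →
    (∀ r : G.Walk x y, (∀ v ∈ r.support, v ∈ W) → p.length ≤ r.length) →
    (∀ r : G.Walk x y, (∀ v ∈ r.support, v ∈ W) → q.length ≤ r.length) →
    p = q

private lemma side_case {A B : Set V} {c : V} {S : Set V}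
    (hsep : ∀ a ∈ A, ∀ b ∈ B, ∀ w : G.Walk a b, (∀ x ∈ w.support, x ∈ S) → c ∈ w.support)
    (hcB : c ∉ B)
    (hACS : ∀ v ∈ A ∪ {c}, v ∈ S)
    (hSsub : ∀ v ∈ S, v ∈ A ∪ B ∪ {c})
    (U1 : UMin G (A ∪ {c}))
    {x y : V} (hx : x ∈ A ∪ {c}) (hy : y ∈ A ∪ {c}) (p q : G.Walk x y)
    (hp : p.IsPath) (hq : q.IsPath)
    (hps : ∀ v ∈ p.support, v ∈ S) (hqs : ∀ v ∈ q.support, v ∈ S)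
    (hpm : ∀ r : G.Walk x y, (∀ v ∈ r.support, v ∈ S) → p.length ≤ r.length)
    (hqm : ∀ r : G.Walk x y, (∀ v ∈ r.support, v ∈ S) → q.length ≤ r.length) : p = q := by
  have key : ∀ (r : G.Walk x y), r.IsPath → (∀ v ∈ r.support, v ∈ S) →
      ∀ v ∈ r.support, v ∈ A ∪ {c} := by
    intro r hr hrs v hv
    have hnB := sep_helper hsep hcB r hr hrs hx hy v hv
    rcases hSsub v (hrs v hv) with (h | h) | h
    · exact Or.inl h
    · exact absurd h hnB
    · exact Or.inr h
  exact U1 hx hy p q hp hq (key p hp hps) (key q hq hqs)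
    (fun r hr => hpm r (fun v hv => hACS v (hr v hv)))
    (fun r hr => hqm r (fun v hv => hACS v (hr v hv)))

private lemma cross_case {A B : Set V} {c : V} {S : Set V}
    (hcA : c ∉ A) (hcB : c ∉ B)
    (hsep : ∀ a ∈ A, ∀ b ∈ B, ∀ w : G.Walk a b, (∀ x ∈ w.support, x ∈ S) → c ∈ w.support)
    (hACS : ∀ v ∈ A ∪ {c}, v ∈ S) (hBCS : ∀ v ∈ B ∪ {c}, v ∈ S)
    (hSsub : ∀ v ∈ S, v ∈ A ∪ B ∪ {c})
    (U1 : UMin G (A ∪ {c})) (U2 : UMin G (B ∪ {c}))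
    {x y : V} (hxA : x ∈ A) (hyB : y ∈ B) (p q : G.Walk x y)
    (hp : p.IsPath) (hq : q.IsPath)
    (hps : ∀ v ∈ p.support, v ∈ S) (hqs : ∀ v ∈ q.support, v ∈ S)
    (hpm : ∀ r : G.Walk x y, (∀ v ∈ r.support, v ∈ S) → p.length ≤ r.length)
    (hqm : ∀ r : G.Walk x y, (∀ v ∈ r.support, v ∈ S) → q.length ≤ r.length) : p = q := by
  have hsep' : ∀ b ∈ B, ∀ a ∈ A, ∀ w : G.Walk b a,
      (∀ x ∈ w.support, x ∈ S) → c ∈ w.support := by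
    intro b hb a ha w hw
    have := hsep a ha b hb w.reverse
      (fun u hu => hw u (by simpa [Walk.support_reverse] using hu))
    simpa [Walk.support_reverse] using this
  have hcp : c ∈ p.support := hsep x hxA y hyB p hps
  have hcq : c ∈ q.support := hsep x hxA y hyB q hqs
  have htake : ∀ (r : G.Walk x y) (hr : r.IsPath) (hrs : ∀ v ∈ r.support, v ∈ S)
      (hcr : c ∈ r.support), ∀ v ∈ (r.takeUntil c hcr).support, v ∈ A ∪ {c} := by
    intro r hr hrs hcr v hv
    have hsub : ∀ u ∈ (r.takeUntil c hcr).support, u ∈ S :=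
      fun u hu => hrs u (r.support_takeUntil_subset hcr hu)
    have hnB := sep_helper hsep hcB _ (hr.takeUntil hcr) hsub (Or.inl hxA) (Or.inr rfl) v hv
    rcases hSsub v (hsub v hv) with (h | h) | h
    · exact Or.inl h
    · exact absurd h hnB
    · exact Or.inr h
  have hdrop : ∀ (r : G.Walk x y) (hr : r.IsPath) (hrs : ∀ v ∈ r.support, v ∈ S)
      (hcr : c ∈ r.support), ∀ v ∈ (r.dropUntil c hcr).support, v ∈ B ∪ {c} := by
    intro r hr hrs hcr v hv
    have hsub : ∀ u ∈ (r.dropUntil c hcr).support, u ∈ S :=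
      fun u hu => hrs u (r.support_dropUntil_subset hcr hu)
    have hnA := sep_helper hsep' hcA _ (hr.dropUntil hcr) hsub (Or.inr rfl) (Or.inl hyB) v hv
    rcases hSsub v (hsub v hv) with (h | h) | h
    · exact absurd h hnA
    · exact Or.inl h
    · exact Or.inr h
  have hlen : ∀ (r : G.Walk x y) (hcr : c ∈ r.support),
      (r.takeUntil c hcr).length + (r.dropUntil c hcr).length = r.length := by
    intro r hcr
    conv_rhs => rw [← r.take_spec hcr]
    rw [Walk.length_append]
  have htm : ∀ (r0 : G.Walk x y) (hr0 : ∀ v ∈ r0.support, v ∈ S) (hcr : c ∈ r0.support)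
      (hm : ∀ r : G.Walk x y, (∀ v ∈ r.support, v ∈ S) → r0.length ≤ r.length),
      ∀ r : G.Walk x c, (∀ v ∈ r.support, v ∈ A ∪ {c}) →
        (r0.takeUntil c hcr).length ≤ r.length := by
    intro r0 hr0 hcr hm r hr
    have h1 := hm (r.append (r0.dropUntil c hcr)) (by
      intro v hv
      rcases (Walk.mem_support_append_iff _ _).mp hv with h | h
      · exact hACS v (hr v h)
      · exact hr0 v (r0.support_dropUntil_subset hcr h))
    rw [Walk.length_append] at h1
    have := hlen r0 hcr
    omega
  have hdm : ∀ (r0 : G.Walk x y) (hr0 : ∀ v ∈ r0.support, v ∈ S) (hcr : c ∈ r0.support)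
      (hm : ∀ r : G.Walk x y, (∀ v ∈ r.support, v ∈ S) → r0.length ≤ r.length),
      ∀ r : G.Walk c y, (∀ v ∈ r.support, v ∈ B ∪ {c}) →
        (r0.dropUntil c hcr).length ≤ r.length := by
    intro r0 hr0 hcr hm r hr
    have h1 := hm ((r0.takeUntil c hcr).append r) (by
      intro v hv
      rcases (Walk.mem_support_append_iff _ _).mp hv with h | h
      · exact hr0 v (r0.support_takeUntil_subset hcr h)
      · exact hBCS v (hr v h))
    rw [Walk.length_append] at h1
    have := hlen r0 hcr
    omega
  have e1 : p.takeUntil c hcp = q.takeUntil c hcq :=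
    U1 (Or.inl hxA) (Or.inr rfl) _ _ (hp.takeUntil hcp) (hq.takeUntil hcq)
      (htake p hp hps hcp) (htake q hq hqs hcq)
      (htm p hps hcp hpm) (htm q hqs hcq hqm)
  have e2 : p.dropUntil c hcp = q.dropUntil c hcq :=
    U2 (Or.inr rfl) (Or.inl hyB) _ _ (hp.dropUntil hcp) (hq.dropUntil hcq)
      (hdrop p hp hps hcp) (hdrop q hq hqs hcq)
      (hdm p hps hcp hpm) (hdm q hqs hcq hqm)
  rw [← p.take_spec hcp, ← q.take_spec hcq, e1, e2]

private lemma uniq_aux {S : Set V} (hS : G.IsCliqueSumOfCompletes S) : UMin G S := by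
  induction hS with
  | complete S hcomp =>
    intro x y hx hy p q hp hq hps hqs hpm hqm
    by_cases hxy : x = y
    · subst hxy
      rw [(Walk.isPath_iff_eq_nil (p := p)).mp hp, (Walk.isPath_iff_eq_nil (p := q)).mp hq]
    · have hadj : G.Adj x y := hcomp hx hy hxy
      have hw0 : ∀ v ∈ (Walk.cons hadj Walk.nil).support, v ∈ S := by
        intro v hv
        simp only [Walk.support_cons, Walk.support_nil, List.mem_cons, List.mem_singleton,
          List.not_mem_nil, or_false] at hv
        rcases hv with rfl | rfl
        exacts [hx, hy]
      have hp1 : p.length = 1 := by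
        have h1 := hpm _ hw0
        have h0 : p.length ≠ 0 := fun h => hxy (Walk.eq_of_length_eq_zero h)
        simp only [Walk.length_cons, Walk.length_nil] at h1
        omega
      have hq1 : q.length = 1 := by
        have h1 := hqm _ hw0
        have h0 : q.length ≠ 0 := fun h => hxy (Walk.eq_of_length_eq_zero h)
        simp only [Walk.length_cons, Walk.length_nil] at h1
        omega
      exact walk_length_one_eq p q hp1 hq1
  | sum A B c hAB hcA hcB hA hB hsep h1 h2 ih1 ih2 =>
    intro x y hx hy p q hp hq hps hqs hpm hqm
    have hsep' : ∀ b ∈ B, ∀ a ∈ A, ∀ w : G.Walk b a,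
        (∀ u ∈ w.support, u ∈ A ∪ B ∪ {c}) → c ∈ w.support := by
      intro b hb a ha w hw
      have := hsep a ha b hb w.reverse
        (fun u hu => hw u (by simpa [Walk.support_reverse] using hu))
      simpa [Walk.support_reverse] using this
    have hACS : ∀ v ∈ A ∪ {c}, v ∈ A ∪ B ∪ {c} := by
      intro v hv; rcases hv with h | h
      · exact Or.inl (Or.inl h)
      · exact Or.inr h
    have hBCS : ∀ v ∈ B ∪ {c}, v ∈ A ∪ B ∪ {c} := by
      intro v hv; rcases hv with h | h
      · exact Or.inl (Or.inr h)
      · exact Or.inr h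
    have hSsubBA : ∀ v ∈ A ∪ B ∪ {c}, v ∈ B ∪ A ∪ {c} := by
      intro v hv; rcases hv with (h | h) | h
      exacts [Or.inl (Or.inr h), Or.inl (Or.inl h), Or.inr h]
    rcases hx with (hxA | hxB) | hxc
    · rcases hy with (hyA | hyB) | hyc
      · exact side_case hsep hcB hACS (fun v hv => hv) ih1 (Or.inl hxA) (Or.inl hyA)
          p q hp hq hps hqs hpm hqm
      · exact cross_case hcA hcB hsep hACS hBCS (fun v hv => hv) ih1 ih2 hxA hyB
          p q hp hq hps hqs hpm hqm
      · exact side_case hsep hcB hACS (fun v hv => hv) ih1 (Or.inl hxA) (Or.inr hyc)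
          p q hp hq hps hqs hpm hqm
    · rcases hy with (hyA | hyB) | hyc
      · exact cross_case hcB hcA hsep' hBCS hACS hSsubBA ih2 ih1 hxB hyA
          p q hp hq hps hqs hpm hqm
      · exact side_case hsep' hcA hBCS hSsubBA ih2 (Or.inl hxB) (Or.inl hyB)
          p q hp hq hps hqs hpm hqm
      · exact side_case hsep' hcA hBCS hSsubBA ih2 (Or.inl hxB) (Or.inr hyc)
          p q hp hq hps hqs hpm hqm
    · rcases hy with (hyA | hyB) | hyc
      · exact side_case hsep hcB hACS (fun v hv => hv) ih1 (Or.inr hxc) (Or.inl hyA)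
          p q hp hq hps hqs hpm hqm
      · exact side_case hsep' hcA hBCS hSsubBA ih2 (Or.inr hxc) (Or.inl hyB)
          p q hp hq hps hqs hpm hqm
      · exact side_case hsep hcB hACS (fun v hv => hv) ih1 (Or.inr hxc) (Or.inr hyc)
          p q hp hq hps hqs hpm hqm

end Aux

section Global

open SimpleGraph

private lemma shortest_unique {G : SimpleGraph (Fin n)}
    (hU : ∀ v : Fin n, UMin G {w | G.Reachable v w}) (hconn : G.Connected)
    {x y : Fin n} (p q : G.Walk x y) (hp : p.IsPath) (hq : q.IsPath)
    (hpl : p.length = G.dist x y) (hql : q.length = G.dist x y) : p = q := by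
  have h0 : ∀ v : Fin n, v ∈ {w | G.Reachable x w} := fun v => hconn.preconnected x v
  exact hU x (h0 x) (h0 y) p q hp hq (fun v _ => h0 v) (fun v _ => h0 v)
    (fun r _ => hpl ▸ SimpleGraph.dist_le r) (fun r _ => hql ▸ SimpleGraph.dist_le r)

private lemma darts_prod_split {G : SimpleGraph (Fin n)}
    (hU : ∀ v : Fin n, UMin G {w | G.Reachable v w}) (hconn : G.Connected)
    (sp : ∀ i j : Fin n, G.Walk i j)
    (hsp : ∀ i j, (sp i j).IsPath ∧ (sp i j).length = G.dist i j)
    (c : Fin n) {i j : Fin n} (h : c ∈ (sp i j).support) :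
    ((sp i j).darts.map fun d =>
        (X (Sum.inr s(d.fst, d.snd)) : MvPolynomial (Fin n ⊕ Sym2 (Fin n)) ℝ)).prod
      = ((sp i c).darts.map fun d =>
          (X (Sum.inr s(d.fst, d.snd)) : MvPolynomial (Fin n ⊕ Sym2 (Fin n)) ℝ)).prod *
        ((sp j c).darts.map fun d =>
          (X (Sum.inr s(d.fst, d.snd)) : MvPolynomial (Fin n ⊕ Sym2 (Fin n)) ℝ)).prod := by
  have hlen : ((sp i j).takeUntil c h).length + ((sp i j).dropUntil c h).length
      = (sp i j).length := by
    conv_rhs => rw [← (sp i j).take_spec h]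
    rw [SimpleGraph.Walk.length_append]
  have h1 : G.dist i c ≤ ((sp i j).takeUntil c h).length := SimpleGraph.dist_le _
  have h2 : G.dist c j ≤ ((sp i j).dropUntil c h).length := SimpleGraph.dist_le _
  have h3 : G.dist i j ≤ G.dist i c + G.dist c j := hconn.dist_triangle
  have h4 : (sp i j).length = G.dist i j := (hsp i j).2
  have ht : ((sp i j).takeUntil c h).length = G.dist i c := by omega
  have hd : ((sp i j).dropUntil c h).length = G.dist c j := by omega
  have et : (sp i j).takeUntil c h = sp i c :=
    shortest_unique hU hconn _ _ ((hsp i j).1.takeUntil h) (hsp i c).1 ht (hsp i c).2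
  have ed : (sp i j).dropUntil c h = sp c j :=
    shortest_unique hU hconn _ _ ((hsp i j).1.dropUntil h) (hsp c j).1 hd (hsp c j).2
  have erev : sp j c = (sp c j).reverse :=
    shortest_unique hU hconn _ _ (hsp j c).1 ((hsp c j).1.reverse)
      ((hsp j c).2) (by rw [SimpleGraph.Walk.length_reverse, (hsp c j).2, SimpleGraph.dist_comm])
  conv_lhs => rw [← (sp i j).take_spec h]
  rw [SimpleGraph.Walk.darts_append, List.map_append, List.prod_append, et, ed, erev,
    SimpleGraph.Walk.darts_reverse, List.map_reverse, List.prod_reverse, List.map_map]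
  congr 2
  exact List.map_congr_left fun d _ => by simp [Sym2.eq_swap]

end Global

/-- For a block graph with a single central vertex `c`, the kernel of the shortest path
map `ψ` restricted to the variables `σ_{ij}` whose shortest path contains `c`
(i.e. `{i,j} ∉ D`) equals the kernel of the simplified map `σ_{ij} ↦ a_i a_j`. -/
theorem ker_restricted_psi_eq_ker_simplified (G : SimpleGraph (Fin n))
    (hG : G.IsBlockGraph) (hconn : G.Connected)
    (sp : ∀ i j : Fin n, G.Walk i j)
    (hsp : ∀ i j, (sp i j).IsPath ∧ (sp i j).length = G.dist i j)
    (c : Fin n) (hc : IsCentralVertex G c)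
    (huniq : ∀ c', IsCentralVertex G c' → c' = c) :
    RingHom.ker (MvPolynomial.aeval
        (fun e : {e : Sym2 (Fin n) // throughC sp c e} => psiMon sp e.1) :
        MvPolynomial {e : Sym2 (Fin n) // throughC sp c e} ℝ →ₐ[ℝ]
          MvPolynomial (Fin n ⊕ Sym2 (Fin n)) ℝ).toRingHom =
      RingHom.ker (MvPolynomial.aeval
        (fun e : {e : Sym2 (Fin n) // throughC sp c e} =>
          (X e.1.out.1 * X e.1.out.2 : MvPolynomial (Fin n) ℝ)) :
        MvPolynomial {e : Sym2 (Fin n) // throughC sp c e} ℝ →ₐ[ℝ]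
          MvPolynomial (Fin n) ℝ).toRingHom := by
  have hU : ∀ v : Fin n, UMin G {w | G.Reachable v w} := fun v => uniq_aux (hG v)
  set Ψ : MvPolynomial {e : Sym2 (Fin n) // throughC sp c e} ℝ →ₐ[ℝ]
      MvPolynomial (Fin n ⊕ Sym2 (Fin n)) ℝ :=
    MvPolynomial.aeval (fun e : {e : Sym2 (Fin n) // throughC sp c e} => psiMon sp e.1) with hΨ
  set Φ : MvPolynomial {e : Sym2 (Fin n) // throughC sp c e} ℝ →ₐ[ℝ]
      MvPolynomial (Fin n) ℝ :=
    MvPolynomial.aeval (fun e : {e : Sym2 (Fin n) // throughC sp c e} =>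
      (X e.1.out.1 * X e.1.out.2 : MvPolynomial (Fin n) ℝ)) with hΦ
  set g : MvPolynomial (Fin n ⊕ Sym2 (Fin n)) ℝ →ₐ[ℝ] MvPolynomial (Fin n) ℝ :=
    MvPolynomial.aeval (Sum.elim X fun _ => 1) with hg
  set h : MvPolynomial (Fin n) ℝ →ₐ[ℝ] MvPolynomial (Fin n ⊕ Sym2 (Fin n)) ℝ :=
    MvPolynomial.aeval (fun i : Fin n => X (Sum.inl i) *
      ((sp i c).darts.map fun d =>
        (X (Sum.inr s(d.fst, d.snd)) : MvPolynomial (Fin n ⊕ Sym2 (Fin n)) ℝ)).prod) with hh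
  have comp1 : g.comp Ψ = Φ := by
    apply MvPolynomial.algHom_ext
    intro e
    rw [AlgHom.comp_apply, hΨ, hΦ, aeval_X, aeval_X, psiMon]
    rw [map_mul, map_mul, hg, aeval_X, aeval_X]
    have : (MvPolynomial.aeval (Sum.elim X fun _ => (1 : MvPolynomial (Fin n) ℝ)))
        (((sp e.1.out.1 e.1.out.2).darts.map fun d =>
          (X (Sum.inr s(d.fst, d.snd)) : MvPolynomial (Fin n ⊕ Sym2 (Fin n)) ℝ)).prod) = 1 := by
      rw [map_list_prod, List.map_map]
      apply List.prod_eq_one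
      intro x hx
      rcases List.mem_map.mp hx with ⟨d, _, rfl⟩
      simp [aeval_X]
    rw [this]
    simp
  have comp2 : h.comp Φ = Ψ := by
    apply MvPolynomial.algHom_ext
    intro e
    rw [AlgHom.comp_apply, hΨ, hΦ, aeval_X, aeval_X, psiMon]
    rw [map_mul, hh, aeval_X, aeval_X]
    rw [darts_prod_split hU hconn sp hsp c e.2]
    ring
  apply SetLike.ext
  intro p
  simp only [RingHom.mem_ker]
  constructor
  · intro hp
    have hp' : Ψ p = 0 := hp
    show Φ p = 0
    rw [← comp1, AlgHom.comp_apply, hp', map_zero]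
  · intro hp
    have hp' : Φ p = 0 := hp
    show Ψ p = 0
    rw [← comp2, AlgHom.comp_apply, hp', map_zero]
end

section
/- Let G=([n],E) be a graph and Σ a positive definite matrix with K=Σ^{-1} supported on G. If (A,B,C) is a partition of [n] with C separating A from B in G, then rank(Σ_{A∪C, B∪C}) ≤ |C|; consequently all (|C|+1)×(|C|+1) minors of Σ_{A∪C,B∪C} vanish and CI_G ⊆ P_G. -/
set_option maxHeartbeats 1000000

open Matrix

/-- Any submatrix has rank at most the rank of the original matrix. -/
private lemma my_rank_submatrix_le {l m o p : Type*} [Fintype m] [Fintype o] [Fintype l]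
    [Fintype p] [DecidableEq m] [DecidableEq o]
    (M : Matrix m o ℝ) (f : l → m) (g : p → o) :
    (M.submatrix f g).rank ≤ M.rank := by
  have h1 : M.submatrix f g =
      ((1 : Matrix m m ℝ).submatrix f id) * (M * ((1 : Matrix o o ℝ).submatrix id g)) := by
    ext i j
    simp [Matrix.mul_apply, Matrix.one_apply]
  rw [h1]
  exact (Matrix.rank_mul_le_right _ _).trans (Matrix.rank_mul_le_left _ _)

/-- A principal submatrix (along an injective map) of a positive definite matrix is
positive definite. -/
private lemma my_posDef_submatrix {n : Type*} [Fintype n] [DecidableEq n]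
    {N : Matrix n n ℝ} (hN : N.PosDef)
    {m : Type*} [Fintype m] [DecidableEq m] (e : m → n) (he : Function.Injective e) :
    (N.submatrix e e).PosDef := by
  refine Matrix.PosDef.of_dotProduct_mulVec_pos (hN.posSemidef.submatrix e).1 fun x hx => ?_
  set P : Matrix n m ℝ := (1 : Matrix n n ℝ).submatrix id e with hPdef
  have hP : ∀ (x : m → ℝ) (a : m), (P *ᵥ x) (e a) = x a := by
    intro x a
    simp [hPdef, Matrix.mulVec, dotProduct, Matrix.one_apply, he.eq_iff]
  have key : N.submatrix e e = Pᵀ * N * P := by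
    ext a b
    simp [hPdef, Matrix.mul_apply, Matrix.one_apply, Finset.mul_sum]
  have hPx : P *ᵥ x ≠ 0 := by
    intro h
    apply hx
    funext a
    have := hP x a
    rw [h] at this
    simpa using this.symm
  have := hN.dotProduct_mulVec_pos hPx
  rw [key]
  have hrw : star x ⬝ᵥ ((Pᵀ * N * P) *ᵥ x) = star (P *ᵥ x) ⬝ᵥ (N *ᵥ (P *ᵥ x)) := by
    rw [← Matrix.mulVec_mulVec, ← Matrix.mulVec_mulVec]
    rw [show (star x : m → ℝ) = x from rfl, show (star (P *ᵥ x) : n → ℝ) = P *ᵥ x from rfl]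
    rw [Matrix.dotProduct_mulVec x Pᵀ, Matrix.vecMul_transpose]
  rw [hrw]
  exact this

/-- If `Σ` is positive definite with `K = Σ⁻¹` supported on `G` and `(A, B, C)` is a
partition of the vertices with `C` separating `A` from `B`, then
`rank Σ_{A∪C, B∪C} ≤ |C|`; consequently all `(|C|+1) × (|C|+1)` minors of
`Σ_{A∪C, B∪C}` vanish. -/
theorem rank_submatrix_le_of_separation {n : ℕ} (G : SimpleGraph (Fin n))
    (S : Matrix (Fin n) (Fin n) ℝ) (hS : S.PosDef)
    (hsupp : ∀ i j : Fin n, i ≠ j → ¬ G.Adj i j → S⁻¹ i j = 0)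
    (A B C : Finset (Fin n))
    (hAB : Disjoint A B) (hAC : Disjoint A C) (hBC : Disjoint B C)
    (hcover : A ∪ B ∪ C = Finset.univ)
    (hsep : ∀ a ∈ A, ∀ b ∈ B, ∀ w : G.Walk a b, ∃ x ∈ C, x ∈ w.support) :
    Matrix.rank (S.submatrix (fun a : ↥(A ∪ C) => (a : Fin n))
        (fun b : ↥(B ∪ C) => (b : Fin n))) ≤ C.card ∧
      ∀ (f : Fin (C.card + 1) → ↥(A ∪ C)) (g : Fin (C.card + 1) → ↥(B ∪ C)),
        (S.submatrix (fun p : Fin (C.card + 1) => ((f p : Fin n)))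
          (fun q : Fin (C.card + 1) => ((g q : Fin n)))).det = 0 := by
  classical
  set K := S⁻¹ with hKdef
  have hK : K.PosDef := hS.inv
  have hdetS : IsUnit S.det := hS.det_pos.ne'.isUnit
  have hKS : K * S = 1 := Matrix.nonsing_inv_mul S hdetS
  have key0 : ∀ a ∈ A, ∀ b ∈ B, K a b = 0 := by
    intro a ha b hb
    have hne : a ≠ b := fun h => (Finset.disjoint_left.mp hAB ha) (h ▸ hb)
    by_cases hadj : G.Adj a b
    · obtain ⟨x, hxC, hxs⟩ := hsep a ha b hb hadj.toWalk
      have hx : x = a ∨ x = b := by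
        simpa [SimpleGraph.Adj.toWalk] using hxs
      rcases hx with rfl | rfl
      · exact absurd hxC (Finset.disjoint_left.mp hAC ha)
      · exact absurd hxC (Finset.disjoint_left.mp hBC hb)
    · exact hsupp a b hne hadj
  set M := S.submatrix (fun a : ↥(A ∪ C) => (a : Fin n))
      (fun b : ↥(B ∪ C) => (b : Fin n)) with hMdef
  set L := K.submatrix (fun a : ↥A => (a : Fin n))
      (fun j : ↥(A ∪ C) => (j : Fin n)) with hLdef
  have hLM : L * M = 0 := by
    ext a b
    have haA : (a : Fin n) ∈ A := a.2
    have hbBC : (b : Fin n) ∈ B ∪ C := b.2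
    have hab : (a : Fin n) ≠ (b : Fin n) := by
      intro h
      rcases Finset.mem_union.mp hbBC with hb | hb
      · exact Finset.disjoint_left.mp hAB haA (h ▸ hb)
      · exact Finset.disjoint_left.mp hAC haA (h ▸ hb)
    have h1 : ∑ j : Fin n, K (a : Fin n) j * S j (b : Fin n) = 0 := by
      have := congrFun (congrFun hKS (a : Fin n)) (b : Fin n)
      simpa [Matrix.mul_apply, Matrix.one_apply, hab] using this
    have h2 : ∑ j : Fin n, K (a : Fin n) j * S j (b : Fin n)
        = ∑ j ∈ A ∪ C, K (a : Fin n) j * S j (b : Fin n) := by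
      refine (Finset.sum_subset (Finset.subset_univ _) ?_).symm
      intro j _ hj
      have hjB : j ∈ B := by
        have hju : j ∈ A ∪ B ∪ C := hcover ▸ Finset.mem_univ j
        rcases Finset.mem_union.mp hju with h | h
        · rcases Finset.mem_union.mp h with h | h
          · exact absurd (Finset.mem_union_left C h) hj
          · exact h
        · exact absurd (Finset.mem_union_right A h) hj
      rw [key0 a haA j hjB, zero_mul]
    have h3 : ∑ j ∈ A ∪ C, K (a : Fin n) j * S j (b : Fin n)
        = ∑ j : ↥(A ∪ C), K (a : Fin n) (j : Fin n) * S (j : Fin n) (b : Fin n) :=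
      (Finset.sum_coe_sort _ _).symm
    simp only [Matrix.mul_apply, Matrix.zero_apply, hLdef, hMdef, Matrix.submatrix_apply]
    rw [← h3, ← h2, h1]
  have hrange : LinearMap.range M.mulVecLin ≤ LinearMap.ker L.mulVecLin := by
    rintro v ⟨x, rfl⟩
    simp only [LinearMap.mem_ker, Matrix.mulVecLin_apply, Matrix.mulVec_mulVec, hLM,
      Matrix.zero_mulVec]
  have hrank1 : M.rank ≤ Module.finrank ℝ (LinearMap.ker L.mulVecLin) :=
    Submodule.finrank_mono hrange
  have hrn := LinearMap.finrank_range_add_finrank_ker L.mulVecLin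
  have hLrank : L.rank = Module.finrank ℝ (LinearMap.range L.mulVecLin) := rfl
  have hcard : Module.finrank ℝ (↥(A ∪ C) → ℝ) = (A ∪ C).card := by
    rw [Module.finrank_fintype_fun_eq_card, Fintype.card_coe]
  have hKAA : (K.submatrix (fun a : ↥A => (a : Fin n)) (fun a : ↥A => (a : Fin n))).PosDef :=
    my_posDef_submatrix hK _ Subtype.coe_injective
  have hrankL : A.card ≤ L.rank := by
    have h := my_rank_submatrix_le L id
      (fun a : ↥A => (⟨(a : Fin n), Finset.mem_union_left C a.2⟩ : ↥(A ∪ C)))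
    have hKAAL : K.submatrix (fun a : ↥A => (a : Fin n)) (fun a : ↥A => (a : Fin n))
        = L.submatrix id
          (fun a : ↥A => (⟨(a : Fin n), Finset.mem_union_left C a.2⟩ : ↥(A ∪ C))) := rfl
    rw [← hKAAL, Matrix.rank_of_isUnit _ hKAA.isUnit, Fintype.card_coe] at h
    exact h
  have hACcard : (A ∪ C).card = A.card + C.card := Finset.card_union_of_disjoint hAC
  have hML : M.rank ≤ C.card := by
    rw [hcard, hACcard, ← hLrank] at hrn
    omega
  refine ⟨hML, ?_⟩
  intro f g
  by_contra hdet
  have hU : IsUnit (S.submatrix (fun p : Fin (C.card + 1) => ((f p : Fin n)))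
      (fun q : Fin (C.card + 1) => ((g q : Fin n)))) :=
    (Matrix.isUnit_iff_isUnit_det _).mpr (isUnit_iff_ne_zero.mpr hdet)
  have hrk := Matrix.rank_of_isUnit _ hU
  have hle : (S.submatrix (fun p : Fin (C.card + 1) => ((f p : Fin n)))
      (fun q : Fin (C.card + 1) => ((g q : Fin n)))).rank ≤ M.rank := by
    have heq : S.submatrix (fun p : Fin (C.card + 1) => ((f p : Fin n)))
        (fun q : Fin (C.card + 1) => ((g q : Fin n))) = M.submatrix f g := rfl
    rw [heq]
    exact my_rank_submatrix_le M f g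
  rw [Fintype.card_fin] at hrk
  omega
end
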